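/- arXiv:1607.08684 — 12 statements merged into one kernel-verified Lean document; each statement's English description precedes it below -/
import Mathlib

section
/- Let (g_n)_{n≥1} be a sequence of functions from ℝ to [0,1], each nonincreasing, such that for every n, g_n(x) → 1 as x → −∞ and g_n(x) → 0 as x → +∞, and such that for every ε > 0 the sequence (g_n) converges uniformly on ℝ \ [−ε, ε] to the indicator function of {x ≤ 0} as n → ∞. Let F : ℝ → ℝ be continuous, and let (μ_n)_{n≥1} be Borel probability measures on ℝ such that for every s ∈ ℝ, ∫_ℝ g_n(x − s) dμ_n(x) → F(s) as n → ∞. Then for every s ∈ ℝ, μ_n((−∞, s]) → F(s) as n → ∞. -/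
open MeasureTheory Filter Topology

/-- Lemma 4.1.39 of [MP]: convergence of expectations of approximate indicator
functions implies convergence of distribution functions. -/
theorem stmt_0
    (g : ℕ → ℝ → ℝ)
    (hrange : ∀ n x, g n x ∈ Set.Icc (0 : ℝ) 1)
    (hanti : ∀ n, Antitone (g n))
    (hbot : ∀ n, Tendsto (g n) atBot (𝓝 1))
    (htop : ∀ n, Tendsto (g n) atTop (𝓝 0))
    (hunif : ∀ ε : ℝ, 0 < ε →
      TendstoUniformlyOn g (fun x => if x ≤ 0 then (1 : ℝ) else 0) atTop
        ((Set.Icc (-ε) ε)ᶜ))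
    (F : ℝ → ℝ) (hF : Continuous F)
    (μ : ℕ → Measure ℝ) (hprob : ∀ n, IsProbabilityMeasure (μ n))
    (hexp : ∀ s : ℝ, Tendsto (fun n => ∫ x, g n (x - s) ∂(μ n)) atTop (𝓝 (F s))) :
    ∀ s : ℝ, Tendsto (fun n => ((μ n) (Set.Iic s)).toReal) atTop (𝓝 (F s)) := by
  intro s
  rw [Metric.tendsto_nhds]
  intro ε hε
  -- choose δ from continuity of F at s
  obtain ⟨δ, hδ, hδF⟩ : ∃ δ > 0, ∀ t : ℝ, |t - s| ≤ δ → |F t - F s| < ε / 4 := by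
    obtain ⟨δ, hδ, h⟩ := Metric.continuous_iff.mp hF s (ε / 4) (by linarith)
    exact ⟨δ / 2, by linarith, fun t ht => by
      have := h t (by rw [Real.dist_eq]; linarith)
      rwa [Real.dist_eq] at this⟩
  have hu := Metric.tendstoUniformlyOn_iff.mp (hunif (δ / 2) (by linarith)) (ε / 4)
      (by linarith)
  have h1 := (hexp (s + δ)).eventually (eventually_abs_sub_lt (F (s + δ))
      (by linarith : (0:ℝ) < ε / 4))
  have h2 := (hexp (s - δ)).eventually (eventually_abs_sub_lt (F (s - δ))
      (by linarith : (0:ℝ) < ε / 4))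
  filter_upwards [hu, h1, h2] with n hn hn1 hn2
  haveI := hprob n
  have hint : ∀ c : ℝ, Integrable (fun x => g n (x - c)) (μ n) := by
    intro c
    have hanti' : Antitone (fun x => g n (x - c)) := fun a b hab => hanti n (by linarith)
    have hm : Measurable (fun x => g n (x - c)) := hanti'.measurable
    refine (integrable_const (1:ℝ)).mono' hm.aestronglyMeasurable ?_
    filter_upwards with x
    rw [Real.norm_eq_abs, abs_le]
    have h := hrange n (x - c)
    exact ⟨by linarith [h.1], h.2⟩
  have hind : Integrable ((Set.Iic s).indicator fun _ => (1:ℝ)) (μ n) :=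
    (integrable_const (1:ℝ)).indicator measurableSet_Iic
  have hmeq : ((μ n) (Set.Iic s)).toReal
      = ∫ x, (Set.Iic s).indicator (fun _ => (1:ℝ)) x ∂ μ n := by
    rw [integral_indicator_const (1:ℝ) measurableSet_Iic, smul_eq_mul, mul_one]
    rfl
  -- upper bound
  have up : ((μ n) (Set.Iic s)).toReal ≤ (∫ x, g n (x - (s + δ)) ∂ μ n) + ε / 4 := by
    rw [hmeq]
    have hmono : ∫ x, (Set.Iic s).indicator (fun _ => (1:ℝ)) x ∂ μ n
        ≤ ∫ x, (g n (x - (s + δ)) + ε / 4) ∂ μ n := by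
      refine integral_mono hind ((hint (s + δ)).add (integrable_const _)) ?_
      intro x
      by_cases hx : x ≤ s
      · have hy : x - (s + δ) ∈ (Set.Icc (-(δ/2)) (δ/2))ᶜ := by
          simp only [Set.mem_compl_iff, Set.mem_Icc, not_and, not_le]
          intro h; linarith
        have hd := hn _ hy
        rw [if_pos (by linarith : x - (s + δ) ≤ 0), Real.dist_eq] at hd
        have hd' := abs_lt.mp hd
        rw [Set.indicator_of_mem (Set.mem_Iic.mpr hx)]
        linarith [hd'.2]
      · rw [Set.indicator_of_notMem (by simpa using hx)]
        have h := (hrange n (x - (s + δ))).1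
        linarith
    calc ∫ x, (Set.Iic s).indicator (fun _ => (1:ℝ)) x ∂ μ n
        ≤ ∫ x, (g n (x - (s + δ)) + ε / 4) ∂ μ n := hmono
      _ = (∫ x, g n (x - (s + δ)) ∂ μ n) + ε / 4 := by
          rw [integral_add (hint (s + δ)) (integrable_const _), integral_const,
            Measure.real, measure_univ, ENNReal.toReal_one, one_smul]
  -- lower bound
  have lo : (∫ x, g n (x - (s - δ)) ∂ μ n) ≤ ((μ n) (Set.Iic s)).toReal + ε / 4 := by
    rw [hmeq]
    have hmono : ∫ x, g n (x - (s - δ)) ∂ μ n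
        ≤ ∫ x, ((Set.Iic s).indicator (fun _ => (1:ℝ)) x + ε / 4) ∂ μ n := by
      refine integral_mono (hint (s - δ)) (hind.add (integrable_const _)) ?_
      intro x
      show g n (x - (s - δ)) ≤ (Set.Iic s).indicator (fun _ => (1:ℝ)) x + ε / 4
      by_cases hx : x ≤ s
      · rw [Set.indicator_of_mem (Set.mem_Iic.mpr hx)]
        have h := (hrange n (x - (s - δ))).2
        linarith
      · push_neg at hx
        have hy : x - (s - δ) ∈ (Set.Icc (-(δ/2)) (δ/2))ᶜ := by
          simp only [Set.mem_compl_iff, Set.mem_Icc, not_and, not_le]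
          intro h; linarith
        have hd := hn _ hy
        rw [if_neg (by push_neg; linarith : ¬ x - (s - δ) ≤ 0), Real.dist_eq] at hd
        have hd' := abs_lt.mp hd
        rw [Set.indicator_of_notMem (by simpa using hx.not_ge)]
        linarith [hd'.2]
    calc ∫ x, g n (x - (s - δ)) ∂ μ n
        ≤ ∫ x, ((Set.Iic s).indicator (fun _ => (1:ℝ)) x + ε / 4) ∂ μ n := hmono
      _ = (∫ x, (Set.Iic s).indicator (fun _ => (1:ℝ)) x ∂ μ n) + ε / 4 := by
          rw [integral_add hind (integrable_const _), integral_const,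
            Measure.real, measure_univ, ENNReal.toReal_one, one_smul]
  have hF1 := hδF (s + δ) (by rw [abs_of_nonneg] <;> linarith)
  have hF2 := hδF (s - δ) (by rw [abs_of_nonpos] <;> linarith)
  have ha1 := abs_lt.mp hn1
  have ha2 := abs_lt.mp hn2
  have hb1 := abs_lt.mp hF1
  have hb2 := abs_lt.mp hF2
  rw [Real.dist_eq, abs_lt]
  constructor <;> linarith
end

section
/- For every z ∈ ℂ with z ∉ (−∞, 0], z + q ∉ (−∞, 0], and κ^{−1}z + q ∉ (−∞, 0], the function G_V has a complex derivative at z equal to ((√(κη) − 1)²/(κ − 1)) · (z − ψ_V)² / (z·(z + qκ)·(z + q)). -/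
open Complex

/-- The derivative of the stochastic six-vertex saddle-point function `G_V` in the
Tracy–Widom regime. -/
theorem stmt_2 (q κ η : ℝ) (hq : q ∈ Set.Ioo (0:ℝ) 1) (hκ : 1 < κ) (hη : 0 < η)
    (hκη : κ * η ≠ 1)
    (m ψ : ℝ) (hm : m = (Real.sqrt κ - Real.sqrt η) ^ 2 / (κ - 1))
    (hψ : ψ = q * (κ - Real.sqrt (κ * η)) / (Real.sqrt (κ * η) - 1))
    (G : ℂ → ℂ)
    (hG : G = fun z => (η : ℂ) * Complex.log ((κ : ℂ)⁻¹ * z + q)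
      - Complex.log (z + q) + (m : ℂ) * Complex.log z)
    (z : ℂ) (hz : z ∈ Complex.slitPlane) (hzq : z + q ∈ Complex.slitPlane)
    (hzκq : (κ : ℂ)⁻¹ * z + q ∈ Complex.slitPlane) :
    HasDerivAt G
      ((((Real.sqrt (κ * η) : ℂ) - 1) ^ 2 / ((κ : ℂ) - 1)) * (z - ψ) ^ 2
        / (z * (z + q * κ) * (z + q))) z := by
  set S : ℝ := Real.sqrt (κ * η) with hSdef
  have hκ0 : (0:ℝ) < κ := lt_trans one_pos hκ
  have hκη0 : (0:ℝ) ≤ κ * η := le_of_lt (mul_pos hκ0 hη)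
  have hS2 : S ^ 2 = κ * η := Real.sq_sqrt hκη0
  have hS1 : S ≠ 1 := by
    intro h
    apply hκη
    rw [← hS2, h]; norm_num
  have hκ1 : κ - 1 ≠ 0 := by nlinarith
  have hsm : Real.sqrt κ * Real.sqrt η = S := (Real.sqrt_mul hκ0.le η).symm
  -- key real identities
  have hmR : m * (κ - 1) = κ + η - 2 * S := by
    rw [hm, div_mul_cancel₀ _ hκ1, sub_sq, Real.sq_sqrt hκ0.le, Real.sq_sqrt hη.le]
    linear_combination (-2:ℝ) * hsm
  have hψR : ψ * (S - 1) = q * (κ - S) := by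
    rw [hψ]
    field_simp [sub_ne_zero.mpr hS1]
  -- complex versions
  have hS2C : (S : ℂ) ^ 2 = (κ : ℂ) * (η : ℂ) := by exact_mod_cast hS2
  have hmC : (m : ℂ) * ((κ : ℂ) - 1) = (κ : ℂ) + η - 2 * S := by exact_mod_cast hmR
  have hψC : (ψ : ℂ) * ((S : ℂ) - 1) = (q : ℂ) * ((κ : ℂ) - S) := by exact_mod_cast hψR
  have hψz : ((S:ℂ) - 1) * (z - ψ) = ((S:ℂ) - 1) * z - (q:ℂ) * ((κ:ℂ) - S) := by
    linear_combination -hψC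
  -- nonvanishing
  have hκC : (κ : ℂ) ≠ 0 := by exact_mod_cast hκ0.ne'
  have hκ1C : (κ : ℂ) - 1 ≠ 0 := sub_ne_zero.mpr (by exact_mod_cast hκ.ne')
  have hS1C : (S : ℂ) - 1 ≠ 0 := sub_ne_zero.mpr (by exact_mod_cast hS1)
  have hz0 : z ≠ 0 := Complex.slitPlane_ne_zero hz
  have hzq0 : z + (q : ℂ) ≠ 0 := Complex.slitPlane_ne_zero hzq
  have hzκq0 : (κ : ℂ)⁻¹ * z + q ≠ 0 := Complex.slitPlane_ne_zero hzκq
  have hzqκ0 : z + (q : ℂ) * κ ≠ 0 := by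
    intro h
    apply hzκq0
    field_simp
    linear_combination h
  -- key algebraic identity
  have hkey : (η : ℂ) * (z * (z + q)) - z * (z + q * κ) + m * ((z + q * κ) * (z + q))
      = (((S:ℂ) - 1) ^ 2 / ((κ:ℂ) - 1)) * (z - ψ) ^ 2 := by
    rw [div_mul_eq_mul_div, eq_div_iff hκ1C]
    linear_combination ((z + (q:ℂ) * κ) * (z + q)) * hmC
      + (-(((S:ℂ) - 1) * (z - ψ) + ((S:ℂ) - 1) * z - (q:ℂ) * ((κ:ℂ) - S))) * hψz
      + (-(z + (q:ℂ))^2) * hS2C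
  -- derivative construction
  have d1 : HasDerivAt (fun w : ℂ => (κ : ℂ)⁻¹ * w + q) ((κ : ℂ)⁻¹) z := by
    simpa using ((hasDerivAt_id z).const_mul ((κ : ℂ)⁻¹)).add_const (q : ℂ)
  have d1l := d1.clog hzκq
  have d2l := ((hasDerivAt_id z).add_const (q : ℂ)).clog hzq
  have d3 := Complex.hasDerivAt_log hz
  have total := ((d1l.const_mul ((η : ℂ))).sub d2l).add (d3.const_mul ((m : ℂ)))
  rw [hG]
  convert total using 1
  case e'_4 => rfl
  case e'_5 => rfl
  case e'_8 => funext w; rfl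
  simp only [id_eq]
  have key : (κ : ℂ)⁻¹ / ((κ : ℂ)⁻¹ * z + q) = 1 / (z + q * κ) := by
    rw [div_eq_div_iff hzκq0 hzqκ0]
    field_simp
  rw [key]
  have e1 : (η : ℂ) * (1 / (z + q * κ)) - 1 / (z + q) + m * z⁻¹
      = ((η : ℂ) * (z * (z + q)) - z * (z + q * κ) + m * ((z + q * κ) * (z + q)))
        / (z * (z + q * κ) * (z + q)) := by
    rw [eq_div_iff (mul_ne_zero (mul_ne_zero hz0 hzqκ0) hzq0)]
    field_simp
  rw [e1, ← hkey]
end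

section
/- The second complex derivative of G_A at ψ_A equals 0, and the third complex derivative of G_A at ψ_A equals (1+η)^5/(8·q³·(1−η)), which moreover equals 2·(f_η/ψ_A)³. -/
open Complex

private lemma aux_zpow (c : ℂ) (n : ℤ) (z : ℂ) (h : z + c ≠ 0) :
    HasDerivAt (fun z : ℂ => (z + c) ^ n) ((n : ℂ) * (z + c) ^ (n - 1)) z := by
  have := (hasDerivAt_zpow n (z+c) (Or.inl h)).comp z ((hasDerivAt_id z).add_const c)
  rw [mul_one] at this
  exact this

private lemma aux_log (c : ℂ) (z : ℂ) (h : z + c ∈ Complex.slitPlane) :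
    HasDerivAt (fun z : ℂ => Complex.log (z+c)) ((z+c)⁻¹) z := by
  simpa [one_div] using ((hasDerivAt_id z).add_const c).clog h

/-- The second derivative of `G_A` vanishes at the critical point `ψ_A`, and the
third derivative equals `(1+η)^5 / (8 q^3 (1-η)) = 2 (f_η / ψ_A)^3`. -/
theorem stmt_3 (q η : ℝ) (hq : q ∈ Set.Ioo (0:ℝ) 1) (hη : η ∈ Set.Ioo (-1:ℝ) 1)
    (m f ψ : ℝ) (hm : m = ((1 - η) / 2) ^ 2)
    (hf : f = ((1 - η ^ 2) / 4) ^ ((2 : ℝ) / 3))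
    (hψ : ψ = q * (1 - η) / (1 + η))
    (G : ℂ → ℂ)
    (hG : G = fun z => (q : ℂ) / (z + q) + (η : ℂ) * Complex.log (z + q)
      + (m : ℂ) * Complex.log z) :
    iteratedDeriv 2 G (ψ : ℂ) = 0 ∧
    iteratedDeriv 3 G (ψ : ℂ) = (((1 + η) ^ 5 / (8 * q ^ 3 * (1 - η)) : ℝ) : ℂ) ∧
    (1 + η) ^ 5 / (8 * q ^ 3 * (1 - η)) = 2 * (f / ψ) ^ 3 := by
  obtain ⟨hq0, hq1⟩ := hq
  obtain ⟨hη1, hη2⟩ := hη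
  have h1p : (0:ℝ) < 1 + η := by linarith
  have h1m : (0:ℝ) < 1 - η := by linarith
  have hψ0 : 0 < ψ := by rw [hψ]; positivity
  -- the open set
  set U : Set ℂ := {z : ℂ | 0 < z.re} with hU
  have hUopen : IsOpen U := isOpen_lt continuous_const Complex.continuous_re
  have hψU : (ψ : ℂ) ∈ U := by simpa [hU] using hψ0
  have hzq : ∀ z ∈ U, z + (q:ℂ) ≠ 0 := by
    intro z hz h
    have : (z + (q:ℂ)).re = 0 := by rw [h]; simp
    simp only [Complex.add_re, Complex.ofReal_re] at this
    have : (0:ℝ) < z.re + q := by exact add_pos hz hq0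
    linarith [this]
  have hz0 : ∀ z ∈ U, z ≠ 0 := by
    intro z hz h; rw [h] at hz; simp [hU] at hz
  have hzqS : ∀ z ∈ U, z + (q:ℂ) ∈ Complex.slitPlane := by
    intro z hz
    rw [Complex.mem_slitPlane_iff]
    left; simp only [Complex.add_re, Complex.ofReal_re]
    exact add_pos hz hq0
  have hzS : ∀ z ∈ U, z ∈ Complex.slitPlane := by
    intro z hz; rw [Complex.mem_slitPlane_iff]; left; exact hz
  -- the three derivative functions
  set G1 : ℂ → ℂ := fun z => -(q:ℂ) * (z + q) ^ (-2:ℤ) + η * (z + q) ^ (-1:ℤ)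
      + m * z ^ (-1:ℤ) with hG1
  set G2 : ℂ → ℂ := fun z => 2 * (q:ℂ) * (z + q) ^ (-3:ℤ) - η * (z + q) ^ (-2:ℤ)
      - m * z ^ (-2:ℤ) with hG2
  set G3 : ℂ → ℂ := fun z => -6 * (q:ℂ) * (z + q) ^ (-4:ℤ) + 2 * η * (z + q) ^ (-3:ℤ)
      + 2 * m * z ^ (-3:ℤ) with hG3
  have step1 : ∀ z ∈ U, HasDerivAt G (G1 z) z := by
    intro z hz
    have hfun : G = fun z => (q:ℂ) * (z + q) ^ (-1:ℤ) + η * Complex.log (z + q)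
        + m * Complex.log z := by
      rw [hG]; funext w; rw [zpow_neg_one, div_eq_mul_inv]
    rw [hfun]
    have A := ((aux_zpow q (-1) z (hzq z hz)).const_mul (q:ℂ))
    have B := (aux_log q z (hzqS z hz)).const_mul (η:ℂ)
    have C := (Complex.hasDerivAt_log (hzS z hz)).const_mul (m:ℂ)
    have := (A.add B).add C
    refine this.congr_deriv ?_
    rw [hG1]
    simp only [zpow_neg_one]
    norm_num
    try ring
  have step2 : ∀ z ∈ U, HasDerivAt G1 (G2 z) z := by
    intro z hz
    have A := ((aux_zpow q (-2) z (hzq z hz)).const_mul (-(q:ℂ)))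
    have B := ((aux_zpow q (-1) z (hzq z hz)).const_mul ((η:ℂ)))
    have C := ((hasDerivAt_zpow (-1) z (Or.inl (hz0 z hz))).const_mul ((m:ℂ)))
    have := (A.add B).add C
    refine this.congr_deriv ?_
    rw [hG2]
    norm_num
    try ring
  have step3 : ∀ z ∈ U, HasDerivAt G2 (G3 z) z := by
    intro z hz
    have A := ((aux_zpow q (-3) z (hzq z hz)).const_mul (2*(q:ℂ)))
    have B := ((aux_zpow q (-2) z (hzq z hz)).const_mul ((η:ℂ)))
    have C := ((hasDerivAt_zpow (-2) z (Or.inl (hz0 z hz))).const_mul ((m:ℂ)))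
    have := (A.sub B).sub C
    refine this.congr_deriv ?_
    rw [hG3]
    norm_num
    try ring
  -- deriv chain
  have e1 : ∀ z ∈ U, deriv G z = G1 z := fun z hz => (step1 z hz).deriv
  have e2 : ∀ z ∈ U, deriv (deriv G) z = G2 z := by
    intro z hz
    have hev : deriv G =ᶠ[nhds z] G1 :=
      Filter.eventuallyEq_of_mem (hUopen.mem_nhds hz) e1
    rw [hev.deriv_eq]
    exact (step2 z hz).deriv
  have e3 : deriv (deriv (deriv G)) (ψ:ℂ) = G3 (ψ:ℂ) := by
    have hev : deriv (deriv G) =ᶠ[nhds (ψ:ℂ)] G2 :=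
      Filter.eventuallyEq_of_mem (hUopen.mem_nhds hψU) e2
    rw [hev.deriv_eq]
    exact (step3 _ hψU).deriv
  have hi2 : iteratedDeriv 2 G (ψ:ℂ) = G2 (ψ:ℂ) := by
    rw [show (2:ℕ) = 1 + 1 from rfl, iteratedDeriv_succ, iteratedDeriv_one]
    exact e2 _ hψU
  have hi3 : iteratedDeriv 3 G (ψ:ℂ) = G3 (ψ:ℂ) := by
    rw [show (3:ℕ) = 2 + 1 from rfl, iteratedDeriv_succ,
      show (2:ℕ) = 1 + 1 from rfl, iteratedDeriv_succ, iteratedDeriv_one]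
    exact e3
  -- numeric facts in ℂ
  have hq0' : (q:ℂ) ≠ 0 := by exact_mod_cast hq0.ne'
  have h1p' : ((1:ℂ) + η) ≠ 0 := by
    have : ((1+η:ℝ):ℂ) ≠ 0 := by exact_mod_cast h1p.ne'
    push_cast at this; exact this
  have h1m' : ((1:ℂ) - η) ≠ 0 := by
    have : ((1-η:ℝ):ℂ) ≠ 0 := by exact_mod_cast h1m.ne'
    push_cast at this; exact this
  have hψC : (ψ:ℂ) = q * (1 - η) / (1 + η) := by rw [hψ]; push_cast; ring
  have hψq : (ψ:ℂ) + q = 2 * q / (1 + η) := by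
    rw [hψC]; field_simp; ring
  have hψne : (ψ:ℂ) ≠ 0 := by
    have : ((ψ:ℝ):ℂ) ≠ 0 := by exact_mod_cast hψ0.ne'
    exact this
  have hψqne : (ψ:ℂ) + q ≠ 0 := hzq _ hψU
  have hmC : (m:ℂ) = ((1 - η)/2)^2 := by rw [hm]; push_cast; ring
  refine ⟨?_, ?_, ?_⟩
  · rw [hi2, hG2]
    simp only [zpow_neg, zpow_ofNat]
    rw [hψq, hψC, hmC]
    field_simp
    try ring
  · rw [hi3, hG3]
    simp only [zpow_neg, zpow_ofNat]
    rw [hψq, hψC, hmC]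
    push_cast
    field_simp
    try ring
  · have hx : (0:ℝ) ≤ (1 - η^2)/4 := by nlinarith
    have hf3 : f ^ 3 = ((1 - η^2)/4)^2 := by
      rw [hf, ← Real.rpow_natCast (((1 - η ^ 2) / 4) ^ ((2:ℝ)/3)) 3,
        ← Real.rpow_mul hx]
      norm_num
    rw [div_pow, hf3, hψ]
    have hψne' : ψ ≠ 0 := hψ0.ne'
    rw [hψ] at hψne'
    field_simp
    try ring
end

section
/- The second complex derivative of G_V at ψ_V equals 0, and the third complex derivative of G_V at ψ_V equals 2·(√(κη) − 1)^5/(q³·(κ−1)³·(κ − √(κη))·√(κη)), which moreover equals 2·(f_{η,V}/ψ_V)³. -/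
open Complex

noncomputable def D1V (κ η m q : ℝ) : ℂ → ℂ := fun z =>
  (η:ℂ) * (κ:ℂ)⁻¹ * ((κ:ℂ)⁻¹ * z + q)⁻¹ - (z + q)⁻¹ + (m:ℂ) * z⁻¹

noncomputable def D2V (κ η m q : ℝ) : ℂ → ℂ := fun z =>
  -((η:ℂ) * ((κ:ℂ)⁻¹)^2) / ((κ:ℂ)⁻¹ * z + q)^2 + 1 / (z + q)^2 - (m:ℂ) / z^2

noncomputable def D3V (κ η m q : ℝ) : ℂ → ℂ := fun z =>
  2 * (η:ℂ) * ((κ:ℂ)⁻¹)^3 / ((κ:ℂ)⁻¹ * z + q)^3 - 2 / (z + q)^3 + 2 * (m:ℂ) / z^3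

lemma auxDerivV (q κ η m : ℝ) (hq : 0 < q) (hκ : 0 < κ) (z : ℂ) (hz : 0 < z.re) :
    HasDerivAt (fun z => (η : ℂ) * Complex.log ((κ : ℂ)⁻¹ * z + q)
        - Complex.log (z + q) + (m : ℂ) * Complex.log z) (D1V κ η m q z) z ∧
      HasDerivAt (D1V κ η m q) (D2V κ η m q z) z ∧
      HasDerivAt (D2V κ η m q) (D3V κ η m q z) z := by
  have hre1 : ((κ:ℂ)⁻¹ * z + (q:ℂ)).re = κ⁻¹ * z.re + q := by
    simp [Complex.add_re, Complex.ofReal_re, ← Complex.ofReal_inv, Complex.re_ofReal_mul]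
  have hre2 : (z + (q:ℂ)).re = z.re + q := by
    simp [Complex.add_re, Complex.ofReal_re]
  have hs1 : ((κ:ℂ)⁻¹ * z + (q:ℂ)) ∈ Complex.slitPlane := by
    rw [Complex.mem_slitPlane_iff]; left; rw [hre1]; positivity
  have hs2 : (z + (q:ℂ)) ∈ Complex.slitPlane := by
    rw [Complex.mem_slitPlane_iff]; left; rw [hre2]; positivity
  have hs3 : z ∈ Complex.slitPlane := Complex.mem_slitPlane_iff.2 (Or.inl hz)
  have hne1 : ((κ:ℂ)⁻¹ * z + (q:ℂ)) ≠ 0 := Complex.slitPlane_ne_zero hs1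
  have hne2 : (z + (q:ℂ)) ≠ 0 := Complex.slitPlane_ne_zero hs2
  have hne3 : z ≠ 0 := Complex.slitPlane_ne_zero hs3
  have hin1 : HasDerivAt (fun z : ℂ => (κ:ℂ)⁻¹ * z + (q:ℂ)) ((κ:ℂ)⁻¹) z := by
    simpa using ((hasDerivAt_id z).const_mul ((κ:ℂ)⁻¹)).add_const (q:ℂ)
  have hin2 : HasDerivAt (fun z : ℂ => z + (q:ℂ)) 1 z :=
    (hasDerivAt_id z).add_const (q:ℂ)
  refine ⟨?_, ?_, ?_⟩
  · have l1 : HasDerivAt (fun z : ℂ => Complex.log ((κ:ℂ)⁻¹ * z + q))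
        (((κ:ℂ)⁻¹ * z + q)⁻¹ * (κ:ℂ)⁻¹) z :=
      by have := (Complex.hasDerivAt_log hs1).comp z hin1; exact this
    have l2 : HasDerivAt (fun z : ℂ => Complex.log (z + q)) ((z + (q:ℂ))⁻¹ * 1) z :=
      by have := (Complex.hasDerivAt_log hs2).comp z hin2; exact this
    have l3 : HasDerivAt Complex.log z⁻¹ z := Complex.hasDerivAt_log hs3
    have := ((l1.const_mul (η:ℂ)).sub l2).add (l3.const_mul (m:ℂ))
    refine this.congr_deriv ?_
    simp only [D1V]; ring
  · have a1 : HasDerivAt (fun z : ℂ => (η:ℂ) * (κ:ℂ)⁻¹ * ((κ:ℂ)⁻¹ * z + q)⁻¹)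
        ((η:ℂ) * (κ:ℂ)⁻¹ * (-(κ:ℂ)⁻¹ / ((κ:ℂ)⁻¹ * z + q)^2)) z :=
      (hin1.inv hne1).const_mul _
    have a2 : HasDerivAt (fun z : ℂ => (z + (q:ℂ))⁻¹) (-1 / (z + (q:ℂ))^2) z :=
      hin2.inv hne2
    have a3 : HasDerivAt (fun z : ℂ => (m:ℂ) * z⁻¹) ((m:ℂ) * (-1 / z^2)) z :=
      ((hasDerivAt_id z).inv hne3).const_mul _
    have := (a1.sub a2).add a3
    refine this.congr_deriv ?_
    simp only [D2V]; ring
  · have hκC : (κ:ℂ) ≠ 0 := by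
      exact_mod_cast ne_of_gt hκ
    have b1 := ((hin1.pow 2).inv (pow_ne_zero 2 hne1)).const_mul (-((η:ℂ) * ((κ:ℂ)⁻¹)^2))
    have b2 := ((hin2.pow 2).inv (pow_ne_zero 2 hne2)).const_mul (1:ℂ)
    have b3 := (((hasDerivAt_id z).pow 2).inv (pow_ne_zero 2 hne3)).const_mul ((m:ℂ))
    have comb := (b1.add b2).sub b3
    have hfun : D2V κ η m q = fun z : ℂ =>
        -((η:ℂ) * ((κ:ℂ)⁻¹)^2) * (((κ:ℂ)⁻¹ * z + (q:ℂ))^2)⁻¹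
          + 1 * ((z + (q:ℂ))^2)⁻¹ - (m:ℂ) * (z^2)⁻¹ := by
      funext w; simp only [D2V, div_eq_mul_inv]
    have tgen : ∀ w c d : ℂ, w ≠ 0 →
        c * (-(((2:ℕ):ℂ) * w ^ (2 - 1) * d) / (w ^ 2) ^ 2) = -(2 * c * d / w ^ 3) := by
      intro w c d hw
      rw [show (2 - 1 : ℕ) = 1 from rfl, pow_one]
      field_simp
      ring
    rw [hfun]
    refine comb.congr_deriv ?_
    simp only [id_eq, Pi.pow_apply]
    rw [tgen _ _ _ hne1, tgen _ _ _ hne2, tgen _ _ _ hne3]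
    simp only [D3V]
    ring

set_option maxHeartbeats 1600000 in
/-- The second derivative of `G_V` vanishes at the critical point `ψ_V`, and the
third derivative equals
`2 (√(κη) − 1)^5 / (q^3 (κ−1)^3 (κ − √(κη)) √(κη)) = 2 (f_{η,V} / ψ_V)^3`. -/
theorem stmt_4 (q κ η : ℝ) (hq : q ∈ Set.Ioo (0:ℝ) 1) (hκ : 1 < κ)
    (hη : η ∈ Set.Ioo κ⁻¹ κ)
    (m f ψ : ℝ) (hm : m = (Real.sqrt κ - Real.sqrt η) ^ 2 / (κ - 1))
    (hf : f = (Real.sqrt (κ * η) - 1) ^ ((2 : ℝ) / 3)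
      * (κ - Real.sqrt (κ * η)) ^ ((2 : ℝ) / 3)
      / ((κ - 1) * κ ^ ((1 : ℝ) / 6) * η ^ ((1 : ℝ) / 6)))
    (hψ : ψ = q * (κ - Real.sqrt (κ * η)) / (Real.sqrt (κ * η) - 1))
    (G : ℂ → ℂ)
    (hG : G = fun z => (η : ℂ) * Complex.log ((κ : ℂ)⁻¹ * z + q)
      - Complex.log (z + q) + (m : ℂ) * Complex.log z) :
    iteratedDeriv 2 G (ψ : ℂ) = 0 ∧
    iteratedDeriv 3 G (ψ : ℂ) =
      ((2 * (Real.sqrt (κ * η) - 1) ^ 5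
        / (q ^ 3 * (κ - 1) ^ 3 * (κ - Real.sqrt (κ * η)) * Real.sqrt (κ * η)) : ℝ) : ℂ) ∧
    2 * (Real.sqrt (κ * η) - 1) ^ 5
        / (q ^ 3 * (κ - 1) ^ 3 * (κ - Real.sqrt (κ * η)) * Real.sqrt (κ * η))
      = 2 * (f / ψ) ^ 3 := by
  obtain ⟨hq0, hq1⟩ := hq
  obtain ⟨hη1, hη2⟩ := hη
  have hκ0 : (0:ℝ) < κ := by linarith
  have hη0 : (0:ℝ) < η := lt_trans (by positivity) hη1
  set s := Real.sqrt (κ * η) with hsdef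
  have hs2 : s ^ 2 = κ * η := Real.sq_sqrt (by positivity)
  have hκη1 : 1 < κ * η := by
    have h := mul_lt_mul_of_pos_left hη1 hκ0
    rwa [mul_inv_cancel₀ (ne_of_gt hκ0)] at h
  have hs1 : 1 < s := by
    rw [hsdef]; exact (Real.lt_sqrt (by norm_num)).2 (by nlinarith)
  have hsκ : s < κ := by
    rw [hsdef]; exact (Real.sqrt_lt' hκ0).2 (by nlinarith)
  have hs0 : (0:ℝ) < s := by linarith
  have hψ0 : 0 < ψ := by
    rw [hψ]; exact div_pos (mul_pos hq0 (by linarith)) (by linarith)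
  have hκne : κ ≠ 0 := ne_of_gt hκ0
  have hκ1ne : κ - 1 ≠ 0 := by intro h; nlinarith
  have hs1ne : s - 1 ≠ 0 := by intro h; nlinarith
  have hκsne : κ - s ≠ 0 := by intro h; nlinarith
  have hqne : q ≠ 0 := ne_of_gt hq0
  have hsne : s ≠ 0 := ne_of_gt hs0
  have hψne : ψ ≠ 0 := ne_of_gt hψ0
  have hsqrtmul : Real.sqrt κ * Real.sqrt η = s := (Real.sqrt_mul hκ0.le η).symm
  have hm2 : m = (κ - s) ^ 2 / (κ * (κ - 1)) := by
    rw [hm]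
    have h1 : Real.sqrt κ ^ 2 = κ := Real.sq_sqrt hκ0.le
    have h2 : Real.sqrt η ^ 2 = η := Real.sq_sqrt hη0.le
    have hd : (Real.sqrt κ - Real.sqrt η) ^ 2 = κ + η - 2 * s := by
      ring_nf
      linear_combination h1 + h2 - 2 * hsqrtmul
    rw [hd]
    rw [div_eq_div_iff hκ1ne (by positivity)]
    linear_combination (1 - κ) * hs2
  have hηs : η = s ^ 2 / κ := by
    field_simp
    linarith [hs2]
  have e1 : κ⁻¹ * ψ + q = q * s * (κ - 1) / ((s - 1) * κ) := by
    rw [hψ]; field_simp; ring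
  have e2 : ψ + q = q * (κ - 1) / (s - 1) := by
    rw [hψ]; field_simp; ring
  have r2 : -(η * (κ⁻¹) ^ 2) / (κ⁻¹ * ψ + q) ^ 2 + 1 / (ψ + q) ^ 2 - m / ψ ^ 2 = 0 := by
    rw [e1, e2, hψ, hm2, hηs]
    field_simp
    ring
  have r3 : 2 * η * (κ⁻¹) ^ 3 / (κ⁻¹ * ψ + q) ^ 3 - 2 / (ψ + q) ^ 3 + 2 * m / ψ ^ 3
      = 2 * (s - 1) ^ 5 / (q ^ 3 * (κ - 1) ^ 3 * (κ - s) * s) := by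
    rw [e1, e2, hψ, hm2, hηs]
    field_simp
    ring
  -- part 3 : the f identity
  have rpow_cube : ∀ x : ℝ, 0 ≤ x → (x ^ ((2:ℝ)/3)) ^ (3:ℕ) = x ^ 2 := by
    intro x hx
    rw [← Real.rpow_natCast (x ^ ((2:ℝ)/3)) 3, ← Real.rpow_mul hx]
    norm_num
  have rpow_six : ∀ x : ℝ, 0 ≤ x → (x ^ ((1:ℝ)/6)) ^ (3:ℕ) = Real.sqrt x := by
    intro x hx
    rw [← Real.rpow_natCast (x ^ ((1:ℝ)/6)) 3, ← Real.rpow_mul hx, Real.sqrt_eq_rpow]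
    norm_num
  have hf3 : f ^ 3 = (s - 1) ^ 2 * (κ - s) ^ 2 / ((κ - 1) ^ 3 * s) := by
    rw [hf, div_pow, mul_pow, mul_pow, mul_pow]
    rw [rpow_cube _ (by linarith), rpow_cube _ (by linarith),
      rpow_six _ hκ0.le, rpow_six _ hη0.le]
    rw [mul_assoc ((κ-1)^3), hsqrtmul]
  have part3 : 2 * (s - 1) ^ 5 / (q ^ 3 * (κ - 1) ^ 3 * (κ - s) * s) = 2 * (f / ψ) ^ 3 := by
    have hd1' : (0:ℝ) < q ^ 3 * (κ - 1) ^ 3 * (κ - s) * s :=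
      mul_pos (mul_pos (mul_pos (pow_pos hq0 3) (pow_pos (by linarith) 3)) (by linarith)) hs0
    have hd2' : (0:ℝ) < (κ - 1) ^ 3 * s * (q * (κ - s)) ^ 3 :=
      mul_pos (mul_pos (pow_pos (by linarith) 3) hs0)
        (pow_pos (mul_pos hq0 (by linarith)) 3)
    rw [div_pow, hf3, hψ, div_pow, div_div_eq_mul_div, div_mul_eq_mul_div, div_div,
      ← mul_div_assoc, div_eq_div_iff (ne_of_gt hd1') (ne_of_gt hd2')]
    ring
  -- complex derivative computations
  have hd1 : ∀ z : ℂ, 0 < z.re → deriv G z = D1V κ η m q z := by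
    intro z hz
    rw [hG]
    exact ((auxDerivV q κ η m hq0 hκ0 z hz).1).deriv
  have hd2 : ∀ z : ℂ, 0 < z.re → deriv (deriv G) z = D2V κ η m q z := by
    intro z hz
    have hev : deriv G =ᶠ[nhds z] D1V κ η m q := by
      filter_upwards [IsOpen.mem_nhds (isOpen_lt continuous_const Complex.continuous_re)
        (by simpa using hz : z ∈ {w : ℂ | 0 < w.re})] with w hw using hd1 w hw
    rw [hev.deriv_eq]
    exact ((auxDerivV q κ η m hq0 hκ0 z hz).2.1).deriv
  have hψre : (0:ℝ) < (ψ:ℂ).re := by simpa using hψ0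
  have hd3 : deriv (deriv (deriv G)) (ψ:ℂ) = D3V κ η m q (ψ:ℂ) := by
    have hev : deriv (deriv G) =ᶠ[nhds (ψ:ℂ)] D2V κ η m q := by
      filter_upwards [IsOpen.mem_nhds (isOpen_lt continuous_const Complex.continuous_re)
        (by simpa using hψ0 : (ψ:ℂ) ∈ {w : ℂ | 0 < w.re})] with w hw using hd2 w hw
    rw [hev.deriv_eq]
    exact ((auxDerivV q κ η m hq0 hκ0 (ψ:ℂ) hψre).2.2).deriv
  have hit2 : iteratedDeriv 2 G (ψ:ℂ) = D2V κ η m q (ψ:ℂ) := by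
    rw [show (2:ℕ) = 1 + 1 from rfl, iteratedDeriv_succ, iteratedDeriv_one]
    exact hd2 (ψ:ℂ) hψre
  have hit3 : iteratedDeriv 3 G (ψ:ℂ) = D3V κ η m q (ψ:ℂ) := by
    rw [show (3:ℕ) = 2 + 1 from rfl, iteratedDeriv_succ,
      show (2:ℕ) = 1 + 1 from rfl, iteratedDeriv_succ, iteratedDeriv_one]
    exact hd3
  have castD2 : D2V κ η m q (ψ:ℂ) =
      ((-(η * (κ⁻¹) ^ 2) / (κ⁻¹ * ψ + q) ^ 2 + 1 / (ψ + q) ^ 2 - m / ψ ^ 2 : ℝ) : ℂ) := by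
    simp only [D2V]
    push_cast
    ring
  have castD3 : D3V κ η m q (ψ:ℂ) =
      ((2 * η * (κ⁻¹) ^ 3 / (κ⁻¹ * ψ + q) ^ 3 - 2 / (ψ + q) ^ 3 + 2 * m / ψ ^ 3 : ℝ) : ℂ) := by
    simp only [D3V]
    push_cast
    ring
  refine ⟨?_, ?_, part3⟩
  · rw [hit2, castD2, r2]; norm_num
  · rw [hit3, castD3, r3]
end

section
/- The function z ↦ G_A(z) − G_A(ψ_A) − (1/3)·(f_η·(z − ψ_A)/ψ_A)³ is O(|z − ψ_A|⁴) as z → ψ_A; that is, there exist a constant C > 0 and a neighborhood of ψ_A on which |G_A(z) − G_A(ψ_A) − (1/3)(f_η(z − ψ_A)/ψ_A)³| ≤ C·|z − ψ_A|⁴. -/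
open Complex

lemma aux_hasDerivAt (A a : ℂ) (k : ℕ) (z : ℂ) (hz : z + a ≠ 0) :
    HasDerivAt (fun z : ℂ => A/(z+a)^(k+1)) (-((k:ℂ)+1)*A/(z+a)^(k+2)) z := by
  have h0 : HasDerivAt (fun z : ℂ => z + a) 1 z := (hasDerivAt_id z).add_const a
  have h1 := h0.pow (k+1)
  have h2 := (hasDerivAt_const z A).div h1 (pow_ne_zero _ hz)
  refine h2.congr_deriv ?_
  simp only [Pi.pow_apply, add_tsub_cancel_right]
  field_simp
  push_cast
  ring

lemma aux_hasDerivAt' (A : ℂ) (k : ℕ) (z : ℂ) (hz : z ≠ 0) :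
    HasDerivAt (fun z : ℂ => A/z^(k+1)) (-((k:ℂ)+1)*A/z^(k+2)) z := by
  have := aux_hasDerivAt A 0 k z (by simpa using hz)
  simpa using this

section
variable (q η m : ℝ)

noncomputable def gg1 : ℂ → ℂ := fun z => -(q:ℂ)/(z+q)^2 + η/(z+q) + m/z
noncomputable def gg2 : ℂ → ℂ := fun z => 2*(q:ℂ)/(z+q)^3 - η/(z+q)^2 - m/z^2
noncomputable def gg3 : ℂ → ℂ := fun z => -6*(q:ℂ)/(z+q)^4 + 2*η/(z+q)^3 + 2*m/z^3

lemma hasDerivAt_G (z : ℂ) (h1 : z ∈ slitPlane) (h2 : z + q ∈ slitPlane) :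
    HasDerivAt (fun z : ℂ => (q : ℂ) / (z + q) + (η : ℂ) * Complex.log (z + q)
      + (m : ℂ) * Complex.log z) (gg1 q η m z) z := by
  have hz0 : z ≠ 0 := slitPlane_ne_zero h1
  have hzq : z + q ≠ 0 := slitPlane_ne_zero h2
  have d1 : HasDerivAt (fun z : ℂ => (q:ℂ)/(z+q)) (-(q:ℂ)/(z+q)^2) z := by
    have := aux_hasDerivAt (q:ℂ) q 0 z hzq
    simpa using this
  have d2 : HasDerivAt (fun z : ℂ => (η:ℂ) * Complex.log (z+q)) ((η:ℂ)/(z+q)) z := by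
    have h := (Complex.hasDerivAt_log h2).comp z ((hasDerivAt_id z).add_const (q:ℂ))
    have := h.const_mul (η:ℂ)
    refine this.congr_deriv ?_
    simp [div_eq_mul_inv]
  have d3 : HasDerivAt (fun z : ℂ => (m:ℂ) * Complex.log z) ((m:ℂ)/z) z := by
    have := (Complex.hasDerivAt_log h1).const_mul (m:ℂ)
    simpa [div_eq_mul_inv] using this
  exact (d1.add d2).add d3

lemma hasDerivAt_g1 (z : ℂ) (hz0 : z ≠ 0) (hzq : z + q ≠ 0) :
    HasDerivAt (gg1 q η m) (gg2 q η m z) z := by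
  have d1 := aux_hasDerivAt (-(q:ℂ)) q 1 z hzq
  have d2 := aux_hasDerivAt ((η:ℂ)) q 0 z hzq
  have d3 := aux_hasDerivAt' ((m:ℂ)) 0 z hz0
  have := (d1.add d2).add d3
  refine (this.congr_deriv ?_).congr_of_eventuallyEq (Filter.Eventually.of_forall fun z => ?_)
  swap
  · simp [gg1]
  · simp only [gg2]; norm_num; ring

lemma hasDerivAt_g2 (z : ℂ) (hz0 : z ≠ 0) (hzq : z + q ≠ 0) :
    HasDerivAt (gg2 q η m) (gg3 q η m z) z := by
  have d1 := aux_hasDerivAt (2*(q:ℂ)) q 2 z hzq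
  have d2 := aux_hasDerivAt (-(η:ℂ)) q 1 z hzq
  have d3 := aux_hasDerivAt' (-(m:ℂ)) 1 z hz0
  have := (d1.add d2).add d3
  refine (this.congr_deriv ?_).congr_of_eventuallyEq (Filter.Eventually.of_forall fun z => ?_)
  swap
  · simp [gg2]; ring
  · simp only [gg3]; norm_num; ring
end

lemma val1 (q η : ℝ) (hq0 : 0 < q) (hη0 : -1 < η) (hη1 : η < 1) :
    -q/((q*(1-η)/(1+η))+q)^2 + η/((q*(1-η)/(1+η))+q)
      + ((1-η)/2)^2/(q*(1-η)/(1+η)) = 0 := by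
  have h1 : (0:ℝ) < 1 - η := by linarith
  have h2 : (0:ℝ) < 1 + η := by linarith
  have hψ : q*(1-η)/(1+η) ≠ 0 := by positivity
  have hψq : (q*(1-η)/(1+η))+q ≠ 0 := by positivity
  field_simp
  ring

lemma val2 (q η : ℝ) (hq0 : 0 < q) (hη0 : -1 < η) (hη1 : η < 1) :
    2*q/((q*(1-η)/(1+η))+q)^3 - η/((q*(1-η)/(1+η))+q)^2
      - ((1-η)/2)^2/(q*(1-η)/(1+η))^2 = 0 := by
  have h1 : (0:ℝ) < 1 - η := by linarith
  have h2 : (0:ℝ) < 1 + η := by linarith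
  have hψ : q*(1-η)/(1+η) ≠ 0 := by positivity
  have hψq : (q*(1-η)/(1+η))+q ≠ 0 := by positivity
  field_simp
  ring

lemma val3 (q η : ℝ) (hq0 : 0 < q) (hη0 : -1 < η) (hη1 : η < 1) :
    -6*q/((q*(1-η)/(1+η))+q)^4 + 2*η/((q*(1-η)/(1+η))+q)^3
      + 2*((1-η)/2)^2/(q*(1-η)/(1+η))^3
      = 2*((1-η^2)/4)^2/(q*(1-η)/(1+η))^3 := by
  have h1 : (0:ℝ) < 1 - η := by linarith
  have h2 : (0:ℝ) < 1 + η := by linarith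
  have hψ : q*(1-η)/(1+η) ≠ 0 := by positivity
  have hψq : (q*(1-η)/(1+η))+q ≠ 0 := by positivity
  field_simp
  ring

/-- The Taylor remainder of `G_A` at the critical point `ψ_A` beyond the cubic
term is `O(|z − ψ_A|⁴)`. -/
theorem stmt_5 (q η : ℝ) (hq : q ∈ Set.Ioo (0:ℝ) 1) (hη : η ∈ Set.Ioo (-1:ℝ) 1)
    (m f ψ : ℝ) (hm : m = ((1 - η) / 2) ^ 2)
    (hf : f = ((1 - η ^ 2) / 4) ^ ((2 : ℝ) / 3))
    (hψ : ψ = q * (1 - η) / (1 + η))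
    (G : ℂ → ℂ)
    (hG : G = fun z => (q : ℂ) / (z + q) + (η : ℂ) * Complex.log (z + q)
      + (m : ℂ) * Complex.log z) :
    ∃ C > (0 : ℝ), ∃ U ∈ nhds (ψ : ℂ), ∀ z ∈ U,
      ‖G z - G (ψ : ℂ) - (1 / 3) * ((f : ℂ) * (z - ψ) / ψ) ^ 3‖
        ≤ C * ‖z - (ψ : ℂ)‖ ^ 4 := by
  obtain ⟨hq0, hq1⟩ := hq
  obtain ⟨hη0, hη1⟩ := hη
  have h1 : (0:ℝ) < 1 - η := by linarith
  have h2 : (0:ℝ) < 1 + η := by linarith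
  have hψ0 : 0 < ψ := by rw [hψ]; positivity
  have hψq0 : (0:ℝ) < ψ + q := by linarith
  have hψc : (ψ:ℂ) ≠ 0 := Complex.ofReal_ne_zero.2 (ne_of_gt hψ0)
  have hψqc : (ψ:ℂ) + (q:ℂ) ≠ 0 := by
    rw [← Complex.ofReal_add]
    exact Complex.ofReal_ne_zero.2 (ne_of_gt hψq0)
  have hx4 : (0:ℝ) ≤ (1-η^2)/4 := by nlinarith
  have hf3 : f^3 = ((1-η^2)/4)^2 := by
    rw [hf, ← Real.rpow_natCast (((1-η^2)/4) ^ ((2:ℝ)/3)) 3,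
      ← Real.rpow_mul hx4]
    norm_num
  -- the open set where everything is differentiable
  set S : Set ℂ := {z : ℂ | z ∈ slitPlane ∧ z + q ∈ slitPlane} with hS
  have hSopen : IsOpen S :=
    isOpen_slitPlane.inter ((isOpen_slitPlane).preimage (by continuity))
  have hψS : (ψ:ℂ) ∈ S := by
    constructor
    · exact Complex.ofReal_mem_slitPlane.2 hψ0
    · rw [← Complex.ofReal_add]
      exact Complex.ofReal_mem_slitPlane.2 hψq0
  have hSmem : S ∈ nhds (ψ:ℂ) := hSopen.mem_nhds hψS
  -- analyticity
  have hadd : AnalyticAt ℂ (fun z : ℂ => z + (q:ℂ)) (ψ:ℂ) :=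
    analyticAt_id.add analyticAt_const
  have hlog1 : AnalyticAt ℂ (fun z : ℂ => Complex.log (z + q)) (ψ:ℂ) := by
    have := AnalyticAt.comp (f := fun z : ℂ => z + (q:ℂ)) (x := (ψ:ℂ))
      (analyticAt_clog hψS.2) hadd
    exact this
  have hA : AnalyticAt ℂ G (ψ:ℂ) := by
    rw [hG]
    apply AnalyticAt.add
    apply AnalyticAt.add
    · exact analyticAt_const.div hadd hψqc
    · exact analyticAt_const.mul hlog1
    · exact analyticAt_const.mul (analyticAt_clog hψS.1)
  -- derivative chain
  have hEg1 : deriv G =ᶠ[nhds (ψ:ℂ)] gg1 q η m := by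
    filter_upwards [hSmem] with z hz
    rw [hG]
    exact (hasDerivAt_G q η m z hz.1 hz.2).deriv
  have hEg2 : deriv (gg1 q η m) =ᶠ[nhds (ψ:ℂ)] gg2 q η m := by
    filter_upwards [hSmem] with z hz
    exact (hasDerivAt_g1 q η m z (slitPlane_ne_zero hz.1) (slitPlane_ne_zero hz.2)).deriv
  have hd1 : deriv G (ψ:ℂ) = gg1 q η m (ψ:ℂ) := hEg1.self_of_nhds
  have hd2 : iteratedDeriv 2 G (ψ:ℂ) = gg2 q η m (ψ:ℂ) := by
    rw [iteratedDeriv_succ, iteratedDeriv_one, hEg1.deriv_eq, hEg2.self_of_nhds]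
  have hd3 : iteratedDeriv 3 G (ψ:ℂ) = gg3 q η m (ψ:ℂ) := by
    rw [iteratedDeriv_succ, iteratedDeriv_succ, iteratedDeriv_one,
      (hEg1.deriv.trans hEg2).deriv_eq]
    exact (hasDerivAt_g2 q η m (ψ:ℂ) (slitPlane_ne_zero hψS.1)
      (slitPlane_ne_zero hψS.2)).deriv
  -- values
  have hv1 : gg1 q η m (ψ:ℂ) = 0 := by
    have : gg1 q η m (ψ:ℂ) = ((-q/(ψ+q)^2 + η/(ψ+q) + m/ψ : ℝ) : ℂ) := by
      simp only [gg1]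
      push_cast
      ring
    rw [this, hm, hψ, val1 q η hq0 hη0 hη1, Complex.ofReal_zero]
  have hv2 : gg2 q η m (ψ:ℂ) = 0 := by
    have : gg2 q η m (ψ:ℂ) = ((2*q/(ψ+q)^3 - η/(ψ+q)^2 - m/ψ^2 : ℝ) : ℂ) := by
      simp only [gg2]
      push_cast
      ring
    rw [this, hm, hψ, val2 q η hq0 hη0 hη1, Complex.ofReal_zero]
  have hv3 : gg3 q η m (ψ:ℂ) = 2 * (f:ℂ)^3 / (ψ:ℂ)^3 := by
    have e1 : gg3 q η m (ψ:ℂ)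
        = ((-6*q/(ψ+q)^4 + 2*η/(ψ+q)^3 + 2*m/ψ^3 : ℝ) : ℂ) := by
      simp only [gg3]
      push_cast
      ring
    have e2 : (-6*q/(ψ+q)^4 + 2*η/(ψ+q)^3 + 2*m/ψ^3 : ℝ) = 2*f^3/ψ^3 := by
      rw [hm, hψ, hf3]
      exact val3 q η hq0 hη0 hη1
    rw [e1, e2]
    push_cast
    ring
  -- power series coefficients
  set c : ℂ := (f:ℂ)^3 / (3*(ψ:ℂ)^3) with hcdef
  obtain ⟨p, hp⟩ := hA
  have hp' := hp
  obtain ⟨r, hpb⟩ := hp'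
  have hc0 : p.coeff 0 = G (ψ:ℂ) := by
    exact hp.coeff_zero 1
  have key : ∀ n : ℕ, (n.factorial : ℂ) * p.coeff n = iteratedDeriv n G (ψ:ℂ) := by
    intro n
    have h := hpb.factorial_smul (y := (1:ℂ)) n
    rw [iteratedDeriv_eq_iteratedFDeriv, ← h, nsmul_eq_mul]
    rfl
  have hc1 : p.coeff 1 = 0 := by
    have h := key 1
    rw [iteratedDeriv_one, hd1, hv1] at h
    simpa using h
  have hc2 : p.coeff 2 = 0 := by
    have h := key 2
    rw [hd2, hv2] at h
    have h2 : ((2:ℕ).factorial : ℂ) ≠ 0 := by norm_num [Nat.factorial]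
    exact (mul_eq_zero.1 h).resolve_left h2
  have hc3 : p.coeff 3 = c := by
    have h := key 3
    rw [hd3, hv3] at h
    have h6 : (6:ℂ) * p.coeff 3 = 2*(f:ℂ)^3/(ψ:ℂ)^3 := by
      simpa [Nat.factorial] using h
    have hψ3 : (ψ:ℂ)^3 ≠ 0 := pow_ne_zero _ hψc
    rw [hcdef]
    field_simp at h6 ⊢
    linear_combination h6 / 2
  have hps : ∀ y : ℂ, p.partialSum 4 y = G (ψ:ℂ) + c * y^3 := by
    intro y
    simp [FormalMultilinearSeries.partialSum, Finset.sum_range_succ,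
      FormalMultilinearSeries.apply_eq_pow_smul_coeff, hc0, hc1, hc2, hc3, smul_eq_mul]
    ring
  -- big O
  have hO := hp.isBigO_sub_partialSum_pow 4
  rw [Asymptotics.isBigO_iff] at hO
  obtain ⟨C, hC⟩ := hO
  refine ⟨max C 1, lt_of_lt_of_le zero_lt_one (le_max_right _ _), ?_⟩
  have hmap : ContinuousAt (fun z : ℂ => z - (ψ:ℂ)) (ψ:ℂ) := by fun_prop
  have hmem0 : {y : ℂ | ‖G ((ψ:ℂ) + y) - p.partialSum 4 y‖ ≤ C * ‖‖y‖^4‖}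
      ∈ nhds (0:ℂ) := hC
  refine ⟨(fun z : ℂ => z - (ψ:ℂ)) ⁻¹'
    {y : ℂ | ‖G ((ψ:ℂ) + y) - p.partialSum 4 y‖ ≤ C * ‖‖y‖^4‖},
    hmap.preimage_mem_nhds (by simpa using hmem0), ?_⟩
  intro z hz
  simp only [Set.mem_preimage, Set.mem_setOf_eq] at hz
  rw [hps, show (ψ:ℂ) + (z - ψ) = z by ring] at hz
  have ecube : (1 / 3 : ℂ) * ((f : ℂ) * (z - ψ) / ψ) ^ 3 = c * (z - ψ)^3 := by
    rw [hcdef]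
    field_simp
  have enorm : ‖(‖z - (ψ:ℂ)‖^4 : ℝ)‖ = ‖z - (ψ:ℂ)‖^4 := by
    rw [Real.norm_eq_abs, _root_.abs_of_nonneg (by positivity)]
  rw [ecube]
  calc ‖G z - G (ψ:ℂ) - c * (z - ψ)^3‖
      = ‖G z - (G (ψ:ℂ) + c * (z - ψ)^3)‖ := by ring_nf
    _ ≤ C * ‖z - (ψ:ℂ)‖^4 := by rw [← enorm]; exact hz
    _ ≤ max C 1 * ‖z - (ψ:ℂ)‖^4 :=
        mul_le_mul_of_nonneg_right (le_max_left _ _) (by positivity)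
end

section
/- Let z₀ ∈ ℂ with Im z₀ ≠ 0. Then the set {ω ∈ ℝ : ω ≠ 0 and H_A(ω·z₀) = H_A(ψ_A)} is finite and has at most 6 elements. -/
open Complex Polynomial

/-- Combinatorial counting lemma: if between any two points of `S` there is a point
of the finite set `T`, then `S` is finite with at most `T.card + 1` elements. -/
lemma count_lemma_stmt8 (S : Set ℝ) (T : Finset ℝ)
    (h : ∀ x ∈ S, ∀ y ∈ S, x < y → ∃ z ∈ Set.Ioo x y, z ∈ T) :
    S.Finite ∧ S.ncard ≤ T.card + 1 := by
  have claim : ∀ s : Finset ℝ, ↑s ⊆ S → s.card ≤ T.card + 1 := by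
    intro s hs
    by_contra hc
    push_neg at hc
    have hn : T.card + 2 ≤ s.card := hc
    set n := s.card with hns
    set x : Fin n ↪o ℝ := s.orderEmbOfFin rfl with hx
    have hstep : ∀ i : Fin (T.card + 1), ∃ z ∈ T,
        z ∈ Set.Ioo (x ⟨i.1, by omega⟩) (x ⟨i.1 + 1, by omega⟩) := by
      intro i
      have h1 : (x ⟨i.1, by omega⟩ : ℝ) ∈ S := hs (s.orderEmbOfFin_mem rfl _)
      have h2 : (x ⟨i.1 + 1, by omega⟩ : ℝ) ∈ S := hs (s.orderEmbOfFin_mem rfl _)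
      have hlt : (x ⟨i.1, by omega⟩ : ℝ) < x ⟨i.1 + 1, by omega⟩ := by
        apply x.strictMono
        simp [Fin.lt_def]
      obtain ⟨z, hz1, hz2⟩ := h _ h1 _ h2 hlt
      exact ⟨z, hz2, hz1⟩
    choose g hgT hg using hstep
    have hmono : StrictMono g := by
      intro i j hij
      have h1 : g i < x ⟨i.1 + 1, by omega⟩ := (hg i).2
      have h2 : (x ⟨j.1, by omega⟩ : ℝ) < g j := (hg j).1
      have h3 : (x ⟨i.1 + 1, by omega⟩ : ℝ) ≤ x ⟨j.1, by omega⟩ := by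
        apply x.monotone
        simp [Fin.le_def]
        omega
      linarith
    have : (Finset.univ : Finset (Fin (T.card + 1))).card ≤ T.card :=
      Finset.card_le_card_of_injOn g (fun i _ => hgT i) (hmono.injective.injOn)
    simp at this
  have hfin : S.Finite := by
    by_contra hinf
    obtain ⟨t, hts, htc⟩ := (Set.Infinite.exists_subset_card_eq hinf (T.card + 2))
    have := claim t hts
    omega
  refine ⟨hfin, ?_⟩
  classical
  have := claim hfin.toFinset (by simp)
  rwa [← Set.ncard_eq_toFinset_card S hfin] at this

/-- Any non-real line through the origin meets the level set
`{Re G_A = G_A(ψ_A)}` in at most six points. -/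
theorem stmt_8 (q η : ℝ) (hq : q ∈ Set.Ioo (0:ℝ) 1) (hη : η ∈ Set.Ioo (-1:ℝ) 1)
    (m ψ : ℝ) (hm : m = ((1 - η) / 2) ^ 2) (hψ : ψ = q * (1 - η) / (1 + η))
    (H : ℂ → ℝ)
    (hH : H = fun z => ((q : ℂ) / (z + q)).re + η * Real.log ‖z + q‖
      + m * Real.log ‖z‖)
    (z₀ : ℂ) (hz₀ : z₀.im ≠ 0) :
    {ω : ℝ | ω ≠ 0 ∧ H ((ω : ℂ) * z₀) = H (ψ : ℂ)}.Finite ∧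
    {ω : ℝ | ω ≠ 0 ∧ H ((ω : ℂ) * z₀) = H (ψ : ℂ)}.ncard ≤ 6 := by
  obtain ⟨hq0, hq1⟩ := hq
  obtain ⟨hη0, hη1⟩ := hη
  set a := z₀.re with hadef
  set b := z₀.im with hbdef
  have hb : b ≠ 0 := hz₀
  have hb2 : 0 < b^2 := by rcases hb.lt_or_gt with h0|h0 <;> nlinarith
  have hr : (0:ℝ) < a^2+b^2 := by nlinarith [sq_nonneg a]
  have hηm : 0 < m + η := by
    have : m + η = ((1+η)/2)^2 := by rw [hm]; ring
    rw [this]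
    have : (0:ℝ) < (1+η)/2 := by linarith
    positivity
  set A : ℝ → ℝ := fun ω => (ω*a+q)^2 + (ω*b)^2 with hAdef
  set B : ℝ → ℝ := fun ω => 2*(ω*a+q)*a + 2*(ω*b)*b with hBdef
  have hApos : ∀ ω, 0 < A ω := by
    intro ω
    rcases eq_or_ne ω 0 with h0 | h0
    · simp [hAdef, h0]; positivity
    · have h1 : (ω*b)^2 > 0 := by positivity
      have h2 : (ω*a+q)^2 ≥ 0 := sq_nonneg _
      simp only [hAdef]; nlinarith
  set h : ℝ → ℝ := fun ω => q*(ω*a+q)/A ω + η/2 * Real.log (A ω)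
      + m/2 * Real.log (ω^2*(a^2+b^2)) with hhdef
  -- `H (ω • z₀)` coincides with the real function `h`
  have key : ∀ ω : ℝ, H ((ω:ℂ)*z₀) = h ω := by
    intro ω
    rw [hH]
    simp only
    have hre : ((ω:ℂ)*z₀ + q).re = ω*a + q := by simp [hadef]
    have him : ((ω:ℂ)*z₀ + q).im = ω*b := by simp [hbdef]
    have hnsq : Complex.normSq ((ω:ℂ)*z₀ + q) = A ω := by
      rw [Complex.normSq_apply, hre, him]; simp [hAdef]; ring
    have hnsq0 : Complex.normSq ((ω:ℂ)*z₀) = ω^2*(a^2+b^2) := by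
      rw [Complex.normSq_apply]; simp; ring
    rw [Complex.div_re, hnsq, Complex.norm_def, Complex.norm_def, hnsq, hnsq0,
      Real.log_sqrt (by positivity), Real.log_sqrt (by positivity)]
    simp only [hhdef, hre, him, Complex.ofReal_re, Complex.ofReal_im]
    ring
  -- derivative of `h`
  set D : ℝ → ℝ := fun ω => (q*a*A ω - q*(ω*a+q)*B ω)/(A ω)^2
      + η/2 * (B ω / A ω) + m/2 * ((2*ω*(a^2+b^2))/(ω^2*(a^2+b^2))) with hDdef
  have hA : ∀ ω, HasDerivAt A (B ω) ω := by
    intro ω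
    have h1 : HasDerivAt (fun ω : ℝ => ω*a+q) a ω := by
      simpa using ((hasDerivAt_id ω).mul_const a).add_const q
    have h2 : HasDerivAt (fun ω : ℝ => ω*b) b ω := by
      simpa using (hasDerivAt_id ω).mul_const b
    have := (h1.pow 2).add (h2.pow 2)
    exact this.congr_deriv (by simp only [hBdef]; norm_num)
  have hderiv : ∀ ω : ℝ, ω ≠ 0 → HasDerivAt h (D ω) ω := by
    intro ω hω
    have h1 : HasDerivAt (fun ω : ℝ => q*(ω*a+q)) (q*a) ω := by
      simpa using (((hasDerivAt_id ω).mul_const a).add_const q).const_mul q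
    have t1 : HasDerivAt (fun ω => q*(ω*a+q)/A ω)
        ((q*a*A ω - q*(ω*a+q)*B ω)/(A ω)^2) ω := h1.div (hA ω) (hApos ω).ne'
    have t2 : HasDerivAt (fun ω => η/2 * Real.log (A ω)) (η/2 * (B ω / A ω)) ω :=
      ((hA ω).log (hApos ω).ne').const_mul (η/2)
    have hsq : HasDerivAt (fun ω : ℝ => ω^2*(a^2+b^2)) (2*ω*(a^2+b^2)) ω := by
      simpa using (hasDerivAt_pow 2 ω).mul_const (a^2+b^2)
    have t3 : HasDerivAt (fun ω => m/2 * Real.log (ω^2*(a^2+b^2)))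
        (m/2 * ((2*ω*(a^2+b^2))/(ω^2*(a^2+b^2)))) ω :=
      (hsq.log (by positivity)).const_mul (m/2)
    exact (t1.add t2).add t3
  -- the quartic polynomial whose roots contain all critical points
  set p : Polynomial ℝ := C (m*q^4) + C (q^3*a*(4*m + η - 1)) * X
      + C (q^2*((2*m+η)*(b^2+3*a^2) - 2*(a^2+b^2))) * X^2
      + C (q*a*(a^2+b^2)*(4*m+3*η-1)) * X^3
      + C ((m+η)*(a^2+b^2)^2) * X^4 with hpdef
  have hcoeff : p.coeff 4 = (m+η)*(a^2+b^2)^2 := by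
    simp only [hpdef, Polynomial.coeff_add, Polynomial.coeff_C_mul, Polynomial.coeff_X_pow,
      Polynomial.coeff_C, Polynomial.coeff_X]
    norm_num
  have hpne : p ≠ 0 := by
    intro hz
    rw [hz] at hcoeff
    simp at hcoeff
    rcases hcoeff with h' | h'
    · exact hηm.ne' h'
    · nlinarith [sq_nonneg a]
  have hdeg : p.natDegree ≤ 4 := by
    rw [hpdef]
    compute_degree
  have heval : ∀ ω : ℝ, ω ≠ 0 → D ω = p.eval ω / (ω * (A ω)^2) := by
    intro ω hω
    have hA0 : A ω ≠ 0 := (hApos ω).ne'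
    simp only [hDdef, hpdef, hAdef, hBdef, Polynomial.eval_add, Polynomial.eval_mul,
      Polynomial.eval_C, Polynomial.eval_X, Polynomial.eval_pow]
    field_simp
    ring
  classical
  set T : Finset ℝ := p.roots.toFinset with hTdef
  have hTcard : T.card ≤ 4 :=
    (Multiset.toFinset_card_le _).trans ((Polynomial.card_roots' p).trans hdeg)
  have hroot : ∀ z : ℝ, z ≠ 0 → deriv h z = 0 → z ∈ T := by
    intro z hz hd
    have := (hderiv z hz).deriv
    rw [heval z hz] at this
    rw [this] at hd
    have hden : z * (A z)^2 ≠ 0 := mul_ne_zero hz (pow_ne_zero _ (hApos z).ne')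
    have hev : p.eval z = 0 := by
      exact (div_eq_zero_iff.mp hd).resolve_right hden
    simp only [hTdef, Multiset.mem_toFinset]
    rw [Polynomial.mem_roots hpne]
    exact hev
  -- Rolle-type statement
  have hrolle : ∀ x y : ℝ, x < y → (∀ z ∈ Set.Icc x y, z ≠ 0) → h x = h y →
      ∃ z ∈ Set.Ioo x y, z ∈ T := by
    intro x y hxy hne hval
    have hcont : ContinuousOn h (Set.Icc x y) := fun z hz =>
      ((hderiv z (hne z hz)).continuousAt).continuousWithinAt
    obtain ⟨z, hz1, hz2⟩ := exists_deriv_eq_zero hxy hcont hval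
    refine ⟨z, hz1, hroot z (hne z ⟨hz1.1.le, hz1.2.le⟩) hz2⟩
  set c : ℝ := H (ψ : ℂ) with hcdef
  set S : Set ℝ := {ω : ℝ | ω ≠ 0 ∧ H ((ω : ℂ) * z₀) = H (ψ : ℂ)} with hSdef
  set Sp : Set ℝ := {ω : ℝ | 0 < ω ∧ h ω = c} with hSpdef
  set Sn : Set ℝ := {ω : ℝ | ω < 0 ∧ h ω = c} with hSndef
  have hSeq : S = Sp ∪ Sn := by
    ext ω
    simp only [hSdef, hSpdef, hSndef, Set.mem_setOf_eq, Set.mem_union, key ω, ← hcdef]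
    constructor
    · rintro ⟨h1, h2⟩
      rcases h1.lt_or_gt with h3 | h3
      · exact Or.inr ⟨h3, h2⟩
      · exact Or.inl ⟨h3, h2⟩
    · rintro (⟨h1, h2⟩ | ⟨h1, h2⟩)
      · exact ⟨h1.ne', h2⟩
      · exact ⟨h1.ne, h2⟩
  set Tp : Finset ℝ := T.filter (fun z => 0 < z) with hTpdef
  set Tn : Finset ℝ := T.filter (fun z => z < 0) with hTndef
  have hp' : Sp.Finite ∧ Sp.ncard ≤ Tp.card + 1 := by
    apply count_lemma_stmt8
    intro x hx y hy hxy
    obtain ⟨z, hz1, hz2⟩ := hrolle x y hxy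
      (fun z hz => (lt_of_lt_of_le hx.1 hz.1).ne') (hx.2.trans hy.2.symm)
    exact ⟨z, hz1, Finset.mem_filter.mpr ⟨hz2, hx.1.trans hz1.1⟩⟩
  have hn' : Sn.Finite ∧ Sn.ncard ≤ Tn.card + 1 := by
    apply count_lemma_stmt8
    intro x hx y hy hxy
    obtain ⟨z, hz1, hz2⟩ := hrolle x y hxy
      (fun z hz => (lt_of_le_of_lt hz.2 hy.1).ne) (hx.2.trans hy.2.symm)
    exact ⟨z, hz1, Finset.mem_filter.mpr ⟨hz2, hz1.2.trans hy.1⟩⟩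
  have hTsum : Tp.card + Tn.card ≤ 4 := by
    have hdisj : Disjoint Tp Tn := by
      rw [Finset.disjoint_left]
      intro z hz1 hz2
      simp only [hTpdef, hTndef, Finset.mem_filter] at hz1 hz2
      linarith [hz1.2, hz2.2]
    have hsub : Tp ∪ Tn ⊆ T := by
      intro z hz
      rcases Finset.mem_union.mp hz with h' | h' <;>
        exact (Finset.mem_filter.mp h').1
    calc Tp.card + Tn.card = (Tp ∪ Tn).card := (Finset.card_union_of_disjoint hdisj).symm
      _ ≤ T.card := Finset.card_le_card hsub
      _ ≤ 4 := hTcard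
  constructor
  · rw [hSeq]; exact (hp'.1).union (hn'.1)
  · rw [hSeq]
    calc (Sp ∪ Sn).ncard ≤ Sp.ncard + Sn.ncard := Set.ncard_union_le _ _
      _ ≤ (Tp.card + 1) + (Tn.card + 1) := add_le_add hp'.2 hn'.2
      _ ≤ 6 := by omega
end

section
/- There exist real numbers z₁ ∈ (−q, 0) and z₂ ∈ (−∞, −q) such that the set {x ∈ ℝ : x ≠ 0, x ≠ −q, and H_A(x) = H_A(ψ_A)} consists of exactly the three distinct points z₂, z₁, and ψ_A. -/
open Complex

open Filter Set Real Topology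

lemma aux_key (q c : ℝ) (hq : 0 < q) :
    Tendsto (fun t : ℝ => q * t⁻¹ + c * Real.log t) (𝓝[>] (0:ℝ)) atTop := by
  have h0 : Tendsto (fun t : ℝ => t * Real.log t) (𝓝 0) (𝓝 0) := by
    simpa using continuous_mul_log.tendsto 0
  have h1 : Tendsto (fun t : ℝ => q + c * (t * Real.log t)) (𝓝[>] 0) (𝓝 q) := by
    have h' : Tendsto (fun t : ℝ => q + c * (t * Real.log t)) (𝓝 0) (𝓝 (q + c * 0)) :=
      tendsto_const_nhds.add (h0.const_mul c)
    simpa using h'.mono_left nhdsWithin_le_nhds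
  have h2 : Tendsto (fun t : ℝ => t⁻¹) (𝓝[>] (0:ℝ)) atTop := tendsto_inv_nhdsGT_zero
  have h3 := h1.pos_mul_atTop hq h2
  refine h3.congr' ?_
  filter_upwards [self_mem_nhdsWithin] with t ht
  have htne : (t:ℝ) ≠ 0 := ne_of_gt ht
  field_simp


noncomputable def ff (q η m : ℝ) : ℝ → ℝ :=
  fun x => q * (x + q)⁻¹ + η * Real.log (x + q) + m * Real.log x

section
variable {q η m ψ : ℝ}

lemma aux_deriv (hm : m = ((1 - η) / 2) ^ 2) (hψ : ψ = q * (1 - η) / (1 + η))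
    (hne : (1:ℝ) + η ≠ 0)
    (x : ℝ) (hx : x ≠ 0) (hxq : x + q ≠ 0) :
    HasDerivAt (ff q η m) (((1 + η) / 2) ^ 2 * (x - ψ) ^ 2 / (x * (x + q) ^ 2)) x := by
  have h1 : HasDerivAt (fun y : ℝ => y + q) 1 x := (hasDerivAt_id x).add_const q
  have h2 : HasDerivAt (fun y : ℝ => q * (y + q)⁻¹) (q * (-1 / (x + q) ^ 2)) x :=
    (h1.inv hxq).const_mul q
  have h3 : HasDerivAt (fun y : ℝ => η * Real.log (y + q)) (η * (1 / (x + q))) x :=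
    (h1.log hxq).const_mul η
  have h4 : HasDerivAt (fun y : ℝ => m * Real.log y) (m * x⁻¹) x :=
    (Real.hasDerivAt_log hx).const_mul m
  have h5 := (h2.add h3).add h4
  refine h5.congr_deriv ?_
  subst hm hψ
  field_simp
  ring

lemma aux_cont (x : ℝ) (hx : x ≠ 0) (hxq : x + q ≠ 0) : ContinuousAt (ff q η m) x := by
  have h1 : ContinuousAt (fun y : ℝ => y + q) x := by fun_prop
  have h2 : ContinuousAt (fun y : ℝ => Real.log (y + q)) x :=
    ContinuousAt.comp (g := Real.log) (Real.continuousAt_log hxq) h1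
  exact ((continuousAt_const.mul (h1.inv₀ hxq)).add
    (continuousAt_const.mul h2)).add
    (continuousAt_const.mul (Real.continuousAt_log hx))

lemma aux_psi_pos (hq : 0 < q) (hη1 : -1 < η) (hη2 : η < 1)
    (hψ : ψ = q * (1 - η) / (1 + η)) : 0 < ψ := by
  rw [hψ]
  apply div_pos (mul_pos hq (by linarith)) (by linarith)

lemma aux_deriv_pos (hq : 0 < q) (hη1 : -1 < η) (hη2 : η < 1)
    (hm : m = ((1 - η) / 2) ^ 2) (hψ : ψ = q * (1 - η) / (1 + η))
    (x : ℝ) (hx : 0 < x) (hxψ : x ≠ ψ) : 0 < deriv (ff q η m) x := by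
  rw [(aux_deriv hm hψ (by linarith) x (ne_of_gt hx) (by positivity)).deriv]
  apply div_pos
  · exact mul_pos (pow_pos (by linarith) 2) (pow_two_pos_of_ne_zero (sub_ne_zero.mpr hxψ))
  · exact mul_pos hx (pow_pos (by linarith) 2)

lemma aux_deriv_neg (hq : 0 < q) (hη1 : -1 < η) (hη2 : η < 1)
    (hm : m = ((1 - η) / 2) ^ 2) (hψ : ψ = q * (1 - η) / (1 + η))
    (x : ℝ) (hx : x < 0) (hxq : x + q ≠ 0) : deriv (ff q η m) x < 0 := by
  have hψ0 : 0 < ψ := aux_psi_pos hq hη1 hη2 hψ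
  rw [(aux_deriv hm hψ (by linarith) x (ne_of_lt hx) hxq).deriv]
  apply div_neg_of_pos_of_neg
  · refine mul_pos (pow_pos (by linarith) 2) (pow_two_pos_of_ne_zero ?_)
    exact sub_ne_zero.mpr (by linarith)
  · exact mul_neg_of_neg_of_pos hx (pow_two_pos_of_ne_zero hxq)

lemma aux_mono1 (hq : 0 < q) (hη1 : -1 < η) (hη2 : η < 1)
    (hm : m = ((1 - η) / 2) ^ 2) (hψ : ψ = q * (1 - η) / (1 + η)) :
    StrictMonoOn (ff q η m) (Set.Ioc 0 ψ) := by
  apply strictMonoOn_of_deriv_pos (convex_Ioc 0 ψ)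
  · intro x hx
    exact (aux_cont x (ne_of_gt hx.1) (by nlinarith [hx.1])).continuousWithinAt
  · rw [interior_Ioc]
    intro x hx
    exact aux_deriv_pos hq hη1 hη2 hm hψ x hx.1 (ne_of_lt hx.2)

lemma aux_mono2 (hq : 0 < q) (hη1 : -1 < η) (hη2 : η < 1)
    (hm : m = ((1 - η) / 2) ^ 2) (hψ : ψ = q * (1 - η) / (1 + η)) :
    StrictMonoOn (ff q η m) (Set.Ici ψ) := by
  have hψ0 : 0 < ψ := aux_psi_pos hq hη1 hη2 hψ
  apply strictMonoOn_of_deriv_pos (convex_Ici ψ)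
  · intro x hx
    have : 0 < x := lt_of_lt_of_le hψ0 hx
    exact (aux_cont x (ne_of_gt this) (by nlinarith)).continuousWithinAt
  · rw [interior_Ici]
    intro x hx
    exact aux_deriv_pos hq hη1 hη2 hm hψ x (lt_trans hψ0 hx) (ne_of_gt hx)

lemma aux_anti1 (hq : 0 < q) (hη1 : -1 < η) (hη2 : η < 1)
    (hm : m = ((1 - η) / 2) ^ 2) (hψ : ψ = q * (1 - η) / (1 + η)) :
    StrictAntiOn (ff q η m) (Set.Ioo (-q) 0) := by
  apply strictAntiOn_of_deriv_neg (convex_Ioo (-q) 0)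
  · intro x hx
    exact (aux_cont x (ne_of_lt hx.2) (by nlinarith [hx.1])).continuousWithinAt
  · rw [interior_Ioo]
    intro x hx
    exact aux_deriv_neg hq hη1 hη2 hm hψ x hx.2 (by nlinarith [hx.1])

lemma aux_anti2 (hq : 0 < q) (hη1 : -1 < η) (hη2 : η < 1)
    (hm : m = ((1 - η) / 2) ^ 2) (hψ : ψ = q * (1 - η) / (1 + η)) :
    StrictAntiOn (ff q η m) (Set.Iio (-q)) := by
  apply strictAntiOn_of_deriv_neg (convex_Iio (-q))
  · intro x hx
    have hx' : x < -q := hx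
    exact (aux_cont x (by nlinarith) (by nlinarith)).continuousWithinAt
  · rw [interior_Iio]
    intro x hx
    have hx' : x < -q := hx
    exact aux_deriv_neg hq hη1 hη2 hm hψ x (by nlinarith) (by nlinarith)
lemma aux_L1 (hq : 0 < q) (hm0 : 0 ≤ m) :
    Tendsto (ff q η m) (𝓝[>] (-q)) atTop := by
  have comp : Tendsto (fun x : ℝ => x + q) (𝓝[>] (-q)) (𝓝[>] (0:ℝ)) := by
    apply tendsto_nhdsWithin_of_tendsto_nhds_of_eventually_within
    · have h : Tendsto (fun x : ℝ => x + q) (𝓝 (-q)) (𝓝 ((-q) + q)) :=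
        (continuous_id.add continuous_const).tendsto (-q)
      simpa using h.mono_left nhdsWithin_le_nhds
    · filter_upwards [self_mem_nhdsWithin] with x (hx : -q < x)
      simp only [Set.mem_Ioi]; linarith
  have key := ((aux_key q η hq).comp comp).atTop_add
    (tendsto_const_nhds (x := m * Real.log (q/2)))
  apply tendsto_atTop_mono' _ _ key
  have hmem : Set.Ioo (-q) (-q/2) ∈ 𝓝[>] (-q) :=
    Ioo_mem_nhdsGT_of_mem ⟨le_refl _, by linarith⟩
  filter_upwards [hmem] with x hx
  have h1 : m * Real.log (q/2) ≤ m * Real.log x := by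
    rw [← Real.log_neg_eq_log x]
    exact mul_le_mul_of_nonneg_left
      (Real.log_le_log (by linarith) (by linarith [hx.2])) hm0
  simp only [ff, Function.comp]
  linarith

lemma aux_L2 (hq : 0 < q) (hm0 : 0 < m) :
    Tendsto (ff q η m) (𝓝[<] (0:ℝ)) atBot := by
  have hqne : (0:ℝ) + q ≠ 0 := by simpa using hq.ne'
  have h1 : ContinuousAt (fun y : ℝ => y + q) 0 := by fun_prop
  have h2 : ContinuousAt (fun y : ℝ => Real.log (y + q)) 0 :=
    ContinuousAt.comp (g := Real.log) (Real.continuousAt_log hqne) h1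
  have hc1 : ContinuousAt (fun x : ℝ => q * (x + q)⁻¹ + η * Real.log (x + q)) 0 :=
    (continuousAt_const.mul (h1.inv₀ hqne)).add (continuousAt_const.mul h2)
  have h3 : Tendsto (fun x : ℝ => m * Real.log x) (𝓝[<] (0:ℝ)) atBot := by
    have hlog : Tendsto Real.log (𝓝[≠] (0:ℝ)) atBot := Real.tendsto_log_nhdsNE_zero
    exact (hlog.mono_left (nhdsWithin_mono _ (fun x hx => ne_of_lt hx))).const_mul_atBot hm0
  exact (hc1.continuousWithinAt.tendsto).add_atBot h3

lemma aux_L3 (hq : 0 < q) (hm0 : 0 ≤ m) :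
    Tendsto (ff q η m) (𝓝[<] (-q)) atBot := by
  have comp : Tendsto (fun x : ℝ => -(x + q)) (𝓝[<] (-q)) (𝓝[>] (0:ℝ)) := by
    apply tendsto_nhdsWithin_of_tendsto_nhds_of_eventually_within
    · have h : Tendsto (fun x : ℝ => -(x + q)) (𝓝 (-q)) (𝓝 (-((-q) + q))) :=
        ((continuous_id.add continuous_const).neg).tendsto (-q)
      simpa using h.mono_left nhdsWithin_le_nhds
    · filter_upwards [self_mem_nhdsWithin] with x (hx : x < -q)
      simp only [Set.mem_Ioi]; linarith
  have key := ((tendsto_neg_atTop_atBot.comp ((aux_key q (-η) hq).comp comp)).atBot_add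
    (tendsto_const_nhds (x := m * Real.log (q + 1))))
  apply tendsto_atBot_mono' _ _ key
  have hmem : Set.Ioo (-q - 1) (-q) ∈ 𝓝[<] (-q) :=
    Ioo_mem_nhdsLT_of_mem ⟨by linarith, le_refl _⟩
  filter_upwards [hmem] with x hx
  have h1 : m * Real.log x ≤ m * Real.log (q + 1) := by
    rw [← Real.log_neg_eq_log x]
    exact mul_le_mul_of_nonneg_left
      (Real.log_le_log (by linarith [hx.2]) (by linarith [hx.1])) hm0
  have e1 : -(q * (-(x + q))⁻¹ + -η * Real.log (-(x + q)))
      = q * (x + q)⁻¹ + η * Real.log (x + q) := by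
    rw [inv_neg, Real.log_neg_eq_log]; ring
  simp only [ff, Function.comp, Pi.add_apply, Pi.neg_apply]
  rw [e1]
  linarith

lemma aux_L4 (hq : 0 < q) (hη1 : -1 < η) (hm : m = ((1 - η) / 2) ^ 2) :
    Tendsto (ff q η m) atBot atTop := by
  have hm0 : 0 ≤ m := by rw [hm]; positivity
  have hem : 0 < η + m := by
    have : η + m = ((1 + η) / 2) ^ 2 := by rw [hm]; ring
    rw [this]; exact pow_pos (by linarith) 2
  have h1 : Tendsto (fun x : ℝ => x + q) atBot atBot :=
    tendsto_atBot_add_const_right _ q tendsto_id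
  have h3 : Tendsto (fun x : ℝ => -(x + q)) atBot atTop := tendsto_neg_atBot_atTop.comp h1
  have h2 : Tendsto (fun x : ℝ => q * (x + q)⁻¹) atBot (𝓝 (q * (-0))) := by
    have h := ((tendsto_inv_atTop_zero.comp h3).neg).const_mul q
    refine h.congr (fun x => ?_)
    simp only [Function.comp]
    rw [inv_neg]
    ring
  have h4 : Tendsto (fun x : ℝ => Real.log (-(x + q))) atBot atTop :=
    Real.tendsto_log_atTop.comp h3
  have h6 := h2.add_atTop (h4.const_mul_atTop hem)
  apply tendsto_atTop_mono' _ _ h6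
  filter_upwards [eventually_le_atBot (-q - 1)] with x hx
  have h7 : (η + m) * Real.log (-(x + q)) ≤ η * Real.log (-(x + q)) + m * Real.log (-x) := by
    have := mul_le_mul_of_nonneg_left
      (Real.log_le_log (x := -(x + q)) (y := -x) (by linarith) (by linarith)) hm0
    nlinarith [this]
  simp only [ff]
  rw [show Real.log (x + q) = Real.log (-(x + q)) from (Real.log_neg_eq_log _).symm,
    show Real.log x = Real.log (-x) from (Real.log_neg_eq_log _).symm]
  linarith
lemma aux_ex1 (hq : 0 < q) (hη1 : -1 < η) (hη2 : η < 1)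
    (hm : m = ((1 - η) / 2) ^ 2) (hψ : ψ = q * (1 - η) / (1 + η)) :
    ∃ z₁ ∈ Set.Ioo (-q) 0, ff q η m z₁ = ff q η m ψ := by
  have hm0 : 0 < m := by rw [hm]; exact pow_pos (by linarith) 2
  have hL1 := aux_L1 (q := q) (η := η) (m := m) hq hm0.le
  have hL2 := aux_L2 (q := q) (η := η) (m := m) hq hm0
  have hmem1 : Set.Ioo (-q) 0 ∈ 𝓝[>] (-q) :=
    Ioo_mem_nhdsGT_of_mem ⟨le_refl _, by linarith⟩
  have hmem2 : Set.Ioo (-q) 0 ∈ 𝓝[<] (0:ℝ) :=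
    Ioo_mem_nhdsLT_of_mem ⟨by linarith, le_refl _⟩
  obtain ⟨a, hfa, ha⟩ :=
    ((hL1.eventually_gt_atTop (ff q η m ψ)).and (eventually_mem_set.mpr hmem1)).exists
  obtain ⟨b, hfb, hb⟩ :=
    ((hL2.eventually_lt_atBot (ff q η m ψ)).and (eventually_mem_set.mpr hmem2)).exists
  have hanti := aux_anti1 hq hη1 hη2 hm hψ
  have hab : a < b := by
    by_contra h
    push_neg at h
    rcases h.lt_or_eq with h' | h'
    · have := hanti hb ha h'
      linarith
    · rw [h'] at hfb; linarith
  have hcont : ContinuousOn (ff q η m) (Set.Icc a b) := by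
    intro x hx
    exact (aux_cont x (by nlinarith [hx.2, hb.2]) (by nlinarith [hx.1, ha.1])).continuousWithinAt
  have hsub := intermediate_value_Ioo' hab.le hcont
  obtain ⟨z₁, hz₁, hz₁eq⟩ := hsub ⟨hfb, hfa⟩
  exact ⟨z₁, ⟨by linarith [ha.1, hz₁.1], by linarith [hb.2, hz₁.2]⟩, hz₁eq⟩

lemma aux_ex2 (hq : 0 < q) (hη1 : -1 < η) (hη2 : η < 1)
    (hm : m = ((1 - η) / 2) ^ 2) (hψ : ψ = q * (1 - η) / (1 + η)) :
    ∃ z₂ ∈ Set.Iio (-q), ff q η m z₂ = ff q η m ψ := by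
  have hm0 : 0 < m := by rw [hm]; exact pow_pos (by linarith) 2
  have hL4 := aux_L4 (q := q) (η := η) (m := m) hq hη1 hm
  have hL3 := aux_L3 (q := q) (η := η) (m := m) hq hm0.le
  obtain ⟨a, hfa, ha⟩ :=
    ((hL4.eventually_gt_atTop (ff q η m ψ)).and (eventually_lt_atBot (-q))).exists
  obtain ⟨b, hfb, hb⟩ :=
    ((hL3.eventually_lt_atBot (ff q η m ψ)).and (eventually_mem_set.mpr self_mem_nhdsWithin)).exists
  have hb' : b < -q := hb
  have hanti := aux_anti2 hq hη1 hη2 hm hψ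
  have hab : a < b := by
    by_contra h
    push_neg at h
    rcases h.lt_or_eq with h' | h'
    · have := hanti hb ha h'
      linarith
    · rw [h'] at hfb; linarith
  have hcont : ContinuousOn (ff q η m) (Set.Icc a b) := by
    intro x hx
    exact (aux_cont x (by nlinarith [hx.2]) (by nlinarith [hx.2])).continuousWithinAt
  have hsub := intermediate_value_Ioo' hab.le hcont
  obtain ⟨z₂, hz₂, hz₂eq⟩ := hsub ⟨hfb, hfa⟩
  exact ⟨z₂, by simp only [Set.mem_Iio]; linarith [hz₂.2], hz₂eq⟩
end



/-- The real points of the level set `{Re G_A = G_A(ψ_A)}` (away from the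
singularities `0` and `-q`) are exactly three: `z₂ < -q < z₁ < 0` and `ψ_A`. -/
theorem stmt_9 (q η : ℝ) (hq : q ∈ Set.Ioo (0:ℝ) 1) (hη : η ∈ Set.Ioo (-1:ℝ) 1)
    (m ψ : ℝ) (hm : m = ((1 - η) / 2) ^ 2) (hψ : ψ = q * (1 - η) / (1 + η))
    (H : ℂ → ℝ)
    (hH : H = fun z => ((q : ℂ) / (z + q)).re + η * Real.log ‖z + q‖
      + m * Real.log ‖z‖) :
    ∃ z₁ ∈ Set.Ioo (-q) 0, ∃ z₂ ∈ Set.Iio (-q),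
      {x : ℝ | x ≠ 0 ∧ x ≠ -q ∧ H (x : ℂ) = H (ψ : ℂ)} = {z₂, z₁, ψ} ∧
      z₂ ≠ z₁ ∧ z₂ ≠ ψ ∧ z₁ ≠ ψ := by
  obtain ⟨hq0, hq1⟩ := hq
  obtain ⟨hη1, hη2⟩ := hη
  have hψ0 : 0 < ψ := aux_psi_pos hq0 hη1 hη2 hψ
  have hHf : ∀ x : ℝ, H (x : ℂ) = ff q η m x := by
    intro x
    rw [hH]
    simp only [ff]
    rw [show ((x:ℂ) + q) = (((x + q : ℝ)):ℂ) by push_cast; ring,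
      ← Complex.ofReal_div, Complex.ofReal_re, Complex.norm_real, Complex.norm_real, Real.norm_eq_abs, Real.norm_eq_abs,
      Real.log_abs, Real.log_abs, div_eq_mul_inv]
  obtain ⟨z₁, hz₁mem, hz₁eq⟩ := aux_ex1 hq0 hη1 hη2 hm hψ
  obtain ⟨z₂, hz₂mem, hz₂eq⟩ := aux_ex2 hq0 hη1 hη2 hm hψ
  have hz₂q : z₂ < -q := hz₂mem
  refine ⟨z₁, hz₁mem, z₂, hz₂mem, ?_, by linarith [hz₁mem.1], by linarith, by linarith [hz₁mem.2]⟩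
  have hmono1 := aux_mono1 hq0 hη1 hη2 hm hψ
  have hmono2 := aux_mono2 hq0 hη1 hη2 hm hψ
  have hanti1 := aux_anti1 hq0 hη1 hη2 hm hψ
  have hanti2 := aux_anti2 hq0 hη1 hη2 hm hψ
  ext x
  simp only [Set.mem_setOf_eq, Set.mem_insert_iff, Set.mem_singleton_iff, hHf]
  constructor
  · rintro ⟨hx0, hxq, hfx⟩
    rcases lt_trichotomy x (-q) with h | h | h
    · exact Or.inl (hanti2.injOn h hz₂q (by rw [hfx, hz₂eq]))
    · exact absurd h hxq
    · rcases lt_trichotomy x 0 with h' | h' | h'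
      · exact Or.inr (Or.inl (hanti1.injOn ⟨h, h'⟩ hz₁mem (by rw [hfx, hz₁eq])))
      · exact absurd h' hx0
      · rcases lt_trichotomy x ψ with h'' | h'' | h''
        · have := hmono1 ⟨h', h''.le⟩ ⟨hψ0, le_refl _⟩ h''
          exact absurd hfx (ne_of_lt this)
        · exact Or.inr (Or.inr h'')
        · have := hmono2 (Set.mem_Ici.mpr (le_refl ψ)) h''.le h''
          exact absurd hfx (ne_of_gt this)
  · rintro (rfl | rfl | rfl)
    · exact ⟨by linarith, by linarith, hz₂eq⟩
    · exact ⟨ne_of_lt hz₁mem.2, ne_of_gt hz₁mem.1, hz₁eq⟩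
    · exact ⟨ne_of_gt hψ0, by linarith, rfl⟩
end

section
/- Let z₀ ∈ ℂ with Im z₀ ≠ 0 and let ω ∈ ℝ with ω ≠ 0. Then the function t ↦ H_A(t·z₀) (from ℝ to ℝ) has derivative at ω equal to ((η+1)²/(4·ω·|ω + q·z₀^{−1}|⁴)) · Re( (ω − ψ_A·z₀^{−1})² · (ω + q·(conj z₀)^{−1})² ). -/
open Complex

/-- The derivative of `t ↦ H_A(t z₀)` along a non-real line through the origin. -/
theorem stmt_10 (q η : ℝ) (hq : q ∈ Set.Ioo (0:ℝ) 1) (hη : η ∈ Set.Ioo (-1:ℝ) 1)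
    (m ψ : ℝ) (hm : m = ((1 - η) / 2) ^ 2) (hψ : ψ = q * (1 - η) / (1 + η))
    (H : ℂ → ℝ)
    (hH : H = fun z => ((q : ℂ) / (z + q)).re + η * Real.log ‖z + q‖
      + m * Real.log ‖z‖)
    (z₀ : ℂ) (hz₀ : z₀.im ≠ 0) (ω : ℝ) (hω : ω ≠ 0) :
    HasDerivAt (fun t : ℝ => H ((t : ℂ) * z₀))
      ((η + 1) ^ 2 / (4 * ω * ‖(ω : ℂ) + (q : ℂ) * z₀⁻¹‖ ^ 4) *
        ((((ω : ℂ) - (ψ : ℂ) * z₀⁻¹) ^ 2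
          * ((ω : ℂ) + (q : ℂ) * ((starRingEnd ℂ) z₀)⁻¹) ^ 2).re)) ω := by
  have hz0 : z₀ ≠ 0 := fun h => hz₀ (by simp [h])
  have hωC : (ω : ℂ) ≠ 0 := by exact_mod_cast hω
  have hη1 : (1:ℝ) + η ≠ 0 := by nlinarith [hη.1]
  have hη1C : (1:ℂ) + (η:ℂ) ≠ 0 := by
    intro h; exact hη1 (by exact_mod_cast h)
  set w : ℂ := (ω:ℂ) * z₀ with hw
  have hwim : (w + q).im ≠ 0 := by
    simp only [hw, Complex.add_im, Complex.mul_im, Complex.ofReal_re, Complex.ofReal_im,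
      zero_mul, add_zero]
    simpa using mul_ne_zero hω hz₀
  have hwq : w + (q:ℂ) ≠ 0 := fun h => hwim (by rw [h]; simp)
  have hwne : w ≠ 0 := mul_ne_zero hωC hz0
  have hline : HasDerivAt (fun t : ℝ => (t:ℂ) * z₀) z₀ ω := by
    simpa using (Complex.ofRealCLM.hasDerivAt (x := ω)).mul_const z₀
  have hf : HasDerivAt (fun t : ℝ => (t:ℂ) * z₀ + q) z₀ ω := hline.add_const _
  have h1 : HasDerivAt (fun t : ℝ => (q:ℂ) / ((t:ℂ) * z₀ + q))
      ((q:ℂ) * (-((w + q) ^ 2)⁻¹ * z₀)) ω := by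
    have := ((hasDerivAt_inv (show ((ω:ℂ) * z₀ + (q:ℂ)) ≠ 0 from hwq)).comp ω hf).const_mul (q:ℂ)
    simpa [div_eq_mul_inv] using this
  have hmem1 : w + (q:ℂ) ∈ Complex.slitPlane := Complex.mem_slitPlane_iff.2 (Or.inr hwim)
  have h2 : HasDerivAt (fun t : ℝ => Complex.log ((t:ℂ) * z₀ + q)) ((w + q)⁻¹ * z₀) ω :=
    by have hl := Complex.hasDerivAt_log hmem1; exact hl.comp ω hf
  have hmem2 : w ∈ Complex.slitPlane := by
    refine Complex.mem_slitPlane_iff.2 (Or.inr ?_)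
    simp only [hw, Complex.mul_im, Complex.ofReal_re, Complex.ofReal_im, zero_mul, add_zero]
    simpa using mul_ne_zero hω hz₀
  have h3 : HasDerivAt (fun t : ℝ => Complex.log ((t:ℂ) * z₀)) (w⁻¹ * z₀) ω :=
    by have hl := Complex.hasDerivAt_log hmem2; exact hl.comp ω hline
  set D : ℂ := (q:ℂ) * (-((w + q) ^ 2)⁻¹ * z₀) + (η:ℂ) * ((w + q)⁻¹ * z₀) + (m:ℂ) * (w⁻¹ * z₀)
    with hD
  have hg : HasDerivAt (fun t : ℝ => (q:ℂ) / ((t:ℂ) * z₀ + q)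
      + (η:ℂ) * Complex.log ((t:ℂ) * z₀ + q) + (m:ℂ) * Complex.log ((t:ℂ) * z₀)) D ω :=
    (h1.add (h2.const_mul _)).add (h3.const_mul _)
  have hre : HasDerivAt (fun t : ℝ => ((q:ℂ) / ((t:ℂ) * z₀ + q)
      + (η:ℂ) * Complex.log ((t:ℂ) * z₀ + q) + (m:ℂ) * Complex.log ((t:ℂ) * z₀)).re) D.re ω :=
    (Complex.reCLM.hasFDerivAt.comp_hasDerivAt ω hg)
  have hfun : (fun t : ℝ => H ((t : ℂ) * z₀)) = fun t : ℝ => ((q:ℂ) / ((t:ℂ) * z₀ + q)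
      + (η:ℂ) * Complex.log ((t:ℂ) * z₀ + q) + (m:ℂ) * Complex.log ((t:ℂ) * z₀)).re := by
    funext t
    simp [hH, Complex.add_re, Complex.log_re, Complex.re_ofReal_mul]
  rw [hfun]
  -- identify the derivative value
  set Y : ℂ := (w - ψ) ^ 2 / (w + q) ^ 2 with hY
  have key : D = (((η + 1) ^ 2 / (4 * ω) : ℝ) : ℂ) * Y := by
    subst hm hψ
    rw [hD, hY]
    push_cast
    field_simp
    ring
  set c : ℂ := (ω : ℂ) + (q : ℂ) * z₀⁻¹ with hc
  have hcz : c * z₀ = w + q := by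
    rw [hc, hw]; field_simp
  have hcne : c ≠ 0 := by
    intro h; rw [h, zero_mul] at hcz; exact hwq hcz.symm
  have hcc : (starRingEnd ℂ) c = (ω : ℂ) + (q : ℂ) * ((starRingEnd ℂ) z₀)⁻¹ := by
    simp [hc, map_add, map_mul, Complex.conj_ofReal]
  have hnum : ((ω : ℂ) - (ψ : ℂ) * z₀⁻¹) * z₀ = w - ψ := by
    rw [hw]; field_simp
  have hYq : Y = ((ω : ℂ) - (ψ : ℂ) * z₀⁻¹) ^ 2 / c ^ 2 := by
    rw [hY, ← hcz, ← hnum, mul_pow, mul_pow, mul_div_mul_right _ _ (pow_ne_zero 2 hz0)]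
  have habs : ((‖c‖ ^ 2 : ℝ) : ℂ) = c * (starRingEnd ℂ) c := by
    rw [Complex.mul_conj, Complex.sq_norm]
  have hX : (((ω : ℂ) - (ψ : ℂ) * z₀⁻¹) ^ 2 * ((ω : ℂ) + (q : ℂ) * ((starRingEnd ℂ) z₀)⁻¹) ^ 2)
      = Y * (((‖c‖ ^ 4 : ℝ)) : ℂ) := by
    rw [← hcc, hYq]
    have h4 : ((‖c‖ ^ 4 : ℝ) : ℂ) = (c * (starRingEnd ℂ) c) ^ 2 := by
      rw [show ((‖c‖ ^ 4 : ℝ) : ℂ) = ((‖c‖ ^ 2 : ℝ) : ℂ) ^ 2 by push_cast; ring,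
        habs]
    rw [h4]
    field_simp
  have hA : (0:ℝ) < ‖c‖ := norm_pos_iff.mpr hcne
  have hval : (η + 1) ^ 2 / (4 * ω * (‖(ω : ℂ) + (q : ℂ) * z₀⁻¹‖) ^ 4) *
        ((((ω : ℂ) - (ψ : ℂ) * z₀⁻¹) ^ 2
          * ((ω : ℂ) + (q : ℂ) * ((starRingEnd ℂ) z₀)⁻¹) ^ 2).re) = D.re := by
    rw [key, Complex.re_ofReal_mul, ← hc, hX]
    rw [show (Y * (((‖c‖ ^ 4 : ℝ)) : ℂ)).re = Y.re * ‖c‖ ^ 4 by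
      rw [mul_comm, Complex.re_ofReal_mul, mul_comm]]
    have h4 : (‖c‖) ^ 4 ≠ 0 := by positivity
    field_simp
  rw [hval]
  exact hre
end

section
/- Fix q ∈ (0,1), β > 0, f > 0, an integer m ≥ 1, and real numbers p, r_1, …, r_m. Let ψ, β_1, …, β_m : (0,∞) → ℝ be functions such that T^{1/3}·(ψ(T) − qβ) → p and T^{1/3}·(β_k(T) − β) → r_k as T → ∞, for each k ∈ {1,…,m}. Set σ(T) = ψ(T)/(f·T^{1/3}) and c_k = f·p/(qβ) − f·r_k/β. Then for all fixed ŵ, v̂ ∈ ℂ with ŵ + c_k ≠ 0 for every k ∈ {1,…,m}, one has lim_{T→∞} ∏_{k=1}^m ( (q^{−1}·β_k(T)^{−1}·(ψ(T) + σ(T)·v̂) ; q)_∞ / (q^{−1}·β_k(T)^{−1}·(ψ(T) + σ(T)·ŵ) ; q)_∞ ) = ∏_{k=1}^m (v̂ + c_k)/(ŵ + c_k). -/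
open Filter Topology

/-- The infinite q-Pochhammer symbol `(a; q)_∞ = ∏_{n=0}^∞ (1 − a qⁿ)`. -/
noncomputable def qPochInf (a : ℂ) (q : ℝ) : ℂ := ∏' n : ℕ, (1 - a * (q : ℂ) ^ n)

namespace BBP

variable {q : ℝ}

/-- Bound on the log of the shifted factors. -/
lemma log_bound (hq0 : 0 < q) (hq1 : q < 1) {a : ℂ}
    (ha : ‖a‖ ≤ (1 + q⁻¹) / 2) (n : ℕ) :
    ‖Complex.log (1 - a * (q : ℂ) ^ (n + 1))‖ ≤
      ((1 + q) / 2 * ((1 + q) / 2 * (1 - (1 + q) / 2)⁻¹ / 2 + 1)) * q ^ n := by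
  set s : ℝ := (1 + q) / 2 with hs
  have hs0 : 0 < s := by positivity
  have hs1 : s < 1 := by rw [hs]; linarith
  set z : ℂ := -(a * (q : ℂ) ^ (n + 1)) with hz
  have hqn : (0:ℝ) < q ^ n := by positivity
  have hzn : ‖z‖ ≤ s * q ^ n := by
    rw [hz, norm_neg, norm_mul, norm_pow, Complex.norm_real, Real.norm_eq_abs,
      abs_of_pos hq0, pow_succ]
    calc ‖a‖ * (q ^ n * q) ≤ (1 + q⁻¹) / 2 * (q ^ n * q) := by
          apply mul_le_mul_of_nonneg_right ha; positivity
      _ = s * q ^ n := by field_simp [hs]; ring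
  have hzs : ‖z‖ ≤ s := by
    calc ‖z‖ ≤ s * q ^ n := hzn
      _ ≤ s * 1 := by
          apply mul_le_mul_of_nonneg_left _ hs0.le
          exact pow_le_one₀ hq0.le hq1.le
      _ = s := mul_one s
  have hz1 : ‖z‖ < 1 := lt_of_le_of_lt hzs hs1
  have key : (1 : ℂ) - a * (q : ℂ) ^ (n + 1) = 1 + z := by rw [hz]; ring
  rw [key]
  calc ‖Complex.log (1 + z)‖ ≤ ‖z‖ ^ 2 * (1 - ‖z‖)⁻¹ / 2 + ‖z‖ :=
        Complex.norm_log_one_add_le hz1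
    _ ≤ (s * q ^ n) * s * (1 - s)⁻¹ / 2 + s * q ^ n := by
        have h1 : ‖z‖ ^ 2 ≤ (s * q ^ n) * s := by
          rw [sq]; exact mul_le_mul hzn hzs (norm_nonneg z) (by positivity)
        have h2 : (1 - ‖z‖)⁻¹ ≤ (1 - s)⁻¹ := by
          apply inv_anti₀ (by linarith) (by linarith)
        have h3 : (0:ℝ) ≤ (1 - ‖z‖)⁻¹ := by
          apply inv_nonneg.2; linarith
        have h4 : ‖z‖ ^ 2 * (1 - ‖z‖)⁻¹ ≤ (s * q ^ n) * s * (1 - s)⁻¹ := by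
          calc ‖z‖ ^ 2 * (1 - ‖z‖)⁻¹ ≤ (s * q ^ n * s) * (1 - s)⁻¹ :=
                mul_le_mul h1 h2 h3 (by positivity)
            _ = (s * q ^ n) * s * (1 - s)⁻¹ := by ring
        linarith
    _ = (s * (s * (1 - s)⁻¹ / 2 + 1)) * q ^ n := by ring

lemma factor_ne (hq0 : 0 < q) (hq1 : q < 1) {a : ℂ}
    (ha : ‖a‖ ≤ (1 + q⁻¹) / 2) (n : ℕ) : (1 : ℂ) - a * (q : ℂ) ^ (n + 1) ≠ 0 := by
  intro h
  have h1 : a * (q : ℂ) ^ (n + 1) = 1 := by linear_combination -h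
  have h2 : ‖a * (q : ℂ) ^ (n + 1)‖ = 1 := by rw [h1, norm_one]
  have h3 : ‖a * (q : ℂ) ^ (n + 1)‖ < 1 := by
    rw [norm_mul, norm_pow, Complex.norm_real, Real.norm_eq_abs, abs_of_pos hq0]
    calc ‖a‖ * q ^ (n + 1) ≤ (1 + q⁻¹) / 2 * q ^ (n + 1) := by
          apply mul_le_mul_of_nonneg_right ha; positivity
      _ ≤ (1 + q⁻¹) / 2 * (q * 1) := by
          apply mul_le_mul_of_nonneg_left _ (by positivity)
          rw [pow_succ, mul_comm]
          apply mul_le_mul_of_nonneg_left (pow_le_one₀ hq0.le hq1.le) hq0.le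
      _ = (1 + q) / 2 := by field_simp; ring
      _ < 1 := by linarith
  rw [h2] at h3; exact lt_irrefl 1 h3

lemma summable_logs (hq0 : 0 < q) (hq1 : q < 1) {a : ℂ}
    (ha : ‖a‖ ≤ (1 + q⁻¹) / 2) :
    Summable fun n : ℕ => Complex.log (1 - a * (q : ℂ) ^ (n + 1)) := by
  apply Summable.of_norm_bounded
    (g := fun n : ℕ => ((1 + q) / 2 * ((1 + q) / 2 * (1 - (1 + q) / 2)⁻¹ / 2 + 1)) * q ^ n)
    ((summable_geometric_of_lt_one hq0.le hq1).mul_left _)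
  exact log_bound hq0 hq1 ha

lemma hasProd_exp (hq0 : 0 < q) (hq1 : q < 1) {a : ℂ}
    (ha : ‖a‖ ≤ (1 + q⁻¹) / 2) :
    HasProd (fun n : ℕ => (1 : ℂ) - a * (q : ℂ) ^ (n + 1))
      (Complex.exp (∑' n : ℕ, Complex.log (1 - a * (q : ℂ) ^ (n + 1)))) := by
  have h := (summable_logs hq0 hq1 ha).hasSum.cexp
  have hfun : (Complex.exp ∘ fun n : ℕ => Complex.log (1 - a * (q : ℂ) ^ (n + 1))) =
      fun n : ℕ => (1 : ℂ) - a * (q : ℂ) ^ (n + 1) :=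
    funext fun n => Complex.exp_log (factor_ne hq0 hq1 ha n)
  exact hfun ▸ h

lemma tprod_ne (hq0 : 0 < q) (hq1 : q < 1) {a : ℂ}
    (ha : ‖a‖ ≤ (1 + q⁻¹) / 2) :
    (∏' n : ℕ, ((1 : ℂ) - a * (q : ℂ) ^ (n + 1))) ≠ 0 := by
  rw [(hasProd_exp hq0 hq1 ha).tprod_eq]
  exact Complex.exp_ne_zero _

lemma continuousAt_H (hq0 : 0 < q) (hq1 : q < 1) :
    ContinuousAt (fun a : ℂ => ∏' n : ℕ, ((1 : ℂ) - a * (q : ℂ) ^ (n + 1))) 1 := by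
  set s : Set ℂ := Metric.closedBall 0 ((1 + q⁻¹) / 2) with hsdef
  have hmem : ∀ a ∈ s, ‖a‖ ≤ (1 + q⁻¹) / 2 := by
    intro a haa
    simpa [hsdef, Metric.mem_closedBall, dist_zero_right] using haa
  have hcont : ContinuousOn
      (fun a : ℂ => Complex.exp (∑' n : ℕ, Complex.log (1 - a * (q : ℂ) ^ (n + 1)))) s := by
    apply Complex.continuous_exp.comp_continuousOn
    apply continuousOn_tsum (u := fun n : ℕ =>
      ((1 + q) / 2 * ((1 + q) / 2 * (1 - (1 + q) / 2)⁻¹ / 2 + 1)) * q ^ n)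
    · intro n
      apply ContinuousOn.clog
      · fun_prop
      · intro a haa
        rw [Complex.mem_slitPlane_iff]
        left
        have h1 : ‖a * (q : ℂ) ^ (n + 1)‖ < 1 := by
          rw [norm_mul, norm_pow, Complex.norm_real, Real.norm_eq_abs, abs_of_pos hq0]
          calc ‖a‖ * q ^ (n + 1) ≤ (1 + q⁻¹) / 2 * q ^ (n + 1) := by
                apply mul_le_mul_of_nonneg_right (hmem a haa); positivity
            _ ≤ (1 + q⁻¹) / 2 * (q * 1) := by
                apply mul_le_mul_of_nonneg_left _ (by positivity)
                rw [pow_succ, mul_comm]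
                apply mul_le_mul_of_nonneg_left (pow_le_one₀ hq0.le hq1.le) hq0.le
            _ = (1 + q) / 2 := by field_simp; ring
            _ < 1 := by linarith
        have h2 : (a * (q : ℂ) ^ (n + 1)).re ≤ ‖a * (q : ℂ) ^ (n + 1)‖ :=
          Complex.re_le_norm _
        simp only [Complex.sub_re, Complex.one_re]
        linarith
    · exact (summable_geometric_of_lt_one hq0.le hq1).mul_left _
    · intro n a haa
      exact log_bound hq0 hq1 (hmem a haa) n
  have heq : Set.EqOn
      (fun a : ℂ => ∏' n : ℕ, ((1 : ℂ) - a * (q : ℂ) ^ (n + 1)))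
      (fun a : ℂ => Complex.exp (∑' n : ℕ, Complex.log (1 - a * (q : ℂ) ^ (n + 1)))) s := by
    intro a haa
    exact (hasProd_exp hq0 hq1 (hmem a haa)).tprod_eq
  have h1R : (1 : ℝ) < (1 + q⁻¹) / 2 := by
    have : 1 < q⁻¹ := (one_lt_inv₀ hq0).2 hq1
    linarith
  have hnhds : s ∈ 𝓝 (1 : ℂ) := by
    apply Metric.closedBall_mem_nhds_of_mem
    simpa [Metric.mem_ball, dist_zero_right] using h1R
  exact ((hcont.congr heq).continuousAt hnhds)

end BBP


set_option maxHeartbeats 2000000 in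
/-- Limit of ratios of q-Pochhammer symbols producing the factors
`∏ (v̂ + c_k)/(ŵ + c_k)` of the Baik–Ben-Arous–Péché kernel. -/
theorem stmt_14 (q β f : ℝ) (hq : q ∈ Set.Ioo (0:ℝ) 1) (hβ : 0 < β) (hf : 0 < f)
    (m : ℕ) (hm : 1 ≤ m) (p : ℝ) (r : Fin m → ℝ)
    (ψ : ℝ → ℝ) (βk : Fin m → ℝ → ℝ)
    (hψ : Tendsto (fun T : ℝ => T ^ ((1 : ℝ) / 3) * (ψ T - q * β)) atTop (𝓝 p))
    (hβk : ∀ k, Tendsto (fun T : ℝ => T ^ ((1 : ℝ) / 3) * (βk k T - β)) atTop (𝓝 (r k)))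
    (σ : ℝ → ℝ) (hσ : σ = fun T => ψ T / (f * T ^ ((1 : ℝ) / 3)))
    (c : Fin m → ℝ) (hc : ∀ k, c k = f * p / (q * β) - f * r k / β)
    (what vhat : ℂ) (hwhat : ∀ k, what + (c k : ℂ) ≠ 0) :
    Tendsto (fun T : ℝ =>
        ∏ k : Fin m,
          qPochInf ((q : ℂ)⁻¹ * ((βk k T : ℝ) : ℂ)⁻¹ * (((ψ T : ℝ) : ℂ) + ((σ T : ℝ) : ℂ) * vhat)) q /
          qPochInf ((q : ℂ)⁻¹ * ((βk k T : ℝ) : ℂ)⁻¹ * (((ψ T : ℝ) : ℂ) + ((σ T : ℝ) : ℂ) * what)) q)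
      atTop (𝓝 (∏ k : Fin m, (vhat + (c k : ℂ)) / (what + (c k : ℂ)))) := by
  obtain ⟨hq0, hq1⟩ := hq
  have hq0' : (q:ℂ) ≠ 0 := by exact_mod_cast hq0.ne'
  have hβ' : (β:ℂ) ≠ 0 := by exact_mod_cast hβ.ne'
  have hf' : (f:ℂ) ≠ 0 := by exact_mod_cast hf.ne'
  set t : ℝ → ℝ := fun T => T ^ ((1:ℝ)/3) with htdef
  have htt : Tendsto t atTop atTop := tendsto_rpow_atTop (by norm_num)
  have htinv : Tendsto (fun T => (t T)⁻¹) atTop (𝓝 0) := tendsto_inv_atTop_zero.comp htt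
  have hβlim : ∀ k, Tendsto (βk k) atTop (𝓝 β) := by
    intro k
    have h1 : Tendsto (fun T => t T * (βk k T - β) * (t T)⁻¹ + β) atTop (𝓝 (r k * 0 + β)) :=
      ((hβk k).mul htinv).add tendsto_const_nhds
    rw [show r k * 0 + β = β by ring] at h1
    apply h1.congr'
    filter_upwards [eventually_gt_atTop (0:ℝ)] with T hT
    have ht0 : t T ≠ 0 := (Real.rpow_pos_of_pos hT _).ne'
    field_simp
    ring
  have hψlim : Tendsto ψ atTop (𝓝 (q * β)) := by
    have h1 : Tendsto (fun T => t T * (ψ T - q * β) * (t T)⁻¹ + q * β) atTop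
        (𝓝 (p * 0 + q * β)) := (hψ.mul htinv).add tendsto_const_nhds
    rw [show p * 0 + q * β = q * β by ring] at h1
    apply h1.congr'
    filter_upwards [eventually_gt_atTop (0:ℝ)] with T hT
    have ht0 : t T ≠ 0 := (Real.rpow_pos_of_pos hT _).ne'
    field_simp
    ring
  have hσlim : Tendsto σ atTop (𝓝 0) := by
    have h2 : Tendsto (fun T => f * t T) atTop atTop := htt.const_mul_atTop hf
    have h3 : Tendsto (fun T => ψ T * (f * t T)⁻¹) atTop (𝓝 (q * β * 0)) :=
      hψlim.mul (tendsto_inv_atTop_zero.comp h2)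
    rw [show q * β * 0 = 0 by ring] at h3
    apply h3.congr
    intro T
    rw [hσ]
    simp [div_eq_mul_inv, htdef]
  set R : ℝ := (1 + q⁻¹) / 2 with hRdef
  have hR1 : (1:ℝ) < R := by
    have : 1 < q⁻¹ := (one_lt_inv₀ hq0).2 hq1
    rw [hRdef]; linarith
  set A : Fin m → ℂ → ℝ → ℂ := fun k z T =>
    (q : ℂ)⁻¹ * ((βk k T : ℝ) : ℂ)⁻¹ * (((ψ T : ℝ) : ℂ) + ((σ T : ℝ) : ℂ) * z) with hAdef
  have hA : ∀ k z, Tendsto (A k z) atTop (𝓝 1) := by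
    intro k z
    have hb : Tendsto (fun T => ((βk k T : ℝ) : ℂ)) atTop (𝓝 (β : ℂ)) :=
      (Complex.continuous_ofReal.tendsto β).comp (hβlim k)
    have hp : Tendsto (fun T => ((ψ T : ℝ) : ℂ)) atTop (𝓝 ((q * β : ℝ) : ℂ)) :=
      (Complex.continuous_ofReal.tendsto _).comp hψlim
    have hs : Tendsto (fun T => ((σ T : ℝ) : ℂ)) atTop (𝓝 ((0 : ℝ) : ℂ)) :=
      (Complex.continuous_ofReal.tendsto _).comp hσlim
    have h1 : Tendsto (A k z) atTop
        (𝓝 ((q : ℂ)⁻¹ * (β : ℂ)⁻¹ * (((q * β : ℝ) : ℂ) + ((0 : ℝ) : ℂ) * z))) :=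
      (tendsto_const_nhds.mul (hb.inv₀ hβ')).mul (hp.add (hs.mul tendsto_const_nhds))
    have h2 : (q : ℂ)⁻¹ * (β : ℂ)⁻¹ * (((q * β : ℝ) : ℂ) + ((0 : ℝ) : ℂ) * z) = 1 := by
      push_cast; field_simp
      ring
    rwa [h2] at h1
  set N : Fin m → ℂ → ℝ → ℂ := fun k z T =>
    ((t T * (q * βk k T - ψ T) : ℝ) : ℂ) - ((ψ T / f : ℝ) : ℂ) * z with hNdef
  set L : Fin m → ℂ → ℂ := fun k z =>
    ((q * r k - p : ℝ) : ℂ) - ((q * β / f : ℝ) : ℂ) * z with hLdef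
  have hN : ∀ k z, Tendsto (N k z) atTop (𝓝 (L k z)) := by
    intro k z
    have hreal : Tendsto (fun T => t T * (q * βk k T - ψ T)) atTop (𝓝 (q * r k - p)) := by
      have h1 : Tendsto (fun T => q * (t T * (βk k T - β)) - t T * (ψ T - q * β)) atTop
          (𝓝 (q * r k - p)) := ((hβk k).const_mul q).sub hψ
      exact h1.congr fun T => by ring
    have h2 : Tendsto (fun T => ψ T / f) atTop (𝓝 (q * β / f)) := hψlim.div_const f
    exact ((Complex.continuous_ofReal.tendsto _).comp hreal).sub
      (((Complex.continuous_ofReal.tendsto _).comp h2).mul tendsto_const_nhds)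
  have hLfact : ∀ k z, L k z = ((-(q * β / f) : ℝ) : ℂ) * (z + (c k : ℂ)) := by
    intro k z
    rw [hLdef, hc k]
    push_cast
    field_simp
    ring
  have hLwne : ∀ k, L k what ≠ 0 := by
    intro k
    rw [hLfact k what]
    apply mul_ne_zero _ (hwhat k)
    simp only [ne_eq, Complex.ofReal_eq_zero, neg_eq_zero]
    positivity
  have hratio : ∀ k, Tendsto (fun T => N k vhat T / N k what T) atTop
      (𝓝 ((vhat + (c k : ℂ)) / (what + (c k : ℂ)))) := by
    intro k
    have h1 := (hN k vhat).div (hN k what) (hLwne k)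
    have h2 : L k vhat / L k what = (vhat + (c k : ℂ)) / (what + (c k : ℂ)) := by
      rw [hLfact k vhat, hLfact k what]
      apply mul_div_mul_left
      simp only [ne_eq, Complex.ofReal_eq_zero, neg_eq_zero]
      positivity
    rwa [h2] at h1
  have heqv : ∀ k, ∀ᶠ T in atTop,
      (1 - A k vhat T) / (1 - A k what T) = N k vhat T / N k what T := by
    intro k
    filter_upwards [eventually_gt_atTop (0:ℝ), (hβlim k).eventually_ne hβ.ne'] with T hT hbne
    have ht0 : (0:ℝ) < t T := Real.rpow_pos_of_pos hT _
    have ht' : ((t T : ℝ) : ℂ) ≠ 0 := by exact_mod_cast ht0.ne'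
    have hb' : ((βk k T : ℝ) : ℂ) ≠ 0 := by exact_mod_cast hbne
    have hstep : ∀ z : ℂ, 1 - A k z T
        = N k z T / (((t T : ℝ) : ℂ) * (q : ℂ) * ((βk k T : ℝ) : ℂ)) := by
      intro z
      have hσT : σ T = ψ T / (f * t T) := by rw [hσ]
      simp only [hAdef, hNdef]
      rw [hσT]
      push_cast
      field_simp
      ring
    have hd : ((t T : ℝ) : ℂ) * (q : ℂ) * ((βk k T : ℝ) : ℂ) ≠ 0 :=
      mul_ne_zero (mul_ne_zero ht' hq0') hb'
    rw [hstep vhat, hstep what, div_div_div_comm, div_self hd, div_one]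
  have hH1ne : (∏' n : ℕ, ((1:ℂ) - 1 * (q:ℂ) ^ (n + 1))) ≠ 0 :=
    BBP.tprod_ne hq0 hq1 (by rw [norm_one]; exact hR1.le)
  have hsplit : ∀ a : ℂ, ‖a‖ ≤ R →
      qPochInf a q = (1 - a) * ∏' n : ℕ, ((1:ℂ) - a * (q:ℂ) ^ (n + 1)) := by
    intro a ha
    rw [qPochInf, tprod_eq_zero_mul' (BBP.hasProd_exp hq0 hq1 ha).multipliable]
    norm_num
  have hterm : ∀ k, Tendsto
      (fun T => qPochInf (A k vhat T) q / qPochInf (A k what T) q)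
      atTop (𝓝 ((vhat + (c k : ℂ)) / (what + (c k : ℂ)))) := by
    intro k
    have hHv : Tendsto (fun T => ∏' n : ℕ, ((1:ℂ) - A k vhat T * (q:ℂ) ^ (n + 1))) atTop
        (𝓝 (∏' n : ℕ, ((1:ℂ) - 1 * (q:ℂ) ^ (n + 1)))) :=
      (BBP.continuousAt_H hq0 hq1).tendsto.comp (hA k vhat)
    have hHw : Tendsto (fun T => ∏' n : ℕ, ((1:ℂ) - A k what T * (q:ℂ) ^ (n + 1))) atTop
        (𝓝 (∏' n : ℕ, ((1:ℂ) - 1 * (q:ℂ) ^ (n + 1)))) :=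
      (BBP.continuousAt_H hq0 hq1).tendsto.comp (hA k what)
    have t1 : Tendsto (fun T => (1 - A k vhat T) / (1 - A k what T)) atTop
        (𝓝 ((vhat + (c k : ℂ)) / (what + (c k : ℂ)))) :=
      (hratio k).congr' ((heqv k).mono fun T h => h.symm)
    have t2 := hHv.div hHw hH1ne
    rw [div_self hH1ne] at t2
    have t3 := t1.mul t2
    rw [mul_one] at t3
    apply t3.congr'
    have hnv : ∀ᶠ T in atTop, ‖A k vhat T‖ ≤ R := by
      have := ((hA k vhat).norm).eventually_lt_const (v := ‖(1:ℂ)‖) (by rw [norm_one]; exact hR1)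
      exact this.mono fun T h => h.le
    have hnw : ∀ᶠ T in atTop, ‖A k what T‖ ≤ R := by
      have := ((hA k what).norm).eventually_lt_const (v := ‖(1:ℂ)‖) (by rw [norm_one]; exact hR1)
      exact this.mono fun T h => h.le
    filter_upwards [hnv, hnw] with T hv hw
    rw [hsplit _ hv, hsplit _ hw, mul_div_mul_comm]
    rfl
  exact tendsto_finset_prod (Finset.univ : Finset (Fin m)) (fun k _ => hterm k)
end

section
/- There exist real numbers z₁ ∈ (ϑ_A, ∞), z₂ ∈ (−q, 0), and z₃ ∈ (−∞, −q) such that the set {x ∈ ℝ : x ≠ 0, x ≠ −q, and H'_A(x) = H'_A(ψ)} consists of exactly the four distinct points z₃, z₂, ψ, and z₁. -/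
open Complex

open Filter Set Topology in
set_option maxHeartbeats 2000000 in
/-- In the Gaussian-fluctuation regime of the ASEP, the real points of the level
set `{Re G_A = G_A(ψ)}` (away from the singularities `0` and `-q`) are exactly
four: `z₃ < -q < z₂ < 0 < ψ`, and `z₁ > ϑ_A`. -/
theorem stmt_16 (q b η : ℝ) (hq : q ∈ Set.Ioo (0:ℝ) 1) (hb : b ∈ Set.Ioo (0:ℝ) 1)
    (hη : η ∈ Set.Ioo (-b) (1 - 2 * b))
    (m' ψ ϑ : ℝ) (hm : m' = b * (1 - b) - b * η) (hψ : ψ = q * b / (1 - b))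
    (hϑ : ϑ = q * (1 - b - η) / (b + η))
    (H : ℂ → ℝ)
    (hH : H = fun z => ((q : ℂ) / (z + q)).re + η * Real.log ‖z + q‖
      + m' * Real.log ‖z‖) :
    ∃ z₁ ∈ Set.Ioi ϑ, ∃ z₂ ∈ Set.Ioo (-q) 0, ∃ z₃ ∈ Set.Iio (-q),
      {x : ℝ | x ≠ 0 ∧ x ≠ -q ∧ H (x : ℂ) = H (ψ : ℂ)} = {z₃, z₂, ψ, z₁} ∧
      z₃ ≠ z₂ ∧ z₃ ≠ ψ ∧ z₃ ≠ z₁ ∧ z₂ ≠ ψ ∧ z₂ ≠ z₁ ∧ ψ ≠ z₁ := by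
  obtain ⟨hq0, hq1⟩ := hq
  obtain ⟨hb0, hb1⟩ := hb
  obtain ⟨hη1, hη2⟩ := hη
  have hbη : 0 < b + η := by linarith
  have h1b : 0 < 1 - b := by linarith
  have hm0 : 0 < m' := by rw [hm]; nlinarith
  have hsum : 0 < η + m' := by rw [hm]; nlinarith
  have hψ0 : 0 < ψ := by rw [hψ]; positivity
  have hϑ0 : 0 < ϑ := by
    rw [hϑ]; apply div_pos (by nlinarith) hbη
  have hψϑ : ψ < ϑ := by
    rw [hψ, hϑ, div_lt_div_iff₀ h1b hbη]; nlinarith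
  -- the real trace of H
  set h : ℝ → ℝ := fun x => q / (x + q) + η * Real.log (x + q) + m' * Real.log x with hdef
  have hHh : ∀ x : ℝ, H (x : ℂ) = h x := by
    intro x
    have hxq : (x : ℂ) + q = ((x + q : ℝ) : ℂ) := by push_cast; ring
    rw [hH]
    simp only [hxq, ← Complex.ofReal_div, Complex.ofReal_re, Complex.norm_real, Real.norm_eq_abs,
      Real.log_abs, hdef]
  -- derivative
  have hderiv : ∀ x : ℝ, x ≠ 0 → x + q ≠ 0 →
      HasDerivAt h (((η + m') * (x - ψ) * (x - ϑ)) / (x * (x + q) ^ 2)) x := by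
    intro x hx hx'
    have d1 : HasDerivAt (fun y : ℝ => y + q) 1 x := (hasDerivAt_id x).add_const q
    have h1 : HasDerivAt (fun y : ℝ => q / (y + q))
        ((0 * (x + q) - q * 1) / (x + q) ^ 2) x := (hasDerivAt_const x q).div d1 hx'
    have h2 : HasDerivAt (fun y : ℝ => Real.log (y + q)) ((x + q)⁻¹ * 1) x := by
      have := (Real.hasDerivAt_log hx').comp x d1; exact this
    have h3 : HasDerivAt (fun y : ℝ => Real.log y) x⁻¹ x := Real.hasDerivAt_log hx
    have htot := (h1.add (h2.const_mul η)).add (h3.const_mul m')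
    refine htot.congr_deriv ?_
    subst hm hψ hϑ
    have h2' : b + η ≠ 0 := ne_of_gt hbη
    have h1b' : (1:ℝ) - b ≠ 0 := ne_of_gt h1b
    field_simp
    ring
  have hcontAt : ∀ x : ℝ, x ≠ 0 → x + q ≠ 0 → ContinuousAt h x :=
    fun x hx hx' => (hderiv x hx hx').continuousAt
  have hsq : ∀ x : ℝ, x + q ≠ 0 → 0 < (x + q) ^ 2 := by
    intro x hx'; positivity
  -- monotonicity on the five regions
  have M1 : StrictAntiOn h (Iio (-q)) := by
    apply strictAntiOn_of_deriv_neg (convex_Iio _)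
    · intro x hx
      have hx1 : x < -q := hx
      exact (hcontAt x (ne_of_lt (by linarith)) (ne_of_lt (by linarith))).continuousWithinAt
    · intro x hx
      rw [interior_Iio] at hx
      have hx1 : x < -q := hx
      have hxne : x ≠ 0 := ne_of_lt (by linarith)
      have hxq : x + q ≠ 0 := ne_of_lt (by linarith)
      rw [(hderiv x hxne hxq).deriv]
      apply div_neg_of_pos_of_neg
      · exact mul_pos_of_neg_of_neg (mul_neg_of_pos_of_neg hsum (by linarith)) (by linarith)
      · exact mul_neg_of_neg_of_pos (by linarith) (hsq x hxq)
  have M2 : StrictAntiOn h (Ioo (-q) 0) := by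
    apply strictAntiOn_of_deriv_neg (convex_Ioo _ _)
    · intro x hx
      exact (hcontAt x (ne_of_lt hx.2) (ne_of_gt (by linarith [hx.1]))).continuousWithinAt
    · intro x hx
      rw [interior_Ioo] at hx
      have hxne : x ≠ 0 := ne_of_lt hx.2
      have hxq : x + q ≠ 0 := ne_of_gt (by linarith [hx.1])
      obtain ⟨hxa, hxb⟩ := hx
      rw [(hderiv x hxne hxq).deriv]
      apply div_neg_of_pos_of_neg
      · exact mul_pos_of_neg_of_neg (mul_neg_of_pos_of_neg hsum (by linarith)) (by linarith)
      · exact mul_neg_of_neg_of_pos (by linarith) (hsq x hxq)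
  have M3 : StrictMonoOn h (Ioc 0 ψ) := by
    apply strictMonoOn_of_deriv_pos (convex_Ioc _ _)
    · intro x hx
      exact (hcontAt x (ne_of_gt hx.1) (ne_of_gt (by linarith [hx.1]))).continuousWithinAt
    · intro x hx
      rw [interior_Ioc] at hx
      have hxne : x ≠ 0 := ne_of_gt hx.1
      have hxq : x + q ≠ 0 := ne_of_gt (by linarith [hx.1])
      obtain ⟨hxa, hxb⟩ := hx
      rw [(hderiv x hxne hxq).deriv]
      apply div_pos
      · exact mul_pos_of_neg_of_neg (mul_neg_of_pos_of_neg hsum (by linarith)) (by linarith)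
      · exact mul_pos (by linarith) (hsq x hxq)
  have M4 : StrictAntiOn h (Icc ψ ϑ) := by
    apply strictAntiOn_of_deriv_neg (convex_Icc _ _)
    · intro x hx
      exact (hcontAt x (ne_of_gt (by linarith [hx.1])) (ne_of_gt (by linarith [hx.1]))).continuousWithinAt
    · intro x hx
      rw [interior_Icc] at hx
      have hxne : x ≠ 0 := ne_of_gt (by linarith [hx.1])
      have hxq : x + q ≠ 0 := ne_of_gt (by linarith [hx.1])
      obtain ⟨hxa, hxb⟩ := hx
      rw [(hderiv x hxne hxq).deriv]
      apply div_neg_of_neg_of_pos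
      · exact mul_neg_of_pos_of_neg (mul_pos hsum (by linarith)) (by linarith)
      · exact mul_pos (by linarith) (hsq x hxq)
  have M5 : StrictMonoOn h (Ici ϑ) := by
    apply strictMonoOn_of_deriv_pos (convex_Ici _)
    · intro x hx
      have hx1 : ϑ ≤ x := hx
      exact (hcontAt x (ne_of_gt (by linarith)) (ne_of_gt (by linarith))).continuousWithinAt
    · intro x hx
      rw [interior_Ici] at hx
      have hx1 : ϑ < x := hx
      have hxne : x ≠ 0 := ne_of_gt (by linarith)
      have hxq : x + q ≠ 0 := ne_of_gt (by linarith)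
      rw [(hderiv x hxne hxq).deriv]
      apply div_pos
      · exact mul_pos (mul_pos hsum (by linarith)) (by linarith)
      · exact mul_pos (by linarith) (hsq x hxq)
  -- limits
  have invBot : ∀ {f : ℝ → ℝ} {l : Filter ℝ}, Tendsto f l atBot →
      Tendsto (fun x => (f x)⁻¹) l (𝓝 0) := by
    intro f l hf
    have h1 := (tendsto_neg_atBot_atTop.comp hf).inv_tendsto_atTop
    have h2 := h1.neg
    simp only [Function.comp_def, Pi.inv_apply, Pi.neg_apply, inv_neg, neg_neg, neg_zero] at h2
    exact h2
  have Lbot : Tendsto h atBot atTop := by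
    have t1 : Tendsto (fun x : ℝ => q / (x + q)) atBot (𝓝 0) := by
      have : Tendsto (fun x : ℝ => x + q) atBot atBot := tendsto_atBot_add_const_right _ _ tendsto_id
      simpa [div_eq_mul_inv] using (invBot this).const_mul q
    have t2 : Tendsto (fun x : ℝ => η * Real.log ((x + q) / x)) atBot (𝓝 0) := by
      have hbase : Tendsto (fun x : ℝ => (x + q) / x) atBot (𝓝 1) := by
        have : Tendsto (fun x : ℝ => 1 + q / x) atBot (𝓝 1) := by
          have hx : Tendsto (fun x : ℝ => q / x) atBot (𝓝 0) := by
            simpa [div_eq_mul_inv] using (invBot (tendsto_id (α := ℝ))).const_mul q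
          have h1 := hx.const_add (1:ℝ)
          rw [add_zero] at h1
          exact h1
        refine this.congr' ?_
        filter_upwards [eventually_lt_atBot (0:ℝ)] with x hx
        rw [add_div, div_self (ne_of_lt hx)]
      have hlog : Tendsto (fun x : ℝ => Real.log ((x + q) / x)) atBot (𝓝 0) := by
        have := (Real.continuousAt_log (by norm_num : (1:ℝ) ≠ 0)).tendsto.comp hbase
        simpa only [Function.comp_def, Real.log_one] using this
      simpa using hlog.const_mul η
    have t3 : Tendsto (fun x : ℝ => (η + m') * Real.log x) atBot atTop := by
      have hlog : Tendsto (fun x : ℝ => Real.log x) atBot atTop := by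
        have : Tendsto (fun x : ℝ => Real.log |x|) atBot atTop :=
          Real.tendsto_log_atTop.comp tendsto_abs_atBot_atTop
        simpa [Real.log_abs] using this
      exact hlog.const_mul_atTop hsum
    have := (t1.add t2).add_atTop t3
    refine this.congr' ?_
    filter_upwards [eventually_lt_atBot (-q)] with x hx
    have hxne : x ≠ 0 := ne_of_lt (by linarith)
    have hxq : x + q ≠ 0 := ne_of_lt (by linarith)
    simp only [hdef]
    rw [Real.log_div hxq hxne]
    ring
  have Ltop : Tendsto h atTop atTop := by
    have t1 : Tendsto (fun x : ℝ => q / (x + q)) atTop (𝓝 0) := by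
      have : Tendsto (fun x : ℝ => x + q) atTop atTop := tendsto_atTop_add_const_right _ _ tendsto_id
      simpa [div_eq_mul_inv] using (this.inv_tendsto_atTop).const_mul q
    have t2 : Tendsto (fun x : ℝ => η * Real.log ((x + q) / x)) atTop (𝓝 0) := by
      have hbase : Tendsto (fun x : ℝ => (x + q) / x) atTop (𝓝 1) := by
        have : Tendsto (fun x : ℝ => 1 + q / x) atTop (𝓝 1) := by
          have hx : Tendsto (fun x : ℝ => q / x) atTop (𝓝 0) := by
            simpa [div_eq_mul_inv] using (tendsto_id (α := ℝ)).inv_tendsto_atTop.const_mul q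
          have h1 := hx.const_add (1:ℝ)
          rw [add_zero] at h1
          exact h1
        refine this.congr' ?_
        filter_upwards [eventually_gt_atTop (0:ℝ)] with x hx
        rw [add_div, div_self (ne_of_gt hx)]
      have hlog : Tendsto (fun x : ℝ => Real.log ((x + q) / x)) atTop (𝓝 0) := by
        have := (Real.continuousAt_log (by norm_num : (1:ℝ) ≠ 0)).tendsto.comp hbase
        simpa only [Function.comp_def, Real.log_one] using this
      simpa using hlog.const_mul η
    have t3 : Tendsto (fun x : ℝ => (η + m') * Real.log x) atTop atTop :=
      (Real.tendsto_log_atTop).const_mul_atTop hsum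
    have := (t1.add t2).add_atTop t3
    refine this.congr' ?_
    filter_upwards [eventually_gt_atTop (0:ℝ)] with x hx
    have hxne : x ≠ 0 := ne_of_gt hx
    have hxq : x + q ≠ 0 := ne_of_gt (by linarith)
    simp only [hdef]
    rw [Real.log_div hxq hxne]
    ring
  -- near -q
  have hshift_right : Tendsto (fun x : ℝ => x + q) (𝓝[>] (-q)) (𝓝[>] 0) := by
    rw [tendsto_nhdsWithin_iff]
    constructor
    · have : Tendsto (fun x : ℝ => x + q) (𝓝 (-q)) (𝓝 (-q + q)) :=
        (continuous_id.add continuous_const).tendsto _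
      simpa using this.mono_left nhdsWithin_le_nhds
    · filter_upwards [self_mem_nhdsWithin] with x hx
      simpa using by linarith [mem_Ioi.mp hx]
  have hshift_left : Tendsto (fun x : ℝ => x + q) (𝓝[<] (-q)) (𝓝[<] 0) := by
    rw [tendsto_nhdsWithin_iff]
    constructor
    · have : Tendsto (fun x : ℝ => x + q) (𝓝 (-q)) (𝓝 (-q + q)) :=
        (continuous_id.add continuous_const).tendsto _
      simpa using this.mono_left nhdsWithin_le_nhds
    · filter_upwards [self_mem_nhdsWithin] with x hx
      simpa using by linarith [mem_Iio.mp hx]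
  have hmulog : ∀ {l : Filter ℝ}, Tendsto (fun x : ℝ => x + q) l (𝓝 0) →
      Tendsto (fun x : ℝ => q + η * ((x + q) * Real.log (x + q))) l (𝓝 q) := by
    intro l hl
    have := (Real.continuous_mul_log.tendsto 0).comp hl
    simp only [Function.comp_def, zero_mul, Real.log_zero] at this
    have h2 := (this.const_mul η).const_add q
    simpa using h2
  have hlogx_negq : ∀ {l : Filter ℝ}, l ≤ 𝓝 (-q) →
      Tendsto (fun x : ℝ => m' * Real.log x) l (𝓝 (m' * Real.log (-q))) := by
    intro l hl
    exact (((Real.continuousAt_log (ne_of_lt (by linarith) : (-q : ℝ) ≠ 0)).tendsto.comp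
      (hl.trans le_rfl)).const_mul m')
  have heqnq : ∀ x : ℝ, x + q ≠ 0 →
      h x = m' * Real.log x + (x + q)⁻¹ * (q + η * ((x + q) * Real.log (x + q))) := by
    intro x hxq
    simp only [hdef]
    field_simp
    ring
  have Lright : Tendsto h (𝓝[>] (-q)) atTop := by
    have hinv : Tendsto (fun x : ℝ => (x + q)⁻¹) (𝓝[>] (-q)) atTop :=
      tendsto_inv_nhdsGT_zero.comp hshift_right
    have hfac := hmulog (hshift_right.mono_right nhdsWithin_le_nhds)
    have hmain : Tendsto (fun x : ℝ => (x + q)⁻¹ * (q + η * ((x + q) * Real.log (x + q))))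
        (𝓝[>] (-q)) atTop := hinv.atTop_mul_pos hq0 hfac
    have := (hlogx_negq nhdsWithin_le_nhds).add_atTop hmain
    refine this.congr' ?_
    filter_upwards [self_mem_nhdsWithin] with x hx
    exact (heqnq x (ne_of_gt (by have := mem_Ioi.mp hx; linarith))).symm
  have Lleft : Tendsto h (𝓝[<] (-q)) atBot := by
    have hinv : Tendsto (fun x : ℝ => (x + q)⁻¹) (𝓝[<] (-q)) atBot := by
      have hneg : Tendsto (fun x : ℝ => -(x + q)) (𝓝[<] (-q)) (𝓝[>] 0) := by
        rw [tendsto_nhdsWithin_iff]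
        constructor
        · have : Tendsto (fun x : ℝ => -(x + q)) (𝓝 (-q)) (𝓝 (-(-q + q))) :=
            ((continuous_id.add continuous_const).neg).tendsto _
          simpa using this.mono_left nhdsWithin_le_nhds
        · filter_upwards [self_mem_nhdsWithin] with x hx
          simpa using by linarith [mem_Iio.mp hx]
      have := tendsto_inv_nhdsGT_zero.comp hneg
      have h2 : Tendsto (fun x : ℝ => -(-(x + q))⁻¹) (𝓝[<] (-q)) atBot :=
        tendsto_neg_atTop_atBot.comp this
      refine h2.congr ?_
      intro x; rw [inv_neg, neg_neg]
    have hfac := hmulog (hshift_left.mono_right nhdsWithin_le_nhds)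
    have hmain : Tendsto (fun x : ℝ => (x + q)⁻¹ * (q + η * ((x + q) * Real.log (x + q))))
        (𝓝[<] (-q)) atBot := hinv.atBot_mul_pos hq0 hfac
    have := (hlogx_negq nhdsWithin_le_nhds).add_atBot hmain
    refine this.congr' ?_
    filter_upwards [self_mem_nhdsWithin] with x hx
    exact (heqnq x (ne_of_lt (by have := mem_Iio.mp hx; linarith))).symm
  have Lzero : Tendsto h (𝓝[<] (0:ℝ)) atBot := by
    have t1 : Tendsto (fun x : ℝ => q / (x + q) + η * Real.log (x + q)) (𝓝[<] (0:ℝ))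
        (𝓝 (q / (0 + q) + η * Real.log (0 + q))) := by
      have hc : ContinuousAt (fun x : ℝ => q / (x + q) + η * Real.log (x + q)) 0 := by
        have hq' : (0:ℝ) + q ≠ 0 := ne_of_gt (by linarith)
        have hadd : ContinuousAt (fun x : ℝ => x + q) 0 :=
          (continuous_id.add continuous_const).continuousAt
        apply ContinuousAt.add
        · exact continuousAt_const.div hadd hq'
        · have hlogc : ContinuousAt (fun x : ℝ => Real.log (x + q)) 0 := by
            exact ContinuousAt.comp (g := Real.log) (Real.continuousAt_log hq') hadd
          exact hlogc.const_mul η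
      exact hc.tendsto.mono_left nhdsWithin_le_nhds
    have t2 : Tendsto (fun x : ℝ => m' * Real.log x) (𝓝[<] (0:ℝ)) atBot := by
      have hlog : Tendsto (fun x : ℝ => Real.log x) (𝓝[<] (0:ℝ)) atBot :=
        Real.tendsto_log_nhdsNE_zero.mono_left
          (nhdsWithin_mono _ (fun x hx => ne_of_lt (mem_Iio.mp hx)))
      exact hlog.const_mul_atBot hm0
    have := t1.add_atBot t2
    refine this.congr ?_
    intro x; simp only [hdef]
  -- value at ϑ is below value at ψ
  have hϑval : h ϑ < h ψ := M4 (left_mem_Icc.mpr (le_of_lt hψϑ)) (right_mem_Icc.mpr (le_of_lt hψϑ)) hψϑ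
  -- continuity on compact intervals avoiding 0, -q
  have hcontOn : ∀ a c : ℝ, (∀ x ∈ Icc a c, x ≠ 0 ∧ x + q ≠ 0) → ContinuousOn h (Icc a c) :=
    fun a c hac x hx => (hcontAt x (hac x hx).1 (hac x hx).2).continuousWithinAt
  -- root z₁ in (ϑ, ∞)
  obtain ⟨c1, hc1ϑ, hc1val⟩ : ∃ c, ϑ < c ∧ h ψ < h c := by
    have := (Ltop.eventually_gt_atTop (h ψ)).and (eventually_gt_atTop ϑ)
    obtain ⟨c, hc⟩ := this.exists
    exact ⟨c, hc.2, hc.1⟩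
  obtain ⟨z₁, hz₁mem, hz₁val⟩ : ∃ z ∈ Ioo ϑ c1, h z = h ψ := by
    have hsub := intermediate_value_Ioo (le_of_lt hc1ϑ)
      (hcontOn ϑ c1 (fun x hx => ⟨ne_of_gt (by linarith [hx.1]), ne_of_gt (by linarith [hx.1])⟩))
    have : h ψ ∈ Ioo (h ϑ) (h c1) := ⟨hϑval, hc1val⟩
    obtain ⟨z, hz, hzval⟩ := hsub this
    exact ⟨z, hz, hzval⟩
  -- root z₂ in (-q, 0)
  obtain ⟨a2, ha2mem, ha2val⟩ : ∃ a ∈ Ioo (-q) (0:ℝ), h ψ < h a := by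
    have h1 := Lright.eventually_gt_atTop (h ψ)
    have h2 : Ioo (-q) (0:ℝ) ∈ 𝓝[>] (-q) := Ioo_mem_nhdsGT_of_mem ⟨le_refl _, by nlinarith⟩
    obtain ⟨a, ha⟩ := (h1.and h2).exists
    exact ⟨a, ha.2, ha.1⟩
  obtain ⟨b2, hb2mem, hb2val⟩ : ∃ c ∈ Ioo a2 (0:ℝ), h c < h ψ := by
    have h1 := Lzero.eventually_lt_atBot (h ψ)
    have h2 : Ioo a2 (0:ℝ) ∈ 𝓝[<] (0:ℝ) := Ioo_mem_nhdsLT_of_mem ⟨ha2mem.2, le_refl _⟩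
    obtain ⟨c, hc⟩ := (h1.and h2).exists
    exact ⟨c, hc.2, hc.1⟩
  obtain ⟨z₂, hz₂mem, hz₂val⟩ : ∃ z ∈ Ioo a2 b2, h z = h ψ := by
    have hsub := intermediate_value_Ioo' (le_of_lt (hb2mem.1))
      (hcontOn a2 b2 (fun x hx => ⟨ne_of_lt (by linarith [hx.2, hb2mem.2]), ne_of_gt (by linarith [hx.1, ha2mem.1])⟩))
    obtain ⟨z, hz, hzval⟩ := hsub ⟨hb2val, ha2val⟩
    exact ⟨z, hz, hzval⟩
  have hz₂Ioo : z₂ ∈ Ioo (-q) (0:ℝ) := ⟨lt_trans ha2mem.1 hz₂mem.1, lt_trans hz₂mem.2 hb2mem.2⟩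
  -- root z₃ in (-∞, -q)
  obtain ⟨a3, ha3lt, ha3val⟩ : ∃ a, a < -q ∧ h ψ < h a := by
    have := (Lbot.eventually_gt_atTop (h ψ)).and (eventually_lt_atBot (-q))
    obtain ⟨a, ha⟩ := this.exists
    exact ⟨a, ha.2, ha.1⟩
  obtain ⟨b3, hb3mem, hb3val⟩ : ∃ c ∈ Ioo a3 (-q), h c < h ψ := by
    have h1 := Lleft.eventually_lt_atBot (h ψ)
    have h2 : Ioo a3 (-q) ∈ 𝓝[<] (-q) := Ioo_mem_nhdsLT_of_mem ⟨ha3lt, le_refl _⟩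
    obtain ⟨c, hc⟩ := (h1.and h2).exists
    exact ⟨c, hc.2, hc.1⟩
  obtain ⟨z₃, hz₃mem, hz₃val⟩ : ∃ z ∈ Ioo a3 b3, h z = h ψ := by
    have hsub := intermediate_value_Ioo' (le_of_lt hb3mem.1)
      (hcontOn a3 b3 (fun x hx => ⟨ne_of_lt (by linarith [hx.2, hb3mem.2]), ne_of_lt (by linarith [hx.2, hb3mem.2])⟩))
    obtain ⟨z, hz, hzval⟩ := hsub ⟨hb3val, ha3val⟩
    exact ⟨z, hz, hzval⟩
  have hz₃lt : z₃ < -q := lt_trans hz₃mem.2 hb3mem.2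
  -- assemble
  refine ⟨z₁, hz₁mem.1, z₂, hz₂Ioo, z₃, hz₃lt, ?_, ?_, ?_, ?_, ?_, ?_, ?_⟩
  · ext x
    simp only [Set.mem_setOf_eq, Set.mem_insert_iff, Set.mem_singleton_iff, hHh]
    constructor
    · rintro ⟨hx0, hxq, hval⟩
      rcases lt_trichotomy x (-q) with h1 | h1 | h1
      · left
        exact M1.injOn h1 hz₃lt (hval.trans hz₃val.symm)
      · exact absurd h1 hxq
      · rcases lt_trichotomy x 0 with h2 | h2 | h2
        · right; left
          exact M2.injOn ⟨h1, h2⟩ hz₂Ioo (hval.trans hz₂val.symm)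
        · exact absurd h2 hx0
        · rcases lt_trichotomy x ψ with h3 | h3 | h3
          · exfalso
            have := M3 ⟨h2, le_of_lt h3⟩ ⟨hψ0, le_refl _⟩ h3
            linarith [this, hval.ge, hval.le]
          · right; right; left; exact h3
          · rcases le_or_gt x ϑ with h4 | h4
            · exfalso
              have := M4 (left_mem_Icc.mpr (le_of_lt hψϑ)) ⟨le_of_lt h3, h4⟩ h3
              linarith [this, hval.ge, hval.le]
            · right; right; right
              exact M5.injOn (le_of_lt h4) (le_of_lt hz₁mem.1) (hval.trans hz₁val.symm)
    · intro hx
      rcases hx with rfl | rfl | rfl | rfl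
      · exact ⟨ne_of_lt (by linarith), ne_of_lt hz₃lt, hz₃val⟩
      · exact ⟨ne_of_lt hz₂Ioo.2, ne_of_gt hz₂Ioo.1, hz₂val⟩
      · exact ⟨ne_of_gt hψ0, ne_of_gt (by linarith), rfl⟩
      · exact ⟨ne_of_gt (by linarith [hz₁mem.1]), ne_of_gt (by linarith [hz₁mem.1]), hz₁val⟩
  · exact ne_of_lt (lt_trans hz₃lt hz₂Ioo.1)
  · exact ne_of_lt (by linarith [hz₂Ioo.2])
  · exact ne_of_lt (by linarith [hz₁mem.1, hz₂Ioo.2])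
  · exact ne_of_lt (lt_trans hz₂Ioo.2 hψ0)
  · exact ne_of_lt (by linarith [hz₁mem.1, hz₂Ioo.2])
  · exact ne_of_lt (lt_trans hψϑ hz₁mem.1)
end

section
/- For every z ∈ ℂ with z ∉ (−∞, 0], z + q ∉ (−∞, 0], and κ^{−1}z + q ∉ (−∞, 0], the function G_V has a complex derivative at z equal to ((1 − b)·(κη/Λ − 1)/(z·(z + q)·(z + qκ))) · (z − ψ) · (z − ϑ_V). -/
open Complex

set_option maxHeartbeats 1000000 in
/-- The factorization of `G_V'` into its two real critical points `ψ` and `ϑ_V`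
in the Gaussian-fluctuation regime of the stochastic six-vertex model. -/
theorem stmt_18 (q κ b η : ℝ) (hq : q ∈ Set.Ioo (0:ℝ) 1) (hκ : 1 < κ)
    (hb : b ∈ Set.Ioo (0:ℝ) 1)
    (Λ : ℝ) (hΛ : Λ = b + κ * (1 - b)) (hκη : κ * η ≠ Λ)
    (m' ψ ϑ : ℝ) (hm : m' = b - b * η / Λ) (hψ : ψ = q * b / (1 - b))
    (hϑ : ϑ = q * κ * (Λ - η) / (κ * η - Λ))
    (G : ℂ → ℂ)
    (hG : G = fun z => (η : ℂ) * Complex.log ((κ : ℂ)⁻¹ * z + q)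
      - Complex.log (z + q) + (m' : ℂ) * Complex.log z)
    (z : ℂ) (hz : z ∈ Complex.slitPlane) (hzq : z + q ∈ Complex.slitPlane)
    (hzκq : (κ : ℂ)⁻¹ * z + q ∈ Complex.slitPlane) :
    HasDerivAt G
      (((1 - (b : ℂ)) * ((κ : ℂ) * η / Λ - 1) / (z * (z + q) * (z + q * κ)))
        * (z - ψ) * (z - ϑ)) z := by
  have hκ0 : (0:ℝ) < κ := lt_trans one_pos hκ
  have hκ0' : (κ:ℂ) ≠ 0 := by exact_mod_cast hκ0.ne'
  have hΛpos : (0:ℝ) < Λ := by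
    rw [hΛ]; nlinarith [hb.1, hb.2]
  have hΛ0 : (Λ:ℂ) ≠ 0 := by exact_mod_cast hΛpos.ne'
  have hb1 : (1:ℝ) - b ≠ 0 := by linarith [hb.2]
  have hb1' : (1:ℂ) - (b:ℂ) ≠ 0 := by exact_mod_cast hb1
  have hκηΛ : (κ:ℝ) * η - Λ ≠ 0 := sub_ne_zero.mpr hκη
  have hκηΛ' : (κ:ℂ) * η - Λ ≠ 0 := by exact_mod_cast hκηΛ
  have hz0 : z ≠ 0 := slitPlane_ne_zero hz
  have hzq0 : z + q ≠ 0 := slitPlane_ne_zero hzq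
  have hzκq0 : (κ:ℂ)⁻¹ * z + q ≠ 0 := slitPlane_ne_zero hzκq
  have hzκq0' : z + q * κ ≠ 0 := by
    intro h
    apply hzκq0
    field_simp
    linear_combination h
  have h1 : HasDerivAt (fun w : ℂ => (κ:ℂ)⁻¹ * w + q) ((κ:ℂ)⁻¹) z := by
    simpa using ((hasDerivAt_id z).const_mul ((κ:ℂ)⁻¹)).add_const (q:ℂ)
  have h2 : HasDerivAt (fun w : ℂ => w + (q:ℂ)) 1 z := (hasDerivAt_id z).add_const _
  have hlog1 := (h1.clog hzκq).const_mul ((η:ℂ))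
  have hlog2 := h2.clog hzq
  have hlog3 := (hasDerivAt_id z).clog hz
  have hD := (hlog1.sub hlog2).add (hlog3.const_mul ((m':ℂ)))
  rw [hG]
  convert hD using 1
  · rfl
  · rfl
  · rfl
  -- the purely algebraic identity for the numerators
  have key : ((1 - (b:ℂ)) * ((κ:ℂ) * η / Λ - 1)) * (z - ψ) * (z - ϑ)
      = (η:ℂ) * z * (z + q) - z * (z + q * κ) + (m':ℂ) * (z + q) * (z + q * κ) := by
    rw [hm, hψ, hϑ, hΛ]
    push_cast
    have hΛ0' : (b:ℂ) + κ * (1 - b) ≠ 0 := by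
      rw [hΛ] at hΛ0; exact_mod_cast hΛ0
    have hκηΛ'' : (κ:ℂ) * η - ((b:ℂ) + κ * (1 - b)) ≠ 0 := by
      rw [hΛ] at hκηΛ'; push_cast at hκηΛ'; exact hκηΛ'
    have hΛ0'' : (b:ℂ) + (1 - b) * κ ≠ 0 := by rwa [mul_comm]
    have hκηΛ''' : (κ:ℂ) * η - ((b:ℂ) + (1 - b) * κ) ≠ 0 := by rwa [mul_comm (1 - (b:ℂ))]
    field_simp
    ring
  have e1 : (κ:ℂ)⁻¹ / ((κ:ℂ)⁻¹ * z + q) = 1 / (z + q * κ) := by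
    rw [div_eq_div_iff hzκq0 hzκq0']
    field_simp
  rw [e1]
  rw [show ((1 - (b:ℂ)) * ((κ:ℂ) * η / Λ - 1) / (z * (z + q) * (z + q * κ)))
        * (z - ψ) * (z - ϑ)
      = (((1 - (b:ℂ)) * ((κ:ℂ) * η / Λ - 1)) * (z - ψ) * (z - ϑ))
          / (z * (z + q) * (z + q * κ)) by ring, key]
  simp only [id]
  field_simp
end

section
/- Let (X, μ) be a measure space and let K, K₁ : X × X → ℂ be measurable. Suppose there is an integrable function 𝐊 : X → ℝ such that |K(x,y)| ≤ 𝐊(x) and |K₁(x,y)| ≤ 𝐊(x) for all x, y ∈ X, and set B = ∫_X 𝐊 dμ and K' = K₁ − K. Then: (i) the series Σ_{k=1}^∞ (1/k!) ∫_{X^k} |det( (K(x_i, x_j))_{i,j=1}^k )| dμ^{⊗k} is at most Σ_{k=1}^∞ B^k·k^{k/2}/k!, hence finite, and the same holds with K₁ in place of K; and (ii) | Σ_{k=1}^∞ (1/k!) ∫_{X^k} det( (K₁(x_i,x_j))_{i,j=1}^k ) dμ^{⊗k} − Σ_{k=1}^∞ (1/k!) ∫_{X^k} det( (K(x_i,x_j))_{i,j=1}^k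 ) dμ^{⊗k} | ≤ Σ_{k=1}^∞ (2^k·k^{k/2}/(k−1)!) ∫_{X^k} ( (1/k)·Σ_{j=1}^k |K'(x₁, x_j)|² )^{1/2} · ∏_{i=2}^k ( (1/k)·Σ_{j=1}^k ( |K(x_i, x_j)|² + |K'(x_i, x_j)|² ) )^{1/2} dμ^{⊗k}. -/
open MeasureTheory

/-- The `k`-th term of the Fredholm determinant series of the kernel `K`:
the integral of `det (K(x_i, x_j))_{i,j=1}^k` over `X^k`. -/
noncomputable def fredholmTerm {X : Type*} [MeasurableSpace X] (μ : Measure X)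
    [SigmaFinite μ] (K : X × X → ℂ) (k : ℕ) : ℂ :=
  ∫ x : Fin k → X, Matrix.det (Matrix.of fun i j => K (x i, x j))
    ∂(Measure.pi fun _ => μ)

/-- The `k`-th term of the absolute Fredholm determinant series of the kernel `K`:
the integral of `|det (K(x_i, x_j))_{i,j=1}^k|` over `X^k`. -/
noncomputable def fredholmTermAbs {X : Type*} [MeasurableSpace X] (μ : Measure X)
    [SigmaFinite μ] (K : X × X → ℂ) (k : ℕ) : ℝ :=
  ∫ x : Fin k → X, ‖Matrix.det (Matrix.of fun i j => K (x i, x j))‖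
    ∂(Measure.pi fun _ => μ)

section FredholmAux
open Finset
set_option linter.deprecated false
set_option linter.unusedVariables false
set_option linter.unusedSectionVars false
set_option linter.unreachableTactic false
set_option linter.unusedTactic false

local notation "⟪" x ", " y "⟫" => @inner ℂ _ _ x y

/-- Hadamard's inequality. -/
lemma norm_det_le_prod_sqrt {n : ℕ} (A : Matrix (Fin n) (Fin n) ℂ) :
    ‖A.det‖ ≤ ∏ i, Real.sqrt (∑ j, ‖A i j‖ ^ 2) := by
  classical
  letI : WellFoundedLT (Fin n) := inferInstance
  set f : Fin n → EuclideanSpace ℂ (Fin n) := fun i => (WithLp.equiv 2 (Fin n → ℂ)).symm (A i) with hf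
  have hcard : Module.finrank ℂ (EuclideanSpace ℂ (Fin n)) = Fintype.card (Fin n) :=
    (finrank_euclideanSpace_fin (𝕜 := ℂ) (n := n)).trans (Fintype.card_fin n).symm
  set b := InnerProductSpace.gramSchmidtOrthonormalBasis hcard f with hb
  set M : Matrix (Fin n) (Fin n) ℂ := Matrix.of fun i j => b.repr (f i) j with hM
  set P : Matrix (Fin n) (Fin n) ℂ := Matrix.of fun j l => b j l with hP
  have hAMP : A = M * P := by
    ext i l
    have hs := b.sum_repr (f i)
    have hcoord : (∑ j, b.repr (f i) j • b j) l = A i l := by rw [hs]; rfl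
    rw [Matrix.mul_apply, ← hcoord]
    rw [WithLp.ofLp_sum, Finset.sum_apply]
    rfl
  have hPP : P * P.conjTranspose = 1 := by
    ext j j'
    have horth := b.orthonormal
    rw [orthonormal_iff_ite] at horth
    have h1 := horth j' j
    rw [PiLp.inner_apply] at h1
    rw [Matrix.mul_apply]
    simp only [Matrix.conjTranspose_apply, hP, Matrix.of_apply, Matrix.one_apply]
    rw [show ((if j = j' then (1:ℂ) else 0)) = if j' = j then 1 else 0 by simp [eq_comm]]
    rw [← h1]
    exact Finset.sum_congr rfl fun x _ => (RCLike.inner_apply _ _).symm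
  have hnormP : ‖P.det‖ = 1 := by
    have := congrArg Matrix.det hPP
    rw [Matrix.det_mul, Matrix.det_conjTranspose, Matrix.det_one] at this
    have h2 : (P.det * star P.det : ℂ) = 1 := this
    rw [Complex.star_def, Complex.mul_conj] at h2
    have h3 : Complex.normSq P.det = 1 := by exact_mod_cast h2
    rw [← Complex.sq_norm] at h3
    have : ‖P.det‖ = 1 := by nlinarith [norm_nonneg P.det]
    simpa using this
  have hMtri : M.det = ∏ i, M i i := by
    rw [← Matrix.det_transpose]
    rw [Matrix.det_of_upperTriangular (M := M.transpose) ?_]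
    · simp [Matrix.transpose_apply]
    · intro i j hij
      simp only [Matrix.transpose_apply, hM, Matrix.of_apply]
      exact InnerProductSpace.gramSchmidtOrthonormalBasis_inv_triangular' hcard f hij
  have hMbound : ∀ i, ‖M i i‖ ≤ Real.sqrt (∑ j, ‖A i j‖ ^ 2) := by
    intro i
    have : M i i = ⟪b i, f i⟫ := by
      simp [hM, OrthonormalBasis.repr_apply_apply]
    rw [this]
    calc ‖⟪b i, f i⟫‖ ≤ ‖b i‖ * ‖f i‖ := norm_inner_le_norm _ _
      _ = ‖f i‖ := by rw [b.orthonormal.1 i, one_mul]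
      _ = Real.sqrt (∑ j, ‖A i j‖ ^ 2) := by
          rw [EuclideanSpace.norm_eq]
          congr 1
  calc ‖A.det‖ = ‖M.det‖ * ‖P.det‖ := by rw [hAMP, Matrix.det_mul, norm_mul]
    _ = ‖M.det‖ := by rw [hnormP, mul_one]
    _ = ∏ i, ‖M i i‖ := by rw [hMtri, norm_prod]
    _ ≤ ∏ i, Real.sqrt (∑ j, ‖A i j‖ ^ 2) :=
        Finset.prod_le_prod (fun i _ => norm_nonneg _) (fun i _ => hMbound i)

lemma summable_aux (C : ℝ) (hC : 1 ≤ C) :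
    Summable (fun k : ℕ => C ^ k * Real.sqrt k ^ k / (k.factorial : ℝ)) := by
  have hC0 : 0 < C := lt_of_lt_of_le one_pos hC
  have he1 : (0:ℝ) < Real.exp 1 := Real.exp_pos 1
  set c : ℝ := 2 * C * Real.exp 1 with hc
  have hc0 : 0 < c := by positivity
  apply summable_of_isBigO_nat (g := fun k : ℕ => (1/2 : ℝ) ^ k)
  · exact summable_geometric_of_lt_one (by norm_num) (by norm_num)
  · rw [Asymptotics.isBigO_iff]
    refine ⟨1, ?_⟩
    rw [Filter.eventually_atTop]
    refine ⟨⌈c ^ 2⌉₊ + 1, fun k hk => ?_⟩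
    have hk1 : 1 ≤ k := le_trans (Nat.le_add_left 1 _) hk
    have hkc : c ^ 2 ≤ (k : ℝ) := by
      calc c ^ 2 ≤ (⌈c ^ 2⌉₊ : ℝ) := Nat.le_ceil _
        _ ≤ (k : ℝ) := by exact_mod_cast le_trans (Nat.le_succ _) hk
    have hsq : c ≤ Real.sqrt k := by
      rw [show c = Real.sqrt (c^2) by rw [Real.sqrt_sq hc0.le]]
      exact Real.sqrt_le_sqrt hkc
    have hfac : (0:ℝ) < (k.factorial : ℝ) := by exact_mod_cast k.factorial_pos
    have hkk : ((k:ℝ)) ^ k ≤ Real.exp 1 ^ k * (k.factorial : ℝ) := by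
      have h := Real.pow_div_factorial_le_exp (x := (k:ℝ)) (Nat.cast_nonneg k) k
      rw [div_le_iff₀ hfac] at h
      rwa [← Real.exp_one_pow] at h
    have hsqk : (Real.sqrt k) ^ k * (Real.sqrt k) ^ k = ((k:ℝ)) ^ k := by
      rw [← mul_pow, Real.mul_self_sqrt (Nat.cast_nonneg k)]
    have key : (2 * C) ^ k * (Real.sqrt k) ^ k ≤ (k.factorial : ℝ) := by
      have h1 : c ^ k ≤ (Real.sqrt k) ^ k := pow_le_pow_left₀ hc0.le hsq k
      have h2 : (2*C) ^ k * Real.exp 1 ^ k * (Real.sqrt k) ^ k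
          ≤ (Real.sqrt k) ^ k * (Real.sqrt k) ^ k := by
        rw [← mul_pow]
        exact mul_le_mul_of_nonneg_right h1 (by positivity)
      rw [hsqk] at h2
      have h3 : (2*C) ^ k * Real.exp 1 ^ k * (Real.sqrt k) ^ k
          ≤ Real.exp 1 ^ k * (k.factorial : ℝ) := le_trans h2 hkk
      have he : (0:ℝ) < Real.exp 1 ^ k := by positivity
      nlinarith [mul_pos (mul_pos (pow_pos (by positivity : (0:ℝ) < 2*C) k) he)
        (pow_pos (Real.sqrt_pos.2 (by exact_mod_cast Nat.pos_of_ne_zero (by omega) : (0:ℝ) < k)) k)]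
    have hmain : C ^ k * Real.sqrt k ^ k / (k.factorial : ℝ) ≤ (1/2) ^ k := by
      rw [div_le_iff₀ hfac]
      have h4 : (2*C) ^ k * (1/2 : ℝ) ^ k = C ^ k := by
        rw [← mul_pow]; congr 1; ring
      calc C ^ k * Real.sqrt k ^ k = (2*C) ^ k * Real.sqrt k ^ k * (1/2:ℝ)^k := by
            rw [← h4]; ring
        _ ≤ (k.factorial : ℝ) * (1/2:ℝ)^k := by
            exact mul_le_mul_of_nonneg_right key (by positivity)
        _ = (1/2:ℝ)^k * (k.factorial : ℝ) := mul_comm _ _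
    have hpos : (0:ℝ) ≤ C ^ k * Real.sqrt k ^ k / (k.factorial : ℝ) := by positivity
    simp only [Real.norm_eq_abs, abs_of_nonneg hpos, abs_of_nonneg (by positivity : (0:ℝ) ≤ (1/2:ℝ)^k), one_mul]
    exact hmain

section helpers
variable {X : Type*} [MeasurableSpace X]

lemma measurable_detker {n : ℕ} (L : Fin n → X × X → ℂ)
    (hL : ∀ i, Measurable (L i)) :
    Measurable (fun x : Fin n → X =>
      Matrix.det (Matrix.of fun i j => L i (x i, x j))) := by
  simp_rw [Matrix.det_apply]
  refine Finset.measurable_sum _ fun σ _ => ?_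
  have hrw : (fun x : Fin n → X =>
      Equiv.Perm.sign σ • ∏ i, (Matrix.of fun i j => L i (x i, x j)) (σ i) i)
      = fun x : Fin n → X =>
        ((Equiv.Perm.sign σ : ℤ) : ℂ) * ∏ i, L (σ i) (x (σ i), x i) := by
    funext x
    simp [Units.smul_def, zsmul_eq_mul]
  rw [hrw]
  exact measurable_const.mul (Finset.measurable_prod _ fun i _ =>
    (hL (σ i)).comp ((measurable_pi_apply (σ i)).prodMk (measurable_pi_apply i)))

variable (μ : Measure X) [SigmaFinite μ]

lemma rowsum_sqrt_le {n : ℕ} (W : X → ℝ) (hW0 : ∀ x, 0 ≤ W x)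
    {L : X × X → ℂ} (hbd : ∀ x y, ‖L (x, y)‖ ≤ W x) (a : X) (x : Fin n → X) :
    Real.sqrt (∑ j, ‖L (a, x j)‖ ^ 2) ≤ Real.sqrt n * W a := by
  calc Real.sqrt (∑ j, ‖L (a, x j)‖ ^ 2) ≤ Real.sqrt (∑ _j : Fin n, (W a) ^ 2) := by
        refine Real.sqrt_le_sqrt (Finset.sum_le_sum fun j _ => ?_)
        exact pow_le_pow_left₀ (norm_nonneg _) (hbd a (x j)) 2
    _ = Real.sqrt n * W a := by
        rw [Finset.sum_const, Finset.card_univ, Fintype.card_fin, nsmul_eq_mul,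
          Real.sqrt_mul (Nat.cast_nonneg n), Real.sqrt_sq (hW0 a)]

lemma integrable_detker {n : ℕ} (L : Fin n → X × X → ℂ) (hL : ∀ i, Measurable (L i))
    (W : X → ℝ) (hW : Integrable W μ) (hW0 : ∀ x, 0 ≤ W x)
    (hbd : ∀ i x y, ‖L i (x, y)‖ ≤ W x) :
    Integrable (fun x : Fin n → X => Matrix.det (Matrix.of fun i j => L i (x i, x j)))
      (Measure.pi fun _ => μ) := by
  letI : MeasureSpace X := ⟨μ⟩
  have hprod : Integrable (fun x : Fin n → X => ∏ i, (Real.sqrt n * W (x i)))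
      (Measure.pi fun _ => μ) :=
    MeasureTheory.Integrable.fintype_prod (f := fun _ : Fin n => fun x : X => Real.sqrt n * W x)
      (fun _ => hW.const_mul _)
  refine hprod.mono' ((measurable_detker L hL).aestronglyMeasurable)
    (Filter.Eventually.of_forall fun x => ?_)
  calc ‖Matrix.det (Matrix.of fun i j => L i (x i, x j))‖
      ≤ ∏ i, Real.sqrt (∑ j, ‖L i (x i, x j)‖ ^ 2) := norm_det_le_prod_sqrt _
    _ ≤ ∏ i, (Real.sqrt n * W (x i)) :=
        Finset.prod_le_prod (fun i _ => Real.sqrt_nonneg _)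
          (fun i _ => rowsum_sqrt_le W hW0 (hbd i) (x i) x)

lemma integral_norm_det_le {n : ℕ} (L : Fin n → X × X → ℂ) (hL : ∀ i, Measurable (L i))
    (W : X → ℝ) (hW : Integrable W μ) (hW0 : ∀ x, 0 ≤ W x)
    (hbd : ∀ i x y, ‖L i (x, y)‖ ≤ W x) :
    (∫ x : Fin n → X, ‖Matrix.det (Matrix.of fun i j => L i (x i, x j))‖
        ∂(Measure.pi fun _ => μ))
      ≤ Real.sqrt n ^ n * (∫ x, W x ∂μ) ^ n := by
  letI : MeasureSpace X := ⟨μ⟩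
  have hprod : Integrable (fun x : Fin n → X => ∏ i, (Real.sqrt n * W (x i)))
      (Measure.pi fun _ => μ) :=
    MeasureTheory.Integrable.fintype_prod (f := fun _ : Fin n => fun x : X => Real.sqrt n * W x)
      (fun _ => hW.const_mul _)
  have h1 : (∫ x : Fin n → X, ‖Matrix.det (Matrix.of fun i j => L i (x i, x j))‖
        ∂(Measure.pi fun _ => μ)) ≤ ∫ x : Fin n → X, ∏ i, (Real.sqrt n * W (x i))
        ∂(Measure.pi fun _ => μ) := by
    refine integral_mono_of_nonneg (Filter.Eventually.of_forall fun x => norm_nonneg _)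
      hprod (Filter.Eventually.of_forall fun x => ?_)
    calc ‖Matrix.det (Matrix.of fun i j => L i (x i, x j))‖
        ≤ ∏ i, Real.sqrt (∑ j, ‖L i (x i, x j)‖ ^ 2) := norm_det_le_prod_sqrt _
      _ ≤ ∏ i, (Real.sqrt n * W (x i)) :=
          Finset.prod_le_prod (fun i _ => Real.sqrt_nonneg _)
            (fun i _ => rowsum_sqrt_le W hW0 (hbd i) (x i) x)
  refine le_trans h1 ?_
  have h2 : (∫ x : Fin n → X, ∏ i, (Real.sqrt n * W (x i)) ∂(Measure.pi fun _ => μ))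
      = ∏ _i : Fin n, ∫ x : X, Real.sqrt n * W x ∂μ :=
    MeasureTheory.integral_fintype_prod_eq_prod
      (f := fun _ : Fin n => fun x : X => Real.sqrt n * W x)
  rw [h2, Finset.prod_const, Finset.card_univ, Fintype.card_fin, integral_const_mul, mul_pow]

lemma integral_comp_perm {n : ℕ} (σ : Equiv.Perm (Fin n)) (F : (Fin n → X) → ℝ) :
    ∫ x : Fin n → X, F (x ∘ σ) ∂(Measure.pi fun _ => μ)
      = ∫ x : Fin n → X, F x ∂(Measure.pi fun _ => μ) := by
  have hmp := measurePreserving_piCongrLeft (fun _ : Fin n => μ) σ.symm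
  have h := hmp.integral_comp' F
  rw [← h]
  refine integral_congr_ae (Filter.Eventually.of_forall fun x => ?_)
  show F (x ∘ σ) = F ((MeasurableEquiv.piCongrLeft (fun _ => X) σ.symm) x)
  congr 1
  funext i
  have h2 := Equiv.piCongrLeft_apply_apply (fun _ : Fin n => X) σ.symm x (σ i)
  simp only [Equiv.symm_apply_apply] at h2
  exact h2.symm

end helpers

variable {X : Type*} [MeasurableSpace X]

lemma fg_measurable {n : ℕ} (K K' : X × X → ℂ) (hKm : Measurable K) (hK'm : Measurable K')
    (c : ℝ) :
    Measurable (fun x : Fin (n+1) → X =>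
      Real.sqrt (c * ∑ j : Fin (n+1), ‖K' (x 0, x j)‖ ^ 2) *
      ∏ i ∈ Finset.univ.erase (0 : Fin (n+1)),
        Real.sqrt (c * ∑ j : Fin (n+1), (‖K (x i, x j)‖ ^ 2 + ‖K' (x i, x j)‖ ^ 2))) := by
  have hpair : ∀ (a b : Fin (n+1)), Measurable (fun x : Fin (n+1) → X => (x a, x b)) :=
    fun a b => (measurable_pi_apply a).prodMk (measurable_pi_apply b)
  refine Measurable.mul ?_ ?_
  · refine (Real.continuous_sqrt.measurable).comp (Measurable.const_mul ?_ c)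
    exact Finset.measurable_sum _ fun j _ =>
      ((hK'm.comp (hpair 0 j)).norm).pow_const 2
  · refine Finset.measurable_prod _ fun i _ => ?_
    refine (Real.continuous_sqrt.measurable).comp (Measurable.const_mul ?_ c)
    exact Finset.measurable_sum _ fun j _ =>
      (((hKm.comp (hpair i j)).norm).pow_const 2).add
        (((hK'm.comp (hpair i j)).norm).pow_const 2)

variable (μ : Measure X) [SigmaFinite μ]

lemma fg_integrable_and_bound (K K' : X × X → ℂ) (hKm : Measurable K) (hK'm : Measurable K')
    (Kbd : X → ℝ) (hKbd : Integrable Kbd μ) (hKbd0 : ∀ x, 0 ≤ Kbd x)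
    (hbdK : ∀ x y, ‖K (x, y)‖ ≤ Kbd x) (hbdK' : ∀ x y, ‖K' (x, y)‖ ≤ 2 * Kbd x) (k : ℕ) :
    Integrable (fun x : Fin (k+1) → X =>
      Real.sqrt ((((k : ℝ) + 1))⁻¹ * ∑ j : Fin (k+1), ‖K' (x 0, x j)‖ ^ 2) *
      ∏ i ∈ Finset.univ.erase (0 : Fin (k+1)),
        Real.sqrt ((((k : ℝ) + 1))⁻¹ *
          ∑ j : Fin (k+1), (‖K (x i, x j)‖ ^ 2 + ‖K' (x i, x j)‖ ^ 2)))
      (Measure.pi fun _ => μ) ∧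
    (∫ x : Fin (k+1) → X,
      (Real.sqrt ((((k : ℝ) + 1))⁻¹ * ∑ j : Fin (k+1), ‖K' (x 0, x j)‖ ^ 2) *
      ∏ i ∈ Finset.univ.erase (0 : Fin (k+1)),
        Real.sqrt ((((k : ℝ) + 1))⁻¹ *
          ∑ j : Fin (k+1), (‖K (x i, x j)‖ ^ 2 + ‖K' (x i, x j)‖ ^ 2)))
      ∂(Measure.pi fun _ => μ))
      ≤ (2 * ∫ x, Kbd x ∂μ) * ((Real.sqrt 5 * ∫ x, Kbd x ∂μ)) ^ k := by
  letI : MeasureSpace X := ⟨μ⟩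
  set n := k + 1 with hn
  have hnpos : (0:ℝ) < ((k:ℝ) + 1) := by positivity
  set F : (Fin n → X) → ℝ := fun x =>
      Real.sqrt ((((k : ℝ) + 1))⁻¹ * ∑ j : Fin n, ‖K' (x 0, x j)‖ ^ 2) *
      ∏ i ∈ Finset.univ.erase (0 : Fin n),
        Real.sqrt ((((k : ℝ) + 1))⁻¹ *
          ∑ j : Fin n, (‖K (x i, x j)‖ ^ 2 + ‖K' (x i, x j)‖ ^ 2)) with hF
  set w : Fin n → X → ℝ := fun i x =>
      if i = (0 : Fin n) then 2 * Kbd x else Real.sqrt 5 * Kbd x with hw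
  have hwInt : ∀ i, Integrable (w i) μ := by
    intro i
    by_cases h : i = 0 <;> simp only [hw, h, if_true, if_false, reduceIte] <;>
      exact hKbd.const_mul _
  have hwnn : ∀ i x, 0 ≤ w i x := by
    intro i x
    have := hKbd0 x
    by_cases h : i = 0 <;> simp only [hw, h, if_true, if_false, reduceIte] <;> positivity
  have hf0 : ∀ x : Fin n → X,
      Real.sqrt ((((k : ℝ) + 1))⁻¹ * ∑ j : Fin n, ‖K' (x 0, x j)‖ ^ 2) ≤ 2 * Kbd (x 0) := by
    intro x
    have harg : (((k : ℝ) + 1))⁻¹ * ∑ j : Fin n, ‖K' (x 0, x j)‖ ^ 2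
        ≤ (2 * Kbd (x 0)) ^ 2 := by
      rw [inv_mul_le_iff₀ hnpos]
      calc ∑ j : Fin n, ‖K' (x 0, x j)‖ ^ 2
          ≤ ∑ _j : Fin n, (2 * Kbd (x 0)) ^ 2 := by
            refine Finset.sum_le_sum fun j _ => ?_
            exact pow_le_pow_left₀ (norm_nonneg _) (hbdK' (x 0) (x j)) 2
        _ = ((k:ℝ)+1) * (2 * Kbd (x 0)) ^ 2 := by
            rw [Finset.sum_const, Finset.card_univ, Fintype.card_fin, nsmul_eq_mul]
            simp only [hn]; push_cast; ring
    calc Real.sqrt ((((k : ℝ) + 1))⁻¹ * ∑ j : Fin n, ‖K' (x 0, x j)‖ ^ 2)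
        ≤ Real.sqrt ((2 * Kbd (x 0)) ^ 2) := Real.sqrt_le_sqrt harg
      _ = 2 * Kbd (x 0) := Real.sqrt_sq (by have := hKbd0 (x 0); positivity)
  have hgi : ∀ (x : Fin n → X) (i : Fin n),
      Real.sqrt ((((k : ℝ) + 1))⁻¹ *
        ∑ j : Fin n, (‖K (x i, x j)‖ ^ 2 + ‖K' (x i, x j)‖ ^ 2))
        ≤ Real.sqrt 5 * Kbd (x i) := by
    intro x i
    have harg : (((k : ℝ) + 1))⁻¹ *
        ∑ j : Fin n, (‖K (x i, x j)‖ ^ 2 + ‖K' (x i, x j)‖ ^ 2)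
        ≤ 5 * Kbd (x i) ^ 2 := by
      rw [inv_mul_le_iff₀ hnpos]
      calc ∑ j : Fin n, (‖K (x i, x j)‖ ^ 2 + ‖K' (x i, x j)‖ ^ 2)
          ≤ ∑ _j : Fin n, 5 * Kbd (x i) ^ 2 := by
            refine Finset.sum_le_sum fun j _ => ?_
            have h1 : ‖K (x i, x j)‖ ^ 2 ≤ Kbd (x i) ^ 2 :=
              pow_le_pow_left₀ (norm_nonneg _) (hbdK (x i) (x j)) 2
            have h2 : ‖K' (x i, x j)‖ ^ 2 ≤ (2 * Kbd (x i)) ^ 2 :=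
              pow_le_pow_left₀ (norm_nonneg _) (hbdK' (x i) (x j)) 2
            nlinarith
        _ = ((k:ℝ)+1) * (5 * Kbd (x i) ^ 2) := by
            rw [Finset.sum_const, Finset.card_univ, Fintype.card_fin, nsmul_eq_mul]
            simp only [hn]; push_cast; ring
    calc Real.sqrt (_) ≤ Real.sqrt (5 * Kbd (x i) ^ 2) := Real.sqrt_le_sqrt harg
      _ = Real.sqrt 5 * Kbd (x i) := by
          rw [Real.sqrt_mul (by norm_num), Real.sqrt_sq (hKbd0 (x i))]
  have hFle : ∀ x : Fin n → X, F x ≤ ∏ i, w i (x i) := by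
    intro x
    rw [← Finset.mul_prod_erase Finset.univ (fun i => w i (x i)) (Finset.mem_univ 0)]
    refine mul_le_mul ?_ ?_ ?_ ?_
    · simpa [hw] using hf0 x
    · refine Finset.prod_le_prod (fun i _ => Real.sqrt_nonneg _) fun i hi => ?_
      have hi0 : i ≠ 0 := (Finset.mem_erase.mp hi).1
      simpa [hw, hi0] using hgi x i
    · exact Finset.prod_nonneg fun i _ => Real.sqrt_nonneg _
    · simpa [hw] using (by have := hKbd0 (x 0); positivity : (0:ℝ) ≤ 2 * Kbd (x 0))
  have hFnn : ∀ x, 0 ≤ F x :=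
    fun x => mul_nonneg (Real.sqrt_nonneg _) (Finset.prod_nonneg fun i _ => Real.sqrt_nonneg _)
  have hFmeas : Measurable F := fg_measurable K K' hKm hK'm _
  have hwprodInt : Integrable (fun x : Fin n → X => ∏ i, w i (x i)) (Measure.pi fun _ => μ) :=
    MeasureTheory.Integrable.fintype_prod (f := w) hwInt
  have hFInt : Integrable F (Measure.pi fun _ => μ) := by
    refine hwprodInt.mono' hFmeas.aestronglyMeasurable
      (Filter.Eventually.of_forall fun x => ?_)
    rw [Real.norm_of_nonneg (hFnn x)]
    exact hFle x
  refine ⟨hFInt, ?_⟩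
  have h1 : (∫ x : Fin n → X, F x ∂(Measure.pi fun _ => μ))
      ≤ ∫ x : Fin n → X, ∏ i, w i (x i) ∂(Measure.pi fun _ => μ) :=
    integral_mono_of_nonneg (Filter.Eventually.of_forall hFnn) hwprodInt
      (Filter.Eventually.of_forall hFle)
  refine le_trans h1 ?_
  have h2 : (∫ x : Fin n → X, ∏ i, w i (x i) ∂(Measure.pi fun _ => μ))
      = ∏ i, ∫ x, w i x ∂μ :=
    MeasureTheory.integral_fintype_prod_eq_prod (f := w)
  rw [h2, ← Finset.mul_prod_erase Finset.univ (fun i => ∫ x, w i x ∂μ) (Finset.mem_univ 0)]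
  have h3 : (∫ x, w 0 x ∂μ) = 2 * ∫ x, Kbd x ∂μ := by
    simp only [hw, if_true, reduceIte]
    exact integral_const_mul 2 Kbd
  have h4 : ∀ i ∈ Finset.univ.erase (0 : Fin n), (∫ x, w i x ∂μ)
      = Real.sqrt 5 * ∫ x, Kbd x ∂μ := by
    intro i hi
    have hi0 : i ≠ 0 := (Finset.mem_erase.mp hi).1
    simp only [hw, hi0, if_false, reduceIte]
    exact integral_const_mul _ Kbd
  rw [h3, Finset.prod_congr rfl h4, Finset.prod_const, Finset.card_erase_of_mem (Finset.mem_univ _),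
    Finset.card_univ, Fintype.card_fin]
  exact le_rfl


set_option maxHeartbeats 1000000 in
lemma key_diff_bound {X : Type*} [MeasurableSpace X] (μ : Measure X) [SigmaFinite μ]
    (K K₁ K' : X × X → ℂ) (hKm : Measurable K) (hK₁m : Measurable K₁)
    (hK' : K' = K₁ - K)
    (Kbd : X → ℝ) (hKbd : Integrable Kbd μ) (hKbd0 : ∀ x, 0 ≤ Kbd x)
    (hbdK : ∀ x y, ‖K (x, y)‖ ≤ Kbd x) (hbdK₁ : ∀ x y, ‖K₁ (x, y)‖ ≤ Kbd x)
    (k : ℕ) :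
    ‖fredholmTerm μ K₁ (k+1) - fredholmTerm μ K (k+1)‖ ≤
      ((k:ℝ)+1) * (Real.sqrt 2 ^ k * Real.sqrt ((k:ℝ)+1) ^ (k+1)) *
        ∫ x : Fin (k+1) → X,
          Real.sqrt ((((k : ℝ) + 1))⁻¹ * ∑ j : Fin (k+1), ‖K' (x 0, x j)‖ ^ 2) *
          ∏ i ∈ Finset.univ.erase (0 : Fin (k+1)),
            Real.sqrt ((((k : ℝ) + 1))⁻¹ *
              ∑ j : Fin (k+1), (‖K (x i, x j)‖ ^ 2 + ‖K' (x i, x j)‖ ^ 2))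
          ∂(Measure.pi fun _ => μ) := by
  classical
  have hK'm : Measurable K' := by rw [hK']; exact hK₁m.sub hKm
  have hK₁eq : ∀ p : X × X, K₁ p = K p + K' p := by
    intro p; rw [hK']; simp
  have hbdK' : ∀ x y, ‖K' (x, y)‖ ≤ 2 * Kbd x := by
    intro x y
    rw [hK']
    calc ‖(K₁ - K) (x, y)‖ = ‖K₁ (x, y) - K (x, y)‖ := by rfl
      _ ≤ ‖K₁ (x, y)‖ + ‖K (x, y)‖ := norm_sub_le _ _
      _ ≤ 2 * Kbd x := by have := hbdK x y; have := hbdK₁ x y; linarith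
  set n := k + 1 with hn
  set ν := (Measure.pi fun _ : Fin n => μ) with hν
  set W : X → ℝ := fun x => 2 * Kbd x with hW
  have hWInt : Integrable W μ := hKbd.const_mul 2
  have hW0 : ∀ x, 0 ≤ W x := fun x => by have := hKbd0 x; simp [hW]; linarith
  set Lm : Fin n → Fin n → X × X → ℂ := fun m i =>
      if (i:ℕ) < (m:ℕ) then K₁ else if i = m then K' else K with hLm
  have hLmMeas : ∀ m i, Measurable (Lm m i) := by
    intro m i
    simp only [hLm]
    split_ifs <;> assumption
  have hLmbd : ∀ m i (x y : X), ‖Lm m i (x, y)‖ ≤ W x := by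
    intro m i x y
    have h1 := hbdK x y; have h2 := hbdK₁ x y; have h3 := hbdK' x y
    have h4 := hKbd0 x
    simp only [hLm, hW]
    split_ifs <;> linarith
  set R : Fin n → (Fin n → X) → ℂ :=
      fun m x => Matrix.det (Matrix.of fun i j => Lm m i (x i, x j)) with hR
  have hRInt : ∀ m, Integrable (R m) ν :=
    fun m => integrable_detker μ (Lm m) (hLmMeas m) W hWInt hW0 (hLmbd m)
  -- telescoping
  have htel : ∀ x : Fin n → X,
      Matrix.det (Matrix.of fun i j => K₁ (x i, x j))
        - Matrix.det (Matrix.of fun i j => K (x i, x j)) = ∑ m : Fin n, R m x := by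
    intro x
    set T : ℕ → Matrix (Fin n) (Fin n) ℂ := fun t =>
      Matrix.of fun i j => if (i:ℕ) < t then K₁ (x i, x j) else K (x i, x j) with hT
    have hT0 : T 0 = Matrix.of fun i j => K (x i, x j) := by
      ext i j; simp [hT]
    have hTn : T n = Matrix.of fun i j => K₁ (x i, x j) := by
      ext i j; simp [hT, i.isLt]
    have hstep : ∀ m : Fin n, (T ((m:ℕ)+1)).det - (T (m:ℕ)).det = R m x := by
      intro m
      have h1 : T ((m:ℕ)+1) = (T (m:ℕ)).updateRow m (fun j => K₁ (x m, x j)) := by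
        ext i j
        by_cases him : i = m
        · subst him
          rw [Matrix.updateRow_self]
          simp [hT]
        · rw [Matrix.updateRow_ne him]
          simp only [hT, Matrix.of_apply]
          have hiff : ((i:ℕ) < (m:ℕ)+1) ↔ ((i:ℕ) < (m:ℕ)) := by
            constructor
            · intro h
              rcases Nat.lt_succ_iff_lt_or_eq.mp h with h | h
              · exact h
              · exact absurd (Fin.ext h) him
            · exact fun h => Nat.lt_succ_of_lt h
          rw [if_congr hiff rfl rfl]
      have h2 : (T (m:ℕ)).updateRow m (fun j => K (x m, x j)) = T (m:ℕ) := by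
        have hrow : (fun j => K (x m, x j)) = T (m:ℕ) m := by
          funext j; simp [hT]
        rw [hrow, Matrix.updateRow_eq_self]
      have h3 : (fun j => K₁ (x m, x j))
          = (fun j => K (x m, x j)) + fun j => K' (x m, x j) := by
        funext j; simp [hK₁eq]
      have h4 : (T (m:ℕ)).updateRow m (fun j => K' (x m, x j))
          = Matrix.of fun i j => Lm m i (x i, x j) := by
        ext i j
        by_cases him : i = m
        · subst him
          rw [Matrix.updateRow_self]
          simp [hLm]
        · rw [Matrix.updateRow_ne him]
          simp only [hT, hLm, Matrix.of_apply]
          by_cases hlt : (i:ℕ) < (m:ℕ) <;> simp [hlt, him]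
      rw [h1, h3, Matrix.det_updateRow_add, h2, h4]
      ring
    have hsum : ∑ m : Fin n, R m x
        = ∑ t ∈ Finset.range n, ((T (t+1)).det - (T t).det) := by
      rw [← Fin.sum_univ_eq_sum_range (fun t => (T (t+1)).det - (T t).det) n]
      exact Finset.sum_congr rfl fun m _ => (hstep m).symm
    rw [hsum, Finset.sum_range_sub (fun t => (T t).det) n, hTn, hT0]
  -- integral identity
  have hdetKInt : Integrable
      (fun x : Fin n → X => Matrix.det (Matrix.of fun i j => K (x i, x j))) ν :=
    integrable_detker μ (fun _ => K) (fun _ => hKm) W hWInt hW0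
      (fun _ x y => le_trans (hbdK x y) (by have := hKbd0 x; simp [hW]; linarith))
  have hdetK₁Int : Integrable
      (fun x : Fin n → X => Matrix.det (Matrix.of fun i j => K₁ (x i, x j))) ν :=
    integrable_detker μ (fun _ => K₁) (fun _ => hK₁m) W hWInt hW0
      (fun _ x y => le_trans (hbdK₁ x y) (by have := hKbd0 x; simp [hW]; linarith))
  have hint : fredholmTerm μ K₁ n - fredholmTerm μ K n = ∑ m : Fin n, ∫ x, R m x ∂ν := by
    rw [fredholmTerm, fredholmTerm, ← integral_sub hdetK₁Int hdetKInt]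
    rw [integral_congr_ae (Filter.Eventually.of_forall htel)]
    exact integral_finset_sum Finset.univ (fun m _ => hRInt m)
  -- abbreviations for f, g
  set f : (Fin n → X) → ℝ := fun x =>
      Real.sqrt ((((k : ℝ) + 1))⁻¹ * ∑ j : Fin n, ‖K' (x 0, x j)‖ ^ 2) with hf
  set g : Fin n → (Fin n → X) → ℝ := fun i x =>
      Real.sqrt ((((k : ℝ) + 1))⁻¹ *
        ∑ j : Fin n, (‖K (x i, x j)‖ ^ 2 + ‖K' (x i, x j)‖ ^ 2)) with hg
  have hfnn : ∀ x, 0 ≤ f x := fun x => Real.sqrt_nonneg _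
  have hfgInt : Integrable (fun x => f x * ∏ i ∈ Finset.univ.erase (0 : Fin n), g i x) ν :=
    (fg_integrable_and_bound μ K K' hKm hK'm Kbd hKbd hKbd0 hbdK hbdK' k).1
  set c : ℝ := Real.sqrt 2 ^ k * Real.sqrt ((k:ℝ)+1) ^ (k+1) with hc
  set I : ℝ := ∫ x, (f x * ∏ i ∈ Finset.univ.erase (0 : Fin n), g i x) ∂ν with hI
  -- per-m bound
  have hperm : ∀ m : Fin n, ‖∫ x, R m x ∂ν‖ ≤ c * I := by
    intro m
    set τ : Equiv.Perm (Fin n) := Equiv.swap 0 m with hτ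
    have hnorm : ‖∫ x, R m x ∂ν‖ ≤ ∫ x, ‖R m x‖ ∂ν := norm_integral_le_integral_norm _
    have hswap : (∫ x, ‖R m x‖ ∂ν) = ∫ x, ‖R m (x ∘ τ)‖ ∂ν :=
      (integral_comp_perm μ τ (fun y => ‖R m y‖)).symm
    have hpoint : ∀ x : Fin n → X,
        ‖R m (x ∘ τ)‖ ≤ c * (f x * ∏ i ∈ Finset.univ.erase (0 : Fin n), g i x) := by
      intro x
      set S : Matrix (Fin n) (Fin n) ℂ :=
        Matrix.of fun a b => Lm m (τ a) (x a, x b) with hS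
      have hsub : (Matrix.of fun i j => Lm m i ((x ∘ τ) i, (x ∘ τ) j))
          = S.submatrix τ τ := by
        ext i j
        simp only [Matrix.submatrix_apply, hS, Matrix.of_apply, Function.comp_apply]
        rw [Equiv.swap_apply_self]
      have hRS : ‖R m (x ∘ τ)‖ = ‖S.det‖ := by
        rw [hR]
        show ‖(Matrix.of fun i j => Lm m i ((x ∘ τ) i, (x ∘ τ) j)).det‖ = _
        rw [hsub, Matrix.det_submatrix_equiv_self]
      have hhad : ‖S.det‖ ≤ ∏ a, Real.sqrt (∑ b, ‖S a b‖ ^ 2) := norm_det_le_prod_sqrt S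
      -- row 0
      have hrow0 : ∀ b, S 0 b = K' (x 0, x b) := by
        intro b
        simp only [hS, Matrix.of_apply, hτ, Equiv.swap_apply_left]
        simp [hLm]
      have h0eq : Real.sqrt (∑ b, ‖S 0 b‖ ^ 2) = Real.sqrt ((k:ℝ)+1) * f x := by
        simp_rw [hrow0]
        rw [hf, ← Real.sqrt_mul (by positivity : (0:ℝ) ≤ (k:ℝ)+1)]
        congr 1
        field_simp
      -- other rows
      have hrowa : ∀ a : Fin n, a ≠ 0 →
          Real.sqrt (∑ b, ‖S a b‖ ^ 2)
            ≤ Real.sqrt 2 * (Real.sqrt ((k:ℝ)+1) * g a x) := by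
        intro a ha0
        have hker : Lm m (τ a) = K ∨ Lm m (τ a) = K₁ := by
          have hτa : τ a ≠ m := by
            intro h
            apply ha0
            have := congrArg τ h
            rw [Equiv.swap_apply_self] at this
            rw [this, hτ, Equiv.swap_apply_right]
          simp only [hLm]
          by_cases hlt : ((τ a : Fin n):ℕ) < (m:ℕ)
          · right; simp [hlt]
          · left; simp [hlt, hτa]
        have hentry : ∀ b, ‖S a b‖ ^ 2
            ≤ 2 * (‖K (x a, x b)‖ ^ 2 + ‖K' (x a, x b)‖ ^ 2) := by
          intro b
          have hSab : S a b = Lm m (τ a) (x a, x b) := rfl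
          rcases hker with h | h
          · rw [hSab, h]
            nlinarith [sq_nonneg (‖K (x a, x b)‖), sq_nonneg (‖K' (x a, x b)‖)]
          · rw [hSab, h]
            have : ‖K₁ (x a, x b)‖ ≤ ‖K (x a, x b)‖ + ‖K' (x a, x b)‖ := by
              rw [hK₁eq (x a, x b)]
              exact norm_add_le _ _
            nlinarith [norm_nonneg (K₁ (x a, x b)), norm_nonneg (K (x a, x b)),
              norm_nonneg (K' (x a, x b)), sq_nonneg (‖K (x a, x b)‖ - ‖K' (x a, x b)‖)]
        calc Real.sqrt (∑ b, ‖S a b‖ ^ 2)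
            ≤ Real.sqrt (∑ b, 2 * (‖K (x a, x b)‖ ^ 2 + ‖K' (x a, x b)‖ ^ 2)) :=
              Real.sqrt_le_sqrt (Finset.sum_le_sum fun b _ => hentry b)
          _ = Real.sqrt 2 * (Real.sqrt ((k:ℝ)+1) * g a x) := by
              rw [hg, ← Real.sqrt_mul (by positivity : (0:ℝ) ≤ (k:ℝ)+1),
                ← Real.sqrt_mul (by norm_num : (0:ℝ) ≤ 2)]
              congr 1
              rw [← Finset.mul_sum]
              field_simp <;> ring
      -- combine
      have hcomb : (∏ a, Real.sqrt (∑ b, ‖S a b‖ ^ 2))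
          ≤ (Real.sqrt ((k:ℝ)+1) * f x) *
            ∏ a ∈ Finset.univ.erase (0 : Fin n),
              (Real.sqrt 2 * (Real.sqrt ((k:ℝ)+1) * g a x)) := by
        rw [← Finset.mul_prod_erase Finset.univ
          (fun a => Real.sqrt (∑ b, ‖S a b‖ ^ 2)) (Finset.mem_univ 0), h0eq]
        refine mul_le_mul le_rfl ?_ (Finset.prod_nonneg fun a _ => Real.sqrt_nonneg _) ?_
        · exact Finset.prod_le_prod (fun a _ => Real.sqrt_nonneg _)
            (fun a ha => hrowa a (Finset.mem_erase.mp ha).1)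
        · exact mul_nonneg (Real.sqrt_nonneg _) (hfnn x)
      have hconst : (Real.sqrt ((k:ℝ)+1) * f x) *
            ∏ a ∈ Finset.univ.erase (0 : Fin n),
              (Real.sqrt 2 * (Real.sqrt ((k:ℝ)+1) * g a x))
          = c * (f x * ∏ a ∈ Finset.univ.erase (0 : Fin n), g a x) := by
        have hcard : (Finset.univ.erase (0 : Fin n)).card = k := by
          rw [Finset.card_erase_of_mem (Finset.mem_univ _), Finset.card_univ,
            Fintype.card_fin]
          omega
        rw [Finset.prod_mul_distrib, Finset.prod_mul_distrib, Finset.prod_const,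
          Finset.prod_const, hcard, hc]
        ring
      rw [hRS]
      exact le_trans hhad (le_trans hcomb (le_of_eq hconst))
    have hle : (∫ x, ‖R m (x ∘ τ)‖ ∂ν)
        ≤ ∫ x, c * (f x * ∏ i ∈ Finset.univ.erase (0 : Fin n), g i x) ∂ν := by
      refine integral_mono_of_nonneg (Filter.Eventually.of_forall fun x => norm_nonneg _)
        (hfgInt.const_mul c) (Filter.Eventually.of_forall hpoint)
    rw [integral_const_mul] at hle
    calc ‖∫ x, R m x ∂ν‖ ≤ ∫ x, ‖R m x‖ ∂ν := hnorm
      _ = ∫ x, ‖R m (x ∘ τ)‖ ∂ν := hswap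
      _ ≤ c * I := hle
  -- conclusion
  rw [hint]
  calc ‖∑ m : Fin n, ∫ x, R m x ∂ν‖ ≤ ∑ m : Fin n, ‖∫ x, R m x ∂ν‖ :=
        norm_sum_le _ _
    _ ≤ ∑ _m : Fin n, c * I := Finset.sum_le_sum fun m _ => hperm m
    _ = ((k:ℝ)+1) * (c * I) := by
        rw [Finset.sum_const, Finset.card_univ, Fintype.card_fin, nsmul_eq_mul]
        simp only [hn]; push_cast; ring
    _ = ((k:ℝ)+1) * c * I := by ring
lemma rpow_half_eq (k : ℕ) :
    ((k:ℝ)+1) ^ (((k:ℝ)+1)/2) = Real.sqrt ((k:ℝ)+1) ^ (k+1) := by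
  rw [Real.sqrt_eq_rpow, ← Real.rpow_natCast (((k:ℝ)+1) ^ ((1:ℝ)/2)) (k+1),
    ← Real.rpow_mul (by positivity : (0:ℝ) ≤ (k:ℝ)+1)]
  congr 1
  push_cast
  ring

lemma fredholmTermAbs_nonneg {X : Type*} [MeasurableSpace X] (μ : Measure X) [SigmaFinite μ]
    (K : X × X → ℂ) (n : ℕ) : 0 ≤ fredholmTermAbs μ K n :=
  integral_nonneg fun _ => norm_nonneg _

lemma fredholmTermAbs_le {X : Type*} [MeasurableSpace X] (μ : Measure X) [SigmaFinite μ]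
    (K : X × X → ℂ) (hKm : Measurable K) (Kbd : X → ℝ) (hKbd : Integrable Kbd μ)
    (hKbd0 : ∀ x, 0 ≤ Kbd x) (hbdK : ∀ x y, ‖K (x, y)‖ ≤ Kbd x) (n : ℕ) :
    fredholmTermAbs μ K n ≤ Real.sqrt n ^ n * (∫ x, Kbd x ∂μ) ^ n :=
  integral_norm_det_le μ (fun _ => K) (fun _ => hKm) Kbd hKbd hKbd0 (fun _ => hbdK)

end FredholmAux

set_option maxHeartbeats 1000000 in
/-- Lemma on closeness of Fredholm determinants of two kernels dominated by an
integrable function, in terms of the perturbation `K' = K₁ − K`. -/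
theorem stmt_19 {X : Type*} [MeasurableSpace X] (μ : Measure X) [SigmaFinite μ]
    (K K₁ : X × X → ℂ) (hKm : Measurable K) (hK₁m : Measurable K₁)
    (Kbd : X → ℝ) (hKbd : Integrable Kbd μ)
    (hbdK : ∀ x y : X, ‖K (x, y)‖ ≤ Kbd x) (hbdK₁ : ∀ x y : X, ‖K₁ (x, y)‖ ≤ Kbd x)
    (B : ℝ) (hB : B = ∫ x, Kbd x ∂μ)
    (K' : X × X → ℂ) (hK' : K' = K₁ - K) :
    (Summable (fun k : ℕ => (((k + 1).factorial : ℝ))⁻¹ * fredholmTermAbs μ K (k + 1)) ∧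
     Summable (fun k : ℕ => (((k + 1).factorial : ℝ))⁻¹ * fredholmTermAbs μ K₁ (k + 1)) ∧
     (∑' k : ℕ, (((k + 1).factorial : ℝ))⁻¹ * fredholmTermAbs μ K (k + 1))
        ≤ ∑' k : ℕ, B ^ (k + 1) * (((k : ℝ) + 1) ^ (((k : ℝ) + 1) / 2))
            / ((k + 1).factorial : ℝ) ∧
     (∑' k : ℕ, (((k + 1).factorial : ℝ))⁻¹ * fredholmTermAbs μ K₁ (k + 1))
        ≤ ∑' k : ℕ, B ^ (k + 1) * (((k : ℝ) + 1) ^ (((k : ℝ) + 1) / 2))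
            / ((k + 1).factorial : ℝ)) ∧
    ‖(∑' k : ℕ, (((k + 1).factorial : ℂ))⁻¹ * fredholmTerm μ K₁ (k + 1))
        - ∑' k : ℕ, (((k + 1).factorial : ℂ))⁻¹ * fredholmTerm μ K (k + 1)‖
      ≤ ∑' k : ℕ,
          (2 ^ (k + 1) * (((k : ℝ) + 1) ^ (((k : ℝ) + 1) / 2)) / (k.factorial : ℝ)) *
            ∫ x : Fin (k + 1) → X,
              Real.sqrt ((((k : ℝ) + 1))⁻¹ * ∑ j : Fin (k + 1), ‖K' (x 0, x j)‖ ^ 2) *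
              ∏ i ∈ Finset.univ.erase (0 : Fin (k + 1)),
                Real.sqrt ((((k : ℝ) + 1))⁻¹ *
                  ∑ j : Fin (k + 1), (‖K (x i, x j)‖ ^ 2 + ‖K' (x i, x j)‖ ^ 2))
              ∂(Measure.pi fun _ => μ) := by
  rcases isEmpty_or_nonempty X with hX | hX
  · -- empty case
    have hE : ∀ k : ℕ, IsEmpty (Fin (k + 1) → X) := fun k => ⟨fun f => IsEmpty.false (f 0)⟩
    have habs : ∀ (L : X × X → ℂ) (k : ℕ), fredholmTermAbs μ L (k + 1) = 0 := by
      intro L k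
      haveI := hE k
      rw [fredholmTermAbs]
      exact integral_of_isEmpty
    have hterm : ∀ (L : X × X → ℂ) (k : ℕ), fredholmTerm μ L (k + 1) = 0 := by
      intro L k
      haveI := hE k
      rw [fredholmTerm]
      exact integral_of_isEmpty
    have hBz : B = 0 := by rw [hB]; exact integral_of_isEmpty
    have hI0 : ∀ k : ℕ, (∫ x : Fin (k + 1) → X,
        Real.sqrt ((((k : ℝ) + 1))⁻¹ * ∑ j : Fin (k + 1), ‖K' (x 0, x j)‖ ^ 2) *
        ∏ i ∈ Finset.univ.erase (0 : Fin (k + 1)),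
          Real.sqrt ((((k : ℝ) + 1))⁻¹ *
            ∑ j : Fin (k + 1), (‖K (x i, x j)‖ ^ 2 + ‖K' (x i, x j)‖ ^ 2))
        ∂(Measure.pi fun _ => μ)) = 0 := by
      intro k
      haveI := hE k
      exact integral_of_isEmpty
    refine ⟨⟨?_, ?_, ?_, ?_⟩, ?_⟩
    · simp only [habs, mul_zero]
      exact summable_zero
    · simp only [habs, mul_zero]
      exact summable_zero
    · simp [habs, hBz]
    · simp [habs, hBz]
    · have h0 : ‖(∑' k : ℕ, (((k + 1).factorial : ℂ))⁻¹ * fredholmTerm μ K₁ (k + 1))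
          - ∑' k : ℕ, (((k + 1).factorial : ℂ))⁻¹ * fredholmTerm μ K (k + 1)‖ = 0 := by
        simp [hterm]
      rw [h0]
      refine tsum_nonneg fun k => mul_nonneg (by positivity)
        (integral_nonneg fun x => mul_nonneg (Real.sqrt_nonneg _)
          (Finset.prod_nonneg fun i _ => Real.sqrt_nonneg _))
  · -- nonempty case
    obtain ⟨y0⟩ := hX
    have hKbd0 : ∀ x, 0 ≤ Kbd x := fun x => le_trans (norm_nonneg _) (hbdK x y0)
    have hB0 : 0 ≤ B := by rw [hB]; exact integral_nonneg hKbd0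
    set C : ℝ := B + 1 with hC
    have hC1 : 1 ≤ C := by rw [hC]; linarith
    have hsumC : Summable (fun k : ℕ =>
        C ^ (k + 1) * Real.sqrt ((k+1 : ℕ) : ℝ) ^ (k + 1) / (((k + 1).factorial : ℕ) : ℝ)) :=
      (summable_nat_add_iff 1).2 (summable_aux C hC1)
    have hcast : ∀ k : ℕ, (((k + 1) : ℕ) : ℝ) = (k : ℝ) + 1 := fun k => by push_cast; ring
    have habsK : ∀ (L : X × X → ℂ), Measurable L → (∀ x y, ‖L (x, y)‖ ≤ Kbd x) →
        ∀ k : ℕ, ((k + 1).factorial : ℝ)⁻¹ * fredholmTermAbs μ L (k + 1)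
          ≤ B ^ (k + 1) * (((k : ℝ) + 1) ^ (((k : ℝ) + 1) / 2)) / ((k + 1).factorial : ℝ) := by
      intro L hLm hbdL k
      have h := fredholmTermAbs_le μ L hLm Kbd hKbd hKbd0 hbdL (k + 1)
      rw [← hB] at h
      rw [rpow_half_eq k]
      calc ((k + 1).factorial : ℝ)⁻¹ * fredholmTermAbs μ L (k + 1)
          ≤ ((k + 1).factorial : ℝ)⁻¹ * (Real.sqrt (((k+1 : ℕ)):ℝ) ^ (k + 1) * B ^ (k + 1)) :=
            mul_le_mul_of_nonneg_left h (by positivity)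
        _ = B ^ (k + 1) * Real.sqrt ((k : ℝ) + 1) ^ (k + 1) / ((k + 1).factorial : ℝ) := by
            rw [hcast k, div_eq_mul_inv]; ring
    have hmaj : ∀ k : ℕ,
        B ^ (k + 1) * (((k : ℝ) + 1) ^ (((k : ℝ) + 1) / 2)) / ((k + 1).factorial : ℝ)
          ≤ C ^ (k + 1) * Real.sqrt ((k+1 : ℕ) : ℝ) ^ (k + 1) / (((k + 1).factorial : ℕ) : ℝ) := by
      intro k
      rw [rpow_half_eq k, hcast k]
      have hBC : B ≤ C := by rw [hC]; linarith
      gcongr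
    have hRHSnn : ∀ k : ℕ,
        0 ≤ B ^ (k + 1) * (((k : ℝ) + 1) ^ (((k : ℝ) + 1) / 2)) / ((k + 1).factorial : ℝ) := by
      intro k
      have : (0:ℝ) ≤ ((k : ℝ) + 1) ^ (((k : ℝ) + 1) / 2) := Real.rpow_nonneg (by positivity) _
      positivity
    have hRHSsum : Summable (fun k : ℕ =>
        B ^ (k + 1) * (((k : ℝ) + 1) ^ (((k : ℝ) + 1) / 2)) / ((k + 1).factorial : ℝ)) :=
      Summable.of_nonneg_of_le hRHSnn hmaj hsumC
    have hsum1 : Summable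
        (fun k : ℕ => (((k + 1).factorial : ℝ))⁻¹ * fredholmTermAbs μ K (k + 1)) :=
      Summable.of_nonneg_of_le
        (fun k => mul_nonneg (by positivity) (fredholmTermAbs_nonneg μ K (k + 1)))
        (habsK K hKm hbdK) hRHSsum
    have hsum2 : Summable
        (fun k : ℕ => (((k + 1).factorial : ℝ))⁻¹ * fredholmTermAbs μ K₁ (k + 1)) :=
      Summable.of_nonneg_of_le
        (fun k => mul_nonneg (by positivity) (fredholmTermAbs_nonneg μ K₁ (k + 1)))
        (habsK K₁ hK₁m hbdK₁) hRHSsum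
    refine ⟨⟨hsum1, hsum2, Summable.tsum_le_tsum (habsK K hKm hbdK) hsum1 hRHSsum,
      Summable.tsum_le_tsum (habsK K₁ hK₁m hbdK₁) hsum2 hRHSsum⟩, ?_⟩
    -- part (ii)
    have hK'm : Measurable K' := by rw [hK']; exact hK₁m.sub hKm
    have hbdK' : ∀ x y, ‖K' (x, y)‖ ≤ 2 * Kbd x := by
      intro x y
      rw [hK']
      calc ‖(K₁ - K) (x, y)‖ = ‖K₁ (x, y) - K (x, y)‖ := rfl
        _ ≤ ‖K₁ (x, y)‖ + ‖K (x, y)‖ := norm_sub_le _ _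
        _ ≤ 2 * Kbd x := by have := hbdK x y; have := hbdK₁ x y; linarith
    set I : ℕ → ℝ := fun k => ∫ x : Fin (k + 1) → X,
        Real.sqrt ((((k : ℝ) + 1))⁻¹ * ∑ j : Fin (k + 1), ‖K' (x 0, x j)‖ ^ 2) *
        ∏ i ∈ Finset.univ.erase (0 : Fin (k + 1)),
          Real.sqrt ((((k : ℝ) + 1))⁻¹ *
            ∑ j : Fin (k + 1), (‖K (x i, x j)‖ ^ 2 + ‖K' (x i, x j)‖ ^ 2))
        ∂(Measure.pi fun _ => μ) with hIdef
    have hInn : ∀ k, 0 ≤ I k := fun k => integral_nonneg fun x =>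
      mul_nonneg (Real.sqrt_nonneg _) (Finset.prod_nonneg fun i _ => Real.sqrt_nonneg _)
    have hIle : ∀ k, I k ≤ (2 * B) * (Real.sqrt 5 * B) ^ k := by
      intro k
      have h := (fg_integrable_and_bound μ K K' hKm hK'm Kbd hKbd hKbd0 hbdK hbdK' k).2
      rw [← hB] at h
      exact h
    set c : ℕ → ℝ := fun k =>
      (2 ^ (k + 1) * (((k : ℝ) + 1) ^ (((k : ℝ) + 1) / 2)) / (k.factorial : ℝ)) * I k
      with hcdef
    set a : ℕ → ℂ := fun k => (((k + 1).factorial : ℂ))⁻¹ * fredholmTerm μ K₁ (k + 1) with ha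
    set b : ℕ → ℂ := fun k => (((k + 1).factorial : ℂ))⁻¹ * fredholmTerm μ K (k + 1) with hb
    have hfacC : ∀ k : ℕ, ‖(((k + 1).factorial : ℂ))‖ = (((k + 1).factorial : ℕ) : ℝ) :=
      fun k => by rw [Complex.norm_natCast]
    have hnormterm : ∀ (L : X × X → ℂ), Measurable L → (∀ x y, ‖L (x, y)‖ ≤ Kbd x) →
        ∀ k : ℕ, ‖(((k + 1).factorial : ℂ))⁻¹ * fredholmTerm μ L (k + 1)‖
          ≤ B ^ (k + 1) * (((k : ℝ) + 1) ^ (((k : ℝ) + 1) / 2)) / ((k + 1).factorial : ℝ) := by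
      intro L hLm hbdL k
      rw [norm_mul, norm_inv, hfacC k]
      have h2 : ‖fredholmTerm μ L (k + 1)‖ ≤ fredholmTermAbs μ L (k + 1) := by
        rw [fredholmTerm, fredholmTermAbs]
        exact norm_integral_le_integral_norm _
      refine le_trans ?_ (habsK L hLm hbdL k)
      exact mul_le_mul_of_nonneg_left h2 (by positivity)
    have hsa : Summable a :=
      Summable.of_norm (Summable.of_nonneg_of_le (fun k => norm_nonneg _)
        (hnormterm K₁ hK₁m hbdK₁) hRHSsum)
    have hsb : Summable b :=
      Summable.of_norm (Summable.of_nonneg_of_le (fun k => norm_nonneg _)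
        (hnormterm K hKm hbdK) hRHSsum)
    have hfactS : ∀ k : ℕ, (((k + 1).factorial : ℕ) : ℝ) = ((k : ℝ) + 1) * (k.factorial : ℝ) := by
      intro k
      rw [Nat.factorial_succ]
      push_cast
      ring
    have hsqrt2 : Real.sqrt 2 ≤ 2 := by
      nlinarith [Real.sq_sqrt (by norm_num : (0:ℝ) ≤ 2), Real.sqrt_nonneg 2]
    have hdiffle : ∀ k : ℕ, ‖a k - b k‖ ≤ c k := by
      intro k
      have hkey := key_diff_bound μ K K₁ K' hKm hK₁m hK' Kbd hKbd hKbd0 hbdK hbdK₁ k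
      have hab : a k - b k = (((k + 1).factorial : ℂ))⁻¹ *
          (fredholmTerm μ K₁ (k + 1) - fredholmTerm μ K (k + 1)) := by
        rw [ha, hb]; ring
      rw [hab, norm_mul, norm_inv, hfacC k]
      have step1 : ((((k + 1).factorial : ℕ)) : ℝ)⁻¹ *
          ‖fredholmTerm μ K₁ (k + 1) - fredholmTerm μ K (k + 1)‖
          ≤ ((((k + 1).factorial : ℕ)) : ℝ)⁻¹ *
            (((k:ℝ)+1) * (Real.sqrt 2 ^ k * Real.sqrt ((k:ℝ)+1) ^ (k+1)) * I k) :=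
        mul_le_mul_of_nonneg_left hkey (by positivity)
      refine le_trans step1 ?_
      have hck : c k = (2 ^ (k + 1) * (((k : ℝ) + 1) ^ (((k : ℝ) + 1) / 2))
          / (k.factorial : ℝ)) * I k := rfl
      rw [hck, rpow_half_eq k, hfactS k]
      set D : ℝ := Real.sqrt ((k:ℝ)+1) ^ (k+1) with hD
      have hDnn : 0 ≤ D := by rw [hD]; positivity
      have hfacpos : (0:ℝ) < (k.factorial : ℝ) := by exact_mod_cast k.factorial_pos
      have heq : (((k : ℝ) + 1) * (k.factorial : ℝ))⁻¹ *
          (((k:ℝ)+1) * (Real.sqrt 2 ^ k * D) * I k)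
          = (Real.sqrt 2 ^ k * D / (k.factorial : ℝ)) * I k := by
        field_simp
      rw [heq]
      have h2k : Real.sqrt 2 ^ k ≤ 2 ^ (k + 1) := by
        calc Real.sqrt 2 ^ k ≤ 2 ^ k := pow_le_pow_left₀ (Real.sqrt_nonneg 2) hsqrt2 k
          _ ≤ 2 ^ (k + 1) := pow_le_pow_right₀ (by norm_num) (Nat.le_succ k)
      have hstep : Real.sqrt 2 ^ k * D / (k.factorial : ℝ) ≤ 2 ^ (k+1) * D / (k.factorial : ℝ) :=
        (div_le_div_iff_of_pos_right hfacpos).mpr (mul_le_mul_of_nonneg_right h2k hDnn)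
      exact mul_le_mul_of_nonneg_right hstep (hInn k)
    have hcnn : ∀ k, 0 ≤ c k := by
      intro k
      rw [hcdef]
      have : (0:ℝ) ≤ ((k : ℝ) + 1) ^ (((k : ℝ) + 1) / 2) := Real.rpow_nonneg (by positivity) _
      exact mul_nonneg (by positivity) (hInn k)
    have hcsum : Summable c := by
      set Q : ℝ := Real.sqrt 5 * B + 1 with hQ
      have hsq5 : (0:ℝ) ≤ Real.sqrt 5 * B := by positivity
      have hQ1 : 1 ≤ Q := by rw [hQ]; linarith
      have h4Q : 1 ≤ 4 * Q := by linarith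
      have h5ge1 : (1:ℝ) ≤ Real.sqrt 5 := by
        rw [show (1:ℝ) = Real.sqrt 1 by simp]
        exact Real.sqrt_le_sqrt (by norm_num)
      have hBQ : B ≤ Q := by rw [hQ]; nlinarith
      refine Summable.of_nonneg_of_le hcnn ?_
        (((summable_nat_add_iff 1).2 (summable_aux (4*Q) h4Q)).mul_left 2)
      intro k
      have hIle' : I k ≤ 2 * Q ^ (k + 1) := by
        calc I k ≤ (2 * B) * (Real.sqrt 5 * B) ^ k := hIle k
          _ ≤ (2 * Q) * Q ^ k := by
              have h1 : Real.sqrt 5 * B ≤ Q := by rw [hQ]; linarith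
              exact mul_le_mul (by linarith) (pow_le_pow_left₀ hsq5 h1 k)
                (by positivity) (by linarith)
          _ = 2 * Q ^ (k + 1) := by rw [pow_succ]; ring
      have hk2 : ((k:ℝ) + 1) ≤ 2 ^ (k + 1) := by
        have := Nat.lt_two_pow_self (n := k + 1)
        have h' : ((k + 1 : ℕ) : ℝ) ≤ ((2 ^ (k + 1) : ℕ) : ℝ) := by exact_mod_cast this.le
        push_cast at h'
        linarith
      set D : ℝ := Real.sqrt ((k:ℝ)+1) ^ (k+1) with hD
      have hDnn : 0 ≤ D := by rw [hD]; positivity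
      have hQnn : (0:ℝ) ≤ Q := by linarith
      have hfacpos : (0:ℝ) < (k.factorial : ℝ) := by exact_mod_cast k.factorial_pos
      have hfacpos' : (0:ℝ) < (((k+1).factorial : ℕ) : ℝ) := by
        exact_mod_cast (k+1).factorial_pos
      calc c k = (2 ^ (k + 1) * (((k : ℝ) + 1) ^ (((k : ℝ) + 1) / 2)) / (k.factorial : ℝ)) * I k := rfl
        _ = (2 ^ (k + 1) * D / (k.factorial : ℝ)) * I k := by rw [rpow_half_eq k, hD]
        _ ≤ (2 ^ (k + 1) * D / (k.factorial : ℝ)) * (2 * Q ^ (k + 1)) := by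
            refine mul_le_mul_of_nonneg_left hIle' (by positivity)
        _ ≤ 2 * ((4*Q) ^ (k + 1) * Real.sqrt ((k+1:ℕ) : ℝ) ^ (k + 1) / (((k + 1).factorial : ℕ) : ℝ)) := by
            rw [hcast k, ← hD, hfactS k, div_mul_eq_mul_div]
            rw [show (2:ℝ) * ((4*Q) ^ (k + 1) * D / (((k:ℝ) + 1) * (k.factorial : ℝ)))
              = (2 * ((4*Q) ^ (k + 1) * D)) / (((k:ℝ) + 1) * (k.factorial : ℝ)) by ring]
            rw [div_le_div_iff₀ hfacpos (by positivity)]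
            have h44 : ((k:ℝ)+1) * 2 ^ (k+1) ≤ 4 ^ (k+1) := by
              have h4 : (4:ℝ) ^ (k+1) = 2 ^ (k+1) * 2 ^ (k+1) := by
                rw [← mul_pow]; norm_num
              rw [h4]
              exact mul_le_mul_of_nonneg_right hk2 (by positivity)
            have hQD : (0:ℝ) ≤ Q ^ (k+1) * D * (k.factorial : ℝ) := by positivity
            have hfin := mul_le_mul_of_nonneg_right h44 hQD
            calc 2 ^ (k + 1) * D * (2 * Q ^ (k + 1)) * (((k:ℝ) + 1) * (k.factorial : ℝ))
                = 2 * ((((k:ℝ)+1) * 2 ^ (k+1)) * (Q ^ (k+1) * D * (k.factorial : ℝ))) := by ring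
              _ ≤ 2 * ((4:ℝ) ^ (k+1) * (Q ^ (k+1) * D * (k.factorial : ℝ))) := by linarith
              _ = 2 * ((4*Q) ^ (k + 1) * D) * (k.factorial : ℝ) := by
                  rw [mul_pow]; ring
    have hnormsum : Summable (fun k => ‖a k - b k‖) :=
      Summable.of_nonneg_of_le (fun k => norm_nonneg _) hdiffle hcsum
    have final : ‖(∑' k : ℕ, a k) - ∑' k : ℕ, b k‖ ≤ ∑' k : ℕ, c k := by
      rw [← hsa.tsum_sub hsb]
      calc ‖∑' k : ℕ, (a k - b k)‖ ≤ ∑' k : ℕ, ‖a k - b k‖ := norm_tsum_le_tsum_norm hnormsum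
        _ ≤ ∑' k : ℕ, c k := Summable.tsum_le_tsum hdiffle hnormsum hcsum
    exact final
end
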